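/- arXiv:0811.1336 — 8 statements merged into one kernel-verified Lean document; each statement's English description precedes it below -/
import Mathlib

section
/- Let X be a nonempty set, W = W(X) the free monoid on X, and F = A × W the free right W-act with basis A (action (a,w)·u = (a,wu)). Let P ⊆ F be a subact (a subset closed under the action) and let B_P be its canonical basis, consisting of all elements (a,1) ∈ P together with all elements (a,wx) ∈ P with w ∈ W, x ∈ X such that (a,w) ∉ P. Then every element of P can be written in the form b·u with b ∈ B_P and u ∈ W, and this expression is unique: if b·u = b'·u' with b, b' ∈ B_P and u, u' ∈ W, then b = b' and u = u'. (In particular, P is a free W-act with basis B_P.) -/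
/-- A subset `P` of the free right act `F = A × W(X)` (with action `(a,w)·u = (a, w*u)`)
is a subact if it is closed under the action of the free monoid `W(X)`. -/
def IsSubact {A X : Type*} (P : Set (A × FreeMonoid X)) : Prop :=
  ∀ p ∈ P, ∀ u : FreeMonoid X, (p.1, p.2 * u) ∈ P

/-- The canonical basis of a subact `P` of the free act `A × W(X)`: all `(a,1) ∈ P`
together with all `(a, w*x) ∈ P` (with `w ∈ W(X)`, `x ∈ X`) such that `(a,w) ∉ P`. -/
def canonicalBasis {A X : Type*} (P : Set (A × FreeMonoid X)) : Set (A × FreeMonoid X) :=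
  {p | p ∈ P ∧ (p.2 = 1 ∨
    ∃ (w : FreeMonoid X) (x : X), p.2 = w * FreeMonoid.of x ∧ (p.1, w) ∉ P)}

private lemma exists_basis_aux {A X : Type*} (P : Set (A × FreeMonoid X)) (hP : IsSubact P)
    (l : List X) : ∀ a : A, (a, FreeMonoid.ofList l) ∈ P →
    ∃ b ∈ canonicalBasis P, ∃ u : FreeMonoid X, (a, FreeMonoid.ofList l) = (b.1, b.2 * u) := by
  induction l using List.reverseRecOn with
  | nil =>
    intro a ha
    refine ⟨(a, 1), ⟨ha, Or.inl rfl⟩, 1, ?_⟩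
    simp
  | append_singleton l' x ih =>
    intro a ha
    have hsplit : (FreeMonoid.ofList (l' ++ [x]) : FreeMonoid X)
        = FreeMonoid.ofList l' * FreeMonoid.of x := by
      apply FreeMonoid.toList.injective
      simp
    by_cases hl' : (a, FreeMonoid.ofList l') ∈ P
    · obtain ⟨b, hb, u, hu⟩ := ih a hl'
      refine ⟨b, hb, u * FreeMonoid.of x, ?_⟩
      have h1 : a = b.1 := congrArg Prod.fst hu
      have h2 : FreeMonoid.ofList l' = b.2 * u := congrArg Prod.snd hu
      rw [hsplit, h2, h1, mul_assoc]
    · refine ⟨(a, FreeMonoid.ofList (l' ++ [x])), ⟨ha, Or.inr ⟨FreeMonoid.ofList l', x,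
        hsplit, hl'⟩⟩, 1, ?_⟩
      simp

/-- Every element of a subact `P` of a free act over a free monoid is uniquely of the
form `b · u` with `b ∈ B_P` and `u ∈ W(X)`; i.e. `P` is free with basis `B_P`. -/
theorem subact_free {A X : Type*} [Nonempty X]
    (P : Set (A × FreeMonoid X)) (hP : IsSubact P) :
    (∀ p ∈ P, ∃ b ∈ canonicalBasis P, ∃ u : FreeMonoid X, p = (b.1, b.2 * u)) ∧
    (∀ b ∈ canonicalBasis P, ∀ b' ∈ canonicalBasis P, ∀ u u' : FreeMonoid X,
      (b.1, b.2 * u) = (b'.1, b'.2 * u') → b = b' ∧ u = u') := by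
  constructor
  · intro p hp
    have := exists_basis_aux P hP (FreeMonoid.toList p.2) p.1 (by
      rw [FreeMonoid.ofList_toList]; exact hp)
    rw [FreeMonoid.ofList_toList] at this
    simpa using this
  · -- uniqueness
    -- key claim: basis elements with same first coordinate can't have one word
    -- a strict prefix of the other
    have key : ∀ b ∈ canonicalBasis P, ∀ b' ∈ canonicalBasis P,
        b.1 = b'.1 → (FreeMonoid.toList b.2) <+: (FreeMonoid.toList b'.2) →
        (FreeMonoid.toList b.2).length < (FreeMonoid.toList b'.2).length → False := by
      intro b hb b' hb' hfst hpre hlt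
      rcases hb'.2 with h1 | ⟨w, x, hwx, hnotin⟩
      · rw [h1] at hlt; simp at hlt
      · rw [hwx] at hpre hlt
        simp only [FreeMonoid.toList_mul, FreeMonoid.toList_of] at hpre hlt
        have hlen : (FreeMonoid.toList b.2).length ≤ (FreeMonoid.toList w).length := by
          simp at hlt; omega
        have hprew : (FreeMonoid.toList b.2) <+: (FreeMonoid.toList w) :=
          List.prefix_of_prefix_length_le hpre ⟨[x], rfl⟩ hlen
        obtain ⟨s, hs⟩ := hprew
        have hw : w = b.2 * FreeMonoid.ofList s := by
          apply FreeMonoid.toList.injective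
          simp [← hs]
        apply hnotin
        rw [hw, ← hfst]
        exact hP b hb.1 _
    intro b hb b' hb' u u' heq
    have hfst : b.1 = b'.1 := (Prod.ext_iff.mp heq).1
    have hsnd : b.2 * u = b'.2 * u' := (Prod.ext_iff.mp heq).2
    have hlist : FreeMonoid.toList b.2 ++ FreeMonoid.toList u
        = FreeMonoid.toList b'.2 ++ FreeMonoid.toList u' := by
      simpa [FreeMonoid.toList_mul] using congrArg FreeMonoid.toList hsnd
    have hleneq : (FreeMonoid.toList b.2).length = (FreeMonoid.toList b'.2).length := by
      by_contra hne
      rcases Nat.lt_or_ge (FreeMonoid.toList b.2).length (FreeMonoid.toList b'.2).length with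
        h | h
      · exact key b hb b' hb' hfst
          (List.prefix_of_prefix_length_le ⟨_, hlist⟩ ⟨_, rfl⟩ h.le) h
      · have h' : (FreeMonoid.toList b'.2).length < (FreeMonoid.toList b.2).length :=
          lt_of_le_of_ne h (fun hx => hne hx.symm)
        exact key b' hb' b hb hfst.symm
          (List.prefix_of_prefix_length_le ⟨_, hlist.symm⟩ ⟨_, rfl⟩ h'.le) h'
    have hb2 : b.2 = b'.2 := by
      apply FreeMonoid.toList.injective
      exact List.IsPrefix.eq_of_length
        (List.prefix_of_prefix_length_le ⟨_, hlist⟩ ⟨_, rfl⟩ hleneq.le) hleneq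
    have hu : u = u' := by
      apply FreeMonoid.toList.injective
      have := hlist
      rw [hb2] at this
      exact List.append_cancel_left this
    exact ⟨Prod.ext hfst hb2, hu⟩
end

section
/- Let X be a nonempty set, W = W(X) the free monoid on X, F = A × W the free right W-act with basis A, P ⊆ F a subact, and B_P its canonical basis. Suppose degree functions deg_X : X → ℕ with deg_X(x) ≥ 1 for all x ∈ X, and deg_A : A → ℕ are given; extend the degree to W by deg(x_{i_1}⋯x_{i_k}) = deg_X(x_{i_1}) + ⋯ + deg_X(x_{i_k}) (with deg(1)=0) and to F by deg(a,w) = deg_A(a) + deg(w). Assume that for every n ∈ ℕ the sets of elements of degree n in A, in X, and in F ∖ P are finite, with cardinalities c_n(A), c_n(X), c_n(F∖P). Then for every n ∈ ℕ the set of elements of degree n in B_P is finite, and its cardinality satisfies c_n(B_P) = c_n(A) + Σ_{i=0}^{n−1} c_i(F∖P)·c_{n−i}(X) − c_n(F∖P). (Equivalently, in terms of Hilbert series, H(B_P,t) = H(A,t) + H(F∖P,t)(H(X,t) − 1).) -/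
/-- The additive extension of a degree function `degX : X → ℕ` to the free monoid `W(X)`. -/
def monoidDeg {X : Type*} (degX : X → ℕ) (w : FreeMonoid X) : ℕ :=
  ((FreeMonoid.toList w).map degX).sum

/-- The degree of an element `(a,w)` of the free act `A × W(X)`:
`deg (a,w) = deg_A a + deg w`. -/
def actDeg {A X : Type*} (degA : A → ℕ) (degX : X → ℕ) (p : A × FreeMonoid X) : ℕ :=
  degA p.1 + monoidDeg degX p.2

lemma monoidDeg_one {X : Type*} (degX : X → ℕ) : monoidDeg degX 1 = 0 := rfl

lemma monoidDeg_mul_of {X : Type*} (degX : X → ℕ) (v : FreeMonoid X) (x : X) :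
    monoidDeg degX (v * FreeMonoid.of x) = monoidDeg degX v + degX x := by
  simp [monoidDeg, FreeMonoid.toList_mul, FreeMonoid.toList_of]

lemma exists_concat {X : Type*} (w : FreeMonoid X) (h : w ≠ 1) :
    ∃ (v : FreeMonoid X) (x : X), w = v * FreeMonoid.of x := by
  have hl : FreeMonoid.toList w ≠ [] := fun h' => h (FreeMonoid.toList.injective h')
  refine ⟨FreeMonoid.ofList (FreeMonoid.toList w).dropLast, (FreeMonoid.toList w).getLast hl, ?_⟩
  apply FreeMonoid.toList.injective
  show FreeMonoid.toList w = FreeMonoid.toList (_ * _)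
  rw [FreeMonoid.toList_mul, FreeMonoid.toList_of, FreeMonoid.toList_ofList]
  exact (List.dropLast_append_getLast hl).symm

lemma mul_of_inj {X : Type*} {v v' : FreeMonoid X} {x x' : X}
    (h : v * FreeMonoid.of x = v' * FreeMonoid.of x') : v = v' ∧ x = x' := by
  have h2 := congrArg FreeMonoid.toList h
  rw [FreeMonoid.toList_mul, FreeMonoid.toList_mul, FreeMonoid.toList_of,
    FreeMonoid.toList_of] at h2
  obtain ⟨h3, h4⟩ := List.append_inj' h2 rfl
  exact ⟨FreeMonoid.toList.injective h3, List.singleton_injective h4⟩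

lemma mul_of_ne_one {X : Type*} (v : FreeMonoid X) (x : X) : v * FreeMonoid.of x ≠ 1 := by
  intro h
  have h2 := congrArg FreeMonoid.toList h
  rw [FreeMonoid.toList_mul, FreeMonoid.toList_of] at h2
  simpa using congrArg List.length h2

lemma ncard_prod' {α β : Type*} (s : Set α) (t : Set β) (hs : s.Finite) (ht : t.Finite) :
    (s ×ˢ t).ncard = s.ncard * t.ncard := by
  rw [Set.ncard_eq_toFinset_card _ (hs.prod ht), ← Set.Finite.toFinset_prod,
    Finset.card_product, ← Set.ncard_eq_toFinset_card _ hs, ← Set.ncard_eq_toFinset_card _ ht]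
  · exact hs
  · exact ht

lemma ncard_biUnion_range {α : Type*} (m : ℕ) (f : ℕ → Set α) (hf : ∀ i, (f i).Finite)
    (hd : ∀ i j, i ≠ j → Disjoint (f i) (f j)) :
    (⋃ i ∈ Finset.range m, f i).ncard = ∑ i ∈ Finset.range m, (f i).ncard := by
  induction m with
  | zero => simp
  | succ m ih =>
    have hU : (⋃ i ∈ Finset.range (m + 1), f i) = (⋃ i ∈ Finset.range m, f i) ∪ f m := by
      rw [Finset.range_add_one]
      simp [Set.biUnion_insert, Set.union_comm]
    have hfin : (⋃ i ∈ Finset.range m, f i).Finite :=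
      Set.Finite.biUnion (Finset.range m).finite_toSet (fun i _ => hf i)
    have hdisj : Disjoint (⋃ i ∈ Finset.range m, f i) (f m) := by
      rw [Set.disjoint_left]
      intro a ha ha'
      simp only [Set.mem_iUnion] at ha
      obtain ⟨i, hi, hai⟩ := ha
      exact (hd i m (by simp at hi; omega)).le_bot ⟨hai, ha'⟩
    rw [hU, Set.ncard_union_eq hdisj hfin (hf m), ih, Finset.sum_range_succ]


/-- Schreier formula for the Hilbert series of the canonical basis of a subact of a free
act over a free monoid:
`c_n(B_P) = c_n(A) + Σ_{i=0}^{n-1} c_i(F∖P) c_{n-i}(X) − c_n(F∖P)`, i.e.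
`H(B_P,t) = H(A,t) + H(F∖P,t)(H(X,t) − 1)`. -/
theorem hilbert_series_subact {A X : Type*} [Nonempty X]
    (degX : X → ℕ) (degA : A → ℕ) (hdegX : ∀ x, 1 ≤ degX x)
    (P : Set (A × FreeMonoid X)) (hP : IsSubact P)
    (hA : ∀ n : ℕ, {a : A | degA a = n}.Finite)
    (hX : ∀ n : ℕ, {x : X | degX x = n}.Finite)
    (hFP : ∀ n : ℕ, {p : A × FreeMonoid X | p ∉ P ∧ actDeg degA degX p = n}.Finite) :
    ∀ n : ℕ,
      {b | b ∈ canonicalBasis P ∧ actDeg degA degX b = n}.Finite ∧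
      ({b | b ∈ canonicalBasis P ∧ actDeg degA degX b = n}.ncard : ℤ) =
        ({a : A | degA a = n}.ncard : ℤ)
        + ∑ i ∈ Finset.range n,
            ({p : A × FreeMonoid X | p ∉ P ∧ actDeg degA degX p = i}.ncard : ℤ)
              * ({x : X | degX x = n - i}.ncard : ℤ)
        - ({p : A × FreeMonoid X | p ∉ P ∧ actDeg degA degX p = n}.ncard : ℤ) := by
  intro n
  set d : A × FreeMonoid X → ℕ := actDeg degA degX with hd
  set B : Set (A × FreeMonoid X) := {b | b ∈ canonicalBasis P ∧ d b = n} with hB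
  set Q : ℕ → Set (A × FreeMonoid X) := fun i => {p | p ∉ P ∧ d p = i} with hQ
  set T : Set (A × FreeMonoid X) :=
    {p | d p = n ∧ (p.2 = 1 ∨
      ∃ (w : FreeMonoid X) (x : X), p.2 = w * FreeMonoid.of x ∧ (p.1, w) ∉ P)} with hT
  set φ : (A × FreeMonoid X) × X → A × FreeMonoid X :=
    fun q => (q.1.1, q.1.2 * FreeMonoid.of q.2) with hφ
  set S : Set ((A × FreeMonoid X) × X) :=
    ⋃ i ∈ Finset.range n, (Q i ×ˢ {x : X | degX x = n - i}) with hS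
  -- T = B ∪ Q n, disjointly
  have hTBQ : T = B ∪ Q n := by
    ext p
    simp only [hT, hB, hQ, Set.mem_setOf_eq, Set.mem_union, canonicalBasis]
    constructor
    · rintro ⟨hdp, hcond⟩
      by_cases hp : p ∈ P
      · exact Or.inl ⟨⟨hp, hcond⟩, hdp⟩
      · exact Or.inr ⟨hp, hdp⟩
    · rintro (⟨⟨hp, hcond⟩, hdp⟩ | ⟨hp, hdp⟩)
      · exact ⟨hdp, hcond⟩
      · refine ⟨hdp, ?_⟩
        by_cases h1 : p.2 = 1
        · exact Or.inl h1
        · obtain ⟨v, x, hvx⟩ := exists_concat p.2 h1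
          refine Or.inr ⟨v, x, hvx, fun hv => hp ?_⟩
          have := hP (p.1, v) hv (FreeMonoid.of x)
          rw [← hvx] at this
          exact this
  have hBQdisj : Disjoint B (Q n) := by
    rw [Set.disjoint_left]
    rintro p ⟨⟨hp, -⟩, -⟩ ⟨hnp, -⟩
    exact hnp hp
  -- T ∩ {word = 1} is the image of {a | degA a = n}
  have hT1 : T ∩ {p | p.2 = 1} = (fun a => (a, (1 : FreeMonoid X))) '' {a | degA a = n} := by
    ext p
    simp only [hT, Set.mem_inter_iff, Set.mem_setOf_eq, Set.mem_image]
    constructor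
    · rintro ⟨⟨hdp, -⟩, h1⟩
      refine ⟨p.1, ?_, ?_⟩
      · rw [hd, actDeg, h1, monoidDeg_one] at hdp; simpa using hdp
      · exact Prod.ext rfl h1.symm
    · rintro ⟨a, ha, rfl⟩
      exact ⟨⟨by simp [hd, actDeg, monoidDeg_one, ha], Or.inl rfl⟩, rfl⟩
  -- T ∩ {word ≠ 1} is the image of S
  have hT2 : T ∩ {p | p.2 ≠ 1} = φ '' S := by
    ext p
    constructor
    · rintro ⟨hpT, h1⟩
      obtain ⟨hdp, hcond⟩ := hpT
      rcases hcond with h | ⟨w, x, hwx, hw⟩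
      · exact absurd h h1
      · have hdw : d (p.1, w) + degX x = n := by
          rw [← hdp, hd, actDeg, actDeg, hwx, monoidDeg_mul_of]; ring
        have hx1 := hdegX x
        refine ⟨((p.1, w), x), ?_, Prod.ext rfl hwx.symm⟩
        rw [hS]
        have hmem : ((p.1, w), x) ∈ Q (d (p.1, w)) ×ˢ {y : X | degX y = n - d (p.1, w)} :=
          Set.mem_prod.mpr ⟨⟨hw, rfl⟩, show degX x = n - d (p.1, w) by omega⟩
        exact Set.mem_biUnion (Finset.mem_range.mpr (by omega)) hmem
    · rintro ⟨⟨⟨a, w⟩, x⟩, hqS, rfl⟩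
      rw [hS] at hqS
      simp only [Set.mem_iUnion, Finset.mem_range] at hqS
      obtain ⟨i, hin, hq⟩ := hqS
      rw [Set.mem_prod] at hq
      obtain ⟨⟨hnp, hdi⟩, hxi⟩ := hq
      simp only [hQ, Set.mem_setOf_eq] at hnp hdi hxi ⊢
      refine Set.mem_inter ⟨?_, Or.inr ⟨w, x, rfl, hnp⟩⟩ (mul_of_ne_one w x)
      simp only [hd, hφ, actDeg, monoidDeg_mul_of] at hdi ⊢
      omega
  -- φ is injective
  have hφinj : Function.Injective φ := by
    rintro ⟨⟨a, w⟩, x⟩ ⟨⟨a', w'⟩, x'⟩ h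
    simp only [hφ, Prod.mk.injEq] at h
    obtain ⟨h1, h2⟩ := h
    obtain ⟨h3, h4⟩ := mul_of_inj h2
    simp [h1, h3, h4]
  -- finiteness
  have hSfin : S.Finite :=
    Set.Finite.biUnion (Finset.range n).finite_toSet
      (fun i _ => (hFP i).prod (hX (n - i)))
  have hT1fin : (T ∩ {p | p.2 = 1}).Finite := by rw [hT1]; exact (hA n).image _
  have hT2fin : (T ∩ {p | p.2 ≠ 1}).Finite := by rw [hT2]; exact hSfin.image _
  have hTsplit : T = (T ∩ {p | p.2 = 1}) ∪ (T ∩ {p | p.2 ≠ 1}) := by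
    rw [← Set.inter_union_distrib_left]
    simp [Set.union_def, Set.eq_univ_iff_forall, em]
  have hTfin : T.Finite := by rw [hTsplit]; exact hT1fin.union hT2fin
  have hBfin : B.Finite := hTfin.subset (by rw [hTBQ]; exact Set.subset_union_left)
  refine ⟨hBfin, ?_⟩
  -- cardinality computations
  have hcard1 : T.ncard = B.ncard + (Q n).ncard := by
    rw [hTBQ]; exact Set.ncard_union_eq hBQdisj hBfin (hFP n)
  have hsplitdisj : Disjoint (T ∩ {p | p.2 = 1}) (T ∩ {p | p.2 ≠ 1}) := by
    rw [Set.disjoint_left]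
    rintro p ⟨-, h1⟩ ⟨-, h2⟩
    exact h2 h1
  have hcardS : S.ncard = ∑ i ∈ Finset.range n, (Q i).ncard * {x : X | degX x = n - i}.ncard := by
    rw [hS, ncard_biUnion_range n _ (fun i => (hFP i).prod (hX (n - i)))]
    · exact Finset.sum_congr rfl fun i _ => ncard_prod' _ _ (hFP i) (hX (n - i))
    · intro i j hij
      rw [Set.disjoint_left]
      rintro ⟨p, x⟩ ⟨⟨-, hdi⟩, -⟩ ⟨⟨-, hdj⟩, -⟩
      exact hij (hdi ▸ hdj ▸ rfl)
  have hcard2 : T.ncard =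
      {a : A | degA a = n}.ncard
        + ∑ i ∈ Finset.range n, (Q i).ncard * {x : X | degX x = n - i}.ncard := by
    rw [hTsplit, Set.ncard_union_eq hsplitdisj hT1fin hT2fin, hT1, hT2,
      Set.ncard_image_of_injective _ hφinj,
      Set.ncard_image_of_injective _ (fun a a' h => (Prod.ext_iff.mp h).1), hcardS]
  have key : B.ncard + (Q n).ncard =
      {a : A | degA a = n}.ncard
        + ∑ i ∈ Finset.range n, (Q i).ncard * {x : X | degX x = n - i}.ncard := by
    rw [← hcard1, hcard2]
  have keyZ := congrArg (fun m : ℕ => (m : ℤ)) key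
  push_cast at keyZ
  simp only [hQ] at keyZ ⊢
  linarith [keyZ]
end

section
/- Let X be a finite nonempty set, W = W(X) the free monoid on X, and F = A × W the free right W-act with finite nonempty basis A. Let P ⊆ F be a subact such that the complement F ∖ P is finite, and let B_P be the canonical basis of P. Then B_P is finite and |B_P| = |A| + |F ∖ P|·(|X| − 1); that is, rk P = rk F + |F ∖ P|·(rk W − 1). -/
/-- Schreier formula for subacts of free acts over free monoids:
if `F ∖ P` is finite then `rk P = rk F + |F ∖ P| (rk W − 1)`. -/
theorem rank_subact {A X : Type*} [Finite X] [Nonempty X] [Finite A] [Nonempty A]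
    (P : Set (A × FreeMonoid X)) (hP : IsSubact P) (hco : (Pᶜ : Set (A × FreeMonoid X)).Finite) :
    (canonicalBasis P).Finite ∧
      (canonicalBasis P).ncard = Nat.card A + (Pᶜ : Set (A × FreeMonoid X)).ncard * (Nat.card X - 1) := by
  classical
  set S1 : Set (A × FreeMonoid X) := (fun a => (a, (1 : FreeMonoid X))) '' Set.univ with hS1
  set g : (A × FreeMonoid X) × X → A × FreeMonoid X :=
    fun q => (q.1.1, q.1.2 * FreeMonoid.of q.2) with hg
  set S2 : Set (A × FreeMonoid X) := g '' (Pᶜ ×ˢ Set.univ) with hS2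
  have hginj : Function.Injective g := by
    rintro ⟨⟨a, w⟩, x⟩ ⟨⟨a', w'⟩, x'⟩ h
    simp only [hg, Prod.mk.injEq] at h
    obtain ⟨ha, hw⟩ := h
    have hl : FreeMonoid.toList w ++ [x] = FreeMonoid.toList w' ++ [x'] := by
      have := congrArg FreeMonoid.toList hw
      simpa [FreeMonoid.toList_mul, FreeMonoid.toList_of] using this
    obtain ⟨h1, h2⟩ := List.append_inj' hl rfl
    have hww : w = w' := FreeMonoid.toList.injective h1
    simp_all
  -- children are never the identity
  have hne1 : ∀ (w : FreeMonoid X) (x : X), w * FreeMonoid.of x ≠ 1 := by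
    intro w x h
    have := congrArg FreeMonoid.toList h
    simp [FreeMonoid.toList_mul, FreeMonoid.toList_of, FreeMonoid.toList_one] at this
  have hS1S2 : Disjoint S1 S2 := by
    rw [Set.disjoint_left]
    rintro p ⟨a, -, rfl⟩ ⟨⟨⟨a', w⟩, x⟩, -, h⟩
    simp only [hg, Prod.mk.injEq] at h
    exact hne1 w x h.2
  -- S = S1 ∪ S2 = canonicalBasis P ∪ Pᶜ
  have hSeq : S1 ∪ S2 = canonicalBasis P ∪ Pᶜ := by
    ext ⟨a, w⟩
    constructor
    · rintro (⟨a', -, h⟩ | ⟨⟨⟨a', w'⟩, x⟩, hmem, h⟩)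
      · obtain ⟨rfl, rfl⟩ : a' = a ∧ (1:FreeMonoid X) = w := by
          simpa [Prod.ext_iff] using h
        by_cases hp : (a', (1:FreeMonoid X)) ∈ P
        · exact Or.inl ⟨hp, Or.inl rfl⟩
        · exact Or.inr hp
      · simp only [hg, Prod.mk.injEq] at h
        obtain ⟨rfl, rfl⟩ := h
        by_cases hp : (a', w' * FreeMonoid.of x) ∈ P
        · exact Or.inl ⟨hp, Or.inr ⟨w', x, rfl, by simpa using hmem.1⟩⟩
        · exact Or.inr hp
    · rintro (⟨hp, h1 | ⟨w', x, hwx, hnp⟩⟩ | hc)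
      · exact Or.inl ⟨a, Set.mem_univ a, by rw [show w = 1 from h1]⟩
      · refine Or.inr ⟨⟨⟨a, w'⟩, x⟩, by simpa using hnp, ?_⟩
        have hwx' : w = w' * FreeMonoid.of x := hwx
        subst hwx'; rfl
      · rcases eq_or_ne w 1 with rfl | hw1
        · exact Or.inl ⟨a, Set.mem_univ a, rfl⟩
        · have hl : FreeMonoid.toList w ≠ [] := fun h => hw1 (FreeMonoid.toList.injective h)
          set w' : FreeMonoid X := FreeMonoid.ofList (FreeMonoid.toList w).dropLast with hw'
          set x : X := (FreeMonoid.toList w).getLast hl with hx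
          have hdec : w = w' * FreeMonoid.of x := by
            apply FreeMonoid.toList.injective
            simp only [FreeMonoid.toList_mul, FreeMonoid.toList_of, hw', hx]
            exact (List.dropLast_append_getLast hl).symm
          have hnp : (a, w') ∉ P := fun hp => hc (by
            have := hP (a, w') hp (FreeMonoid.of x)
            simpa [← hdec] using this)
          exact Or.inr ⟨⟨⟨a, w'⟩, x⟩, by simpa using hnp, by simp [hg, ← hdec]⟩
  have hS2fin : S2.Finite := (hco.prod (Set.finite_univ)).image g
  have hS1fin : S1.Finite := Set.finite_univ.image _
  have hSfin : (S1 ∪ S2).Finite := hS1fin.union hS2fin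
  have hBfin : (canonicalBasis P).Finite :=
    Set.Finite.subset (hSeq ▸ hSfin) Set.subset_union_left
  have hdisj : Disjoint (canonicalBasis P) Pᶜ := by
    rw [Set.disjoint_left]; intro p hp hpc; exact hpc hp.1
  -- cardinalities
  have hcard1 : S1.ncard = Nat.card A := by
    rw [hS1, Set.ncard_image_of_injective _ (fun a b h => (Prod.ext_iff.mp h).1),
      Set.ncard_univ]
  have hcard2 : S2.ncard = (Pᶜ : Set (A × FreeMonoid X)).ncard * Nat.card X := by
    rw [hS2, Set.ncard_image_of_injective _ hginj]
    rw [← Nat.card_coe_set_eq, ← Nat.card_coe_set_eq,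
      Nat.card_congr (Equiv.Set.prod _ _), Nat.card_prod,
      Nat.card_congr (Equiv.Set.univ _)]
  have hsum : (S1 ∪ S2).ncard = Nat.card A + (Pᶜ : Set (A × FreeMonoid X)).ncard * Nat.card X := by
    rw [Set.ncard_union_eq hS1S2 hS1fin hS2fin, hcard1, hcard2]
  have hsum' : (canonicalBasis P).ncard + (Pᶜ : Set (A × FreeMonoid X)).ncard
      = Nat.card A + (Pᶜ : Set (A × FreeMonoid X)).ncard * Nat.card X := by
    rw [← Set.ncard_union_eq hdisj hBfin hco, ← hSeq, hsum]
  refine ⟨hBfin, ?_⟩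
  have hX1 : 1 ≤ Nat.card X := Nat.one_le_iff_ne_zero.mpr (Nat.card_ne_zero.mpr ⟨‹_›, ‹_›⟩)
  have hle : (Pᶜ : Set (A × FreeMonoid X)).ncard ≤ (Pᶜ : Set (A × FreeMonoid X)).ncard * Nat.card X :=
    Nat.le_mul_of_pos_right _ hX1
  have : (Pᶜ : Set (A × FreeMonoid X)).ncard * (Nat.card X - 1)
      = (Pᶜ : Set (A × FreeMonoid X)).ncard * Nat.card X - (Pᶜ : Set (A × FreeMonoid X)).ncard := by
    rw [Nat.mul_sub, Nat.mul_one]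
  omega
end

section
/- Let X be a nonempty set, W = W(X) the free monoid on X, and F = A × W the free right W-act with basis A. Let P and Q be subacts of F whose canonical bases B_P and B_Q are finite (i.e. P and Q have finite rank). Then P ∪ Q and P ∩ Q are subacts whose canonical bases B_{P∪Q} and B_{P∩Q} are also finite, and |B_P| + |B_Q| = |B_{P∪Q}| + |B_{P∩Q}|; that is, rk P + rk Q = rk(P ∪ Q) + rk(P ∩ Q). -/
/-- Every element of the free monoid is `1` or ends with a letter. -/
lemma freeMonoid_eq_one_or_concat {X : Type*} (m : FreeMonoid X) :
    m = 1 ∨ ∃ (w : FreeMonoid X) (x : X), m = w * FreeMonoid.of x := by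
  rcases List.eq_nil_or_concat (FreeMonoid.toList m) with h | ⟨w, x, h⟩
  · left
    exact FreeMonoid.toList.injective (by simpa using h)
  · right
    exact ⟨FreeMonoid.ofList w, x, FreeMonoid.toList.injective (by simpa using h)⟩

/-- Cancellation of the last letter. -/
lemma freeMonoid_concat_inj {X : Type*} {w w' : FreeMonoid X} {x x' : X}
    (h : w * FreeMonoid.of x = w' * FreeMonoid.of x') : w = w' := by
  have h' : FreeMonoid.toList w ++ [x] = FreeMonoid.toList w' ++ [x'] := by
    simpa using congrArg FreeMonoid.toList h
  exact FreeMonoid.toList.injective (List.append_inj' h' rfl).1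

lemma freeMonoid_concat_ne_one {X : Type*} {w : FreeMonoid X} {x : X} :
    w * FreeMonoid.of x ≠ 1 := by
  intro h
  have := congrArg FreeMonoid.toList h
  simp at this

lemma mem_basis_one {A X : Type*} {R : Set (A × FreeMonoid X)} {a : A} :
    (a, (1 : FreeMonoid X)) ∈ canonicalBasis R ↔ (a, (1 : FreeMonoid X)) ∈ R := by
  constructor
  · exact fun h => h.1
  · exact fun h => ⟨h, Or.inl rfl⟩

lemma mem_basis_concat {A X : Type*} {R : Set (A × FreeMonoid X)} {a : A}
    {w : FreeMonoid X} {x : X} :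
    (a, w * FreeMonoid.of x) ∈ canonicalBasis R ↔
      (a, w * FreeMonoid.of x) ∈ R ∧ (a, w) ∉ R := by
  constructor
  · rintro ⟨hm, h1 | ⟨w', x', he, hn⟩⟩
    · exact absurd h1 freeMonoid_concat_ne_one
    · exact ⟨hm, by rwa [freeMonoid_concat_inj he]⟩
  · rintro ⟨hm, hn⟩
    exact ⟨hm, Or.inr ⟨w, x, rfl, hn⟩⟩

/-- Grassmann-type formula for subacts of finite rank of a free act over a free monoid:
`rk P + rk Q = rk (P ∪ Q) + rk (P ∩ Q)`, all ranks being finite. -/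
theorem rank_union_inter_subacts {A X : Type*} [Nonempty X]
    (P Q : Set (A × FreeMonoid X)) (hP : IsSubact P) (hQ : IsSubact Q)
    (hBP : (canonicalBasis P).Finite) (hBQ : (canonicalBasis Q).Finite) :
    IsSubact (P ∪ Q) ∧ IsSubact (P ∩ Q) ∧
    (canonicalBasis (P ∪ Q)).Finite ∧ (canonicalBasis (P ∩ Q)).Finite ∧
    (canonicalBasis P).ncard + (canonicalBasis Q).ncard =
      (canonicalBasis (P ∪ Q)).ncard + (canonicalBasis (P ∩ Q)).ncard := by
  have hPQu : IsSubact (P ∪ Q) := by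
    rintro p (hp | hp) u
    · exact Or.inl (hP p hp u)
    · exact Or.inr (hQ p hp u)
  have hPQi : IsSubact (P ∩ Q) := by
    rintro p ⟨hp1, hp2⟩ u
    exact ⟨hP p hp1 u, hQ p hp2 u⟩
  -- key set equalities
  have hUnion : canonicalBasis (P ∪ Q) ∪ canonicalBasis (P ∩ Q)
      = canonicalBasis P ∪ canonicalBasis Q := by
    ext ⟨a, m⟩
    rcases freeMonoid_eq_one_or_concat m with rfl | ⟨w, x, rfl⟩
    · simp only [Set.mem_union, mem_basis_one, Set.mem_inter_iff]
      tauto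
    · have h1 : (a, w) ∈ P → (a, w * FreeMonoid.of x) ∈ P := fun h => hP (a, w) h (FreeMonoid.of x)
      have h2 : (a, w) ∈ Q → (a, w * FreeMonoid.of x) ∈ Q := fun h => hQ (a, w) h (FreeMonoid.of x)
      simp only [Set.mem_union, mem_basis_concat, Set.mem_inter_iff]
      tauto
  have hInter : canonicalBasis (P ∪ Q) ∩ canonicalBasis (P ∩ Q)
      = canonicalBasis P ∩ canonicalBasis Q := by
    ext ⟨a, m⟩
    rcases freeMonoid_eq_one_or_concat m with rfl | ⟨w, x, rfl⟩
    · simp only [Set.mem_union, mem_basis_one, Set.mem_inter_iff]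
      tauto
    · have h1 : (a, w) ∈ P → (a, w * FreeMonoid.of x) ∈ P := fun h => hP (a, w) h (FreeMonoid.of x)
      have h2 : (a, w) ∈ Q → (a, w * FreeMonoid.of x) ∈ Q := fun h => hQ (a, w) h (FreeMonoid.of x)
      simp only [Set.mem_union, mem_basis_concat, Set.mem_inter_iff]
      tauto
  have hFin : (canonicalBasis (P ∪ Q) ∪ canonicalBasis (P ∩ Q)).Finite := by
    rw [hUnion]; exact hBP.union hBQ
  have hFinU : (canonicalBasis (P ∪ Q)).Finite := hFin.subset Set.subset_union_left
  have hFinI : (canonicalBasis (P ∩ Q)).Finite := hFin.subset Set.subset_union_right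
  refine ⟨hPQu, hPQi, hFinU, hFinI, ?_⟩
  have e1 := Set.ncard_union_add_ncard_inter (canonicalBasis P) (canonicalBasis Q) hBP hBQ
  have e2 := Set.ncard_union_add_ncard_inter (canonicalBasis (P ∪ Q)) (canonicalBasis (P ∩ Q))
    hFinU hFinI
  rw [hUnion, hInter] at e2
  omega
end

section
/- Let F be the free group of finite rank r ≥ 1 and H a subgroup of F such that every element of H has even reduced word length (an 'even' subgroup). For n ∈ ℕ let v(n) be the (finite) number of right cosets Hg of length n, where the length of a coset is min{|h| : h ∈ Hg}. Then there exists a free basis S of H such that, writing B = S ∪ S⁻¹ and letting b(m) be the number of elements of B of reduced word length m: b(m) = 0 for all odd m; b(2) = 4r − 2v(1); and for every n ≥ 1, b(2n) + b(2n+2) = 2((2r−1)v(n) − v(n+1)). (Equivalently, with d(n) = b(2n)/2 and Ĥ(B,t) = Σ_n d(n)t^n, one has Ĥ(B,t) = (2rt/(t+1) − 1)·H(F/H,t) + 1, so the Hilbert series of the set of free generators is completely recovered from the Hilbert series of F/H.) -/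
noncomputable section

/-- The length of a right coset `Hg` of a subgroup `H` of a free group:
the minimum of the reduced word lengths of the elements of the coset. -/
def cosetLen {r : ℕ} (H : Subgroup (FreeGroup (Fin r)))
    (c : Quotient (QuotientGroup.rightRel H)) : ℕ :=
  sInf (FreeGroup.norm '' {g | Quotient.mk (QuotientGroup.rightRel H) g = c})

namespace SchreierAux

open FreeGroup List

variable {α : Type*} [DecidableEq α]

set_option linter.unusedSectionVars false

def IsRed (w : List (α × Bool)) : Prop :=
  List.Chain' (fun a b => ¬(a.1 = b.1 ∧ a.2 = !b.2)) w

theorem isRed_reduce (w : List (α × Bool)) : IsRed (FreeGroup.reduce w) := by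
  induction w with
  | nil => exact List.isChain_nil
  | cons x t ih =>
    rw [FreeGroup.reduce.cons]
    rcases h : FreeGroup.reduce t with _ | ⟨hd, tl⟩
    · exact List.isChain_singleton x
    · rw [h] at ih
      show IsRed (if x.1 = hd.1 ∧ x.2 = !hd.2 then tl else x :: hd :: tl)
      by_cases hc : x.1 = hd.1 ∧ x.2 = !hd.2
      · rw [if_pos hc]
        exact List.IsChain.tail ih
      · rw [if_neg hc]
        exact List.isChain_cons_cons.2 ⟨hc, ih⟩

theorem reduce_eq_self_of_isRed {w : List (α × Bool)} (h : IsRed w) :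
    FreeGroup.reduce w = w := by
  induction w with
  | nil => rfl
  | cons x t ih =>
    have ht : IsRed t := h.tail
    rw [FreeGroup.reduce.cons, ih ht]
    rcases t with _ | ⟨hd, tl⟩
    · rfl
    · show (if x.1 = hd.1 ∧ x.2 = !hd.2 then tl else x :: hd :: tl) = x :: hd :: tl
      have hx : ¬(x.1 = hd.1 ∧ x.2 = !hd.2) := (List.isChain_cons_cons.1 h).1
      rw [if_neg hx]

theorem isRed_toWord (g : FreeGroup α) : IsRed g.toWord := by
  have h := FreeGroup.reduce_toWord g
  rw [← h]
  exact isRed_reduce _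

theorem toWord_mk_of_isRed {w : List (α × Bool)} (h : IsRed w) :
    (FreeGroup.mk w).toWord = w := by
  rw [FreeGroup.toWord_mk, reduce_eq_self_of_isRed h]

theorem norm_mk_of_isRed {w : List (α × Bool)} (h : IsRed w) :
    FreeGroup.norm (FreeGroup.mk w) = w.length := by
  rw [FreeGroup.norm, toWord_mk_of_isRed h]

def gen (x : α × Bool) : FreeGroup α := FreeGroup.mk [x]

def invx (x : α × Bool) : α × Bool := (x.1, !x.2)

@[simp] theorem invx_invx (x : α × Bool) : invx (invx x) = x := by
  cases x; simp [invx]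

@[simp] theorem gen_invx (x : α × Bool) : gen (invx x) = (gen x)⁻¹ := by
  cases x with
  | mk i b => rw [gen, gen, FreeGroup.inv_mk]; simp [FreeGroup.invRev, invx]

theorem of_eq_gen (i : α) : FreeGroup.of i = gen (i, true) := rfl

@[simp] theorem toWord_gen (x : α × Bool) : (gen x).toWord = [x] :=
  toWord_mk_of_isRed (List.isChain_singleton x)

@[simp] theorem norm_gen (x : α × Bool) : FreeGroup.norm (gen x) = 1 := by
  rw [FreeGroup.norm, toWord_gen]
  rfl

theorem gen_mul_gen_invx (x : α × Bool) : gen x * gen (invx x) = 1 := by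
  simp

theorem mul_gen_toWord (a : FreeGroup α) (x : α × Bool) :
    (a * gen x).toWord = a.toWord ++ [x] ∨
      a.toWord = (a * gen x).toWord ++ [invx x] := by
  rcases List.eq_nil_or_concat a.toWord with h | ⟨W, y, h⟩
  · left
    have ha : a = 1 := FreeGroup.toWord_eq_nil_iff.1 h
    rw [ha, one_mul, toWord_gen, FreeGroup.toWord_one, List.nil_append]
  · rw [List.concat_eq_append] at h
    have hred : IsRed (W ++ [y]) := h ▸ isRed_toWord a
    have hWred : IsRed W := hred.prefix ⟨[y], rfl⟩
    have ha : a = FreeGroup.mk (W ++ [y]) := by rw [← h, FreeGroup.mk_toWord]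
    by_cases hy : y = invx x
    · right
      have hstep : FreeGroup.mk (W ++ [y] ++ [x]) = FreeGroup.mk W := by
        apply Quot.sound
        have h2 : W ++ [y] ++ [x] = W ++ (x.1, !x.2) :: (x.1, !(!x.2)) :: [] := by
          simp [hy, invx]
        rw [h2]
        have h3 : (W : List (α × Bool)) = W ++ [] := by simp
        conv_rhs => rw [h3]
        exact FreeGroup.Red.Step.not
      have hax : a * gen x = FreeGroup.mk W := by
        rw [ha, gen, FreeGroup.mul_mk]
        exact hstep
      rw [hax, toWord_mk_of_isRed hWred, h, hy]
    · left
      have hjred : IsRed (W ++ [y] ++ [x]) := by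
        apply List.IsChain.append hred (List.isChain_singleton x)
        intro p hp q hq
        simp only [List.head?_cons, Option.mem_some_iff] at hq
        subst hq
        rw [List.getLast?_concat] at hp
        simp only [Option.mem_some_iff] at hp
        subst hp
        rintro ⟨h1, h2⟩
        exact hy (by cases y; cases x; simp_all [invx])
      have hax : a * gen x = FreeGroup.mk (W ++ [y] ++ [x]) := by
        rw [ha, gen, FreeGroup.mul_mk]
      rw [hax, toWord_mk_of_isRed hjred, h]

theorem norm_mul_gen (a : FreeGroup α) (x : α × Bool) :
    FreeGroup.norm (a * gen x) = FreeGroup.norm a + 1 ∨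
      FreeGroup.norm a = FreeGroup.norm (a * gen x) + 1 := by
  rcases mul_gen_toWord a x with h | h
  · left; rw [FreeGroup.norm, FreeGroup.norm, h, List.length_append, List.length_singleton]
  · right; rw [FreeGroup.norm, FreeGroup.norm, h, List.length_append, List.length_singleton]

section Cosets

variable {r : ℕ} (H : Subgroup (FreeGroup (Fin r)))

abbrev Q := Quotient (QuotientGroup.rightRel H)

def mkQ (g : FreeGroup (Fin r)) : Q H := Quotient.mk (QuotientGroup.rightRel H) g

theorem mkQ_eq_mkQ {a b : FreeGroup (Fin r)} : mkQ H a = mkQ H b ↔ b * a⁻¹ ∈ H := by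
  constructor
  · intro h
    exact (QuotientGroup.rightRel_apply).1 (Quotient.exact h)
  · intro h
    exact Quotient.sound ((QuotientGroup.rightRel_apply).2 h)

def act (c : Q H) (g : FreeGroup (Fin r)) : Q H :=
  Quot.map (fun a => a * g)
    (fun a b hab => by
      have h1 : b * a⁻¹ ∈ H := (QuotientGroup.rightRel_apply).1 hab
      apply (QuotientGroup.rightRel_apply).2
      have : b * g * (a * g)⁻¹ = b * a⁻¹ := by group
      rw [this]
      exact h1) c

@[simp] theorem act_mkQ (g g' : FreeGroup (Fin r)) :
    act H (mkQ H g) g' = mkQ H (g * g') := rfl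

theorem act_act (c : Q H) (g g' : FreeGroup (Fin r)) :
    act H (act H c g) g' = act H c (g * g') := by
  induction c using Quot.ind with
  | mk a => show mkQ H (a * g * g') = mkQ H (a * (g * g')); rw [mul_assoc]

theorem act_one (c : Q H) : act H c 1 = c := by
  induction c using Quot.ind with
  | mk a => show mkQ H (a * 1) = mkQ H a; rw [mul_one]

theorem act_gen_invx (c : Q H) (x : Fin r × Bool) :
    act H (act H c (gen x)) (gen (invx x)) = c := by
  rw [act_act, gen_invx, mul_inv_cancel, act_one]

def base : Q H := mkQ H 1

theorem act_base (g : FreeGroup (Fin r)) : act H (base H) g = mkQ H g := by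
  show mkQ H (1 * g) = mkQ H g
  rw [one_mul]

theorem mkQ_eq_base {g : FreeGroup (Fin r)} : mkQ H g = base H ↔ g ∈ H := by
  rw [base, mkQ_eq_mkQ, one_mul, inv_mem_iff]

theorem exists_mkQ (c : Q H) : ∃ g, mkQ H g = c := by
  induction c using Quot.ind with
  | mk a => exact ⟨a, rfl⟩

end Cosets

/-- length of a coset (same def as in the theorem statement) -/
def cLen {r : ℕ} (H : Subgroup (FreeGroup (Fin r))) (c : Q H) : ℕ :=
  sInf (FreeGroup.norm '' {g | mkQ H g = c})

section CLen

variable {r : ℕ} (H : Subgroup (FreeGroup (Fin r)))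

theorem exists_min (c : Q H) : ∃ g, mkQ H g = c ∧ FreeGroup.norm g = cLen H c := by
  have hne : (FreeGroup.norm '' {g | mkQ H g = c}).Nonempty := by
    obtain ⟨g, hg⟩ := exists_mkQ H c
    exact ⟨FreeGroup.norm g, g, hg, rfl⟩
  have := Nat.sInf_mem hne
  obtain ⟨g, hg, hn⟩ := this
  exact ⟨g, hg, hn⟩

theorem cLen_le {g c} (h : mkQ H g = c) : cLen H c ≤ FreeGroup.norm g :=
  Nat.sInf_le ⟨g, h, rfl⟩

theorem cLen_act_le (c : Q H) (g : FreeGroup (Fin r)) :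
    cLen H (act H c g) ≤ cLen H c + FreeGroup.norm g := by
  obtain ⟨g₀, hg₀, hn₀⟩ := exists_min H c
  have h1 : mkQ H (g₀ * g) = act H c g := by rw [← hg₀, act_mkQ]
  calc cLen H (act H c g) ≤ FreeGroup.norm (g₀ * g) := cLen_le H h1
    _ ≤ FreeGroup.norm g₀ + FreeGroup.norm g := FreeGroup.norm_mul_le _ _
    _ = cLen H c + FreeGroup.norm g := by rw [hn₀]

theorem cLen_base : cLen H (base H) = 0 :=
  Nat.le_zero.1 ((cLen_le H (rfl : mkQ H 1 = base H)).trans_eq FreeGroup.norm_one)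

theorem eq_base_of_cLen_zero {c : Q H} (h : cLen H c = 0) : c = base H := by
  obtain ⟨g, hg, hn⟩ := exists_min H c
  rw [h] at hn
  have : g = 1 := FreeGroup.norm_eq_zero.1 hn
  rw [← hg, this]
  rfl

end CLen

section Parity

variable {r : ℕ}

/-- parity homomorphism -/
def phi : FreeGroup (Fin r) →* Multiplicative (ZMod 2) :=
  FreeGroup.lift fun _ => Multiplicative.ofAdd 1

theorem phi_list (L : List (Fin r × Bool)) :
    List.prod (L.map fun x => cond x.2 ((Multiplicative.ofAdd (1 : ZMod 2)))
        ((Multiplicative.ofAdd (1 : ZMod 2)))⁻¹)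
      = Multiplicative.ofAdd (L.length : ZMod 2) := by
  induction L with
  | nil => rfl
  | cons x L ih =>
    rw [List.map_cons, List.prod_cons, ih]
    have h1 : ((Multiplicative.ofAdd (1 : ZMod 2)))⁻¹ = Multiplicative.ofAdd (1 : ZMod 2) := by
      decide
    have h2 : (cond x.2 ((Multiplicative.ofAdd (1 : ZMod 2)))
        ((Multiplicative.ofAdd (1 : ZMod 2)))⁻¹) = Multiplicative.ofAdd (1 : ZMod 2) := by
      cases x.2 <;> simp [h1]
    rw [h2, List.length_cons, ← ofAdd_add]
    congr 1
    push_cast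
    ring

theorem phi_apply (g : FreeGroup (Fin r)) :
    phi g = Multiplicative.ofAdd ((FreeGroup.norm g : ZMod 2)) := by
  conv_lhs => rw [← FreeGroup.mk_toWord (x := g)]
  rw [phi, FreeGroup.lift_mk, phi_list]
  rfl

theorem norm_parity_mul (a b : FreeGroup (Fin r)) :
    ((FreeGroup.norm (a * b) : ZMod 2)) = (FreeGroup.norm a : ZMod 2) + FreeGroup.norm b := by
  have := map_mul phi a b
  rw [phi_apply, phi_apply, phi_apply, ← ofAdd_add] at this
  exact Multiplicative.ofAdd.injective this

variable (H : Subgroup (FreeGroup (Fin r)))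
variable (heven : ∀ h ∈ H, Even (FreeGroup.norm h))

include heven

theorem parity_coset {g : FreeGroup (Fin r)} {c : Q H} (h : mkQ H g = c) :
    ((FreeGroup.norm g : ZMod 2)) = (cLen H c : ZMod 2) := by
  obtain ⟨g₀, hg₀, hn₀⟩ := exists_min H c
  have h1 : g₀ * g⁻¹ ∈ H := (mkQ_eq_mkQ H).1 (h.trans hg₀.symm)
  have h2 : g₀ = (g₀ * g⁻¹) * g := by group
  have h3 := norm_parity_mul (g₀ * g⁻¹) g
  rw [← h2, hn₀] at h3
  have h4 : ((FreeGroup.norm (g₀ * g⁻¹) : ZMod 2)) = 0 := by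
    obtain ⟨k, hk⟩ := heven _ h1
    rw [hk]
    push_cast
    ring_nf
    rw [show ((2 : ZMod 2)) = 0 by decide]
    ring
  rw [h4, zero_add] at h3
  exact h3.symm

theorem cLen_act_gen (c : Q H) (x : Fin r × Bool) :
    cLen H (act H c (gen x)) = cLen H c + 1 ∨
      cLen H c = cLen H (act H c (gen x)) + 1 := by
  have h1 : cLen H (act H c (gen x)) ≤ cLen H c + 1 := by
    simpa using cLen_act_le H c (gen x)
  have h2 : cLen H c ≤ cLen H (act H c (gen x)) + 1 := by
    have := cLen_act_le H (act H c (gen x)) (gen (invx x))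
    rw [act_gen_invx] at this
    simpa using this
  have h3 : ((cLen H (act H c (gen x)) : ZMod 2)) = (cLen H c : ZMod 2) + 1 := by
    obtain ⟨g₀, hg₀, hn₀⟩ := exists_min H c
    have hact : mkQ H (g₀ * gen x) = act H c (gen x) := by rw [← hg₀, act_mkQ]
    have := parity_coset H heven hact
    rw [norm_parity_mul, hn₀, norm_gen] at this
    rw [← this]
    push_cast
    ring
  have hne : cLen H (act H c (gen x)) ≠ cLen H c := by
    intro he
    rw [he, left_eq_add] at h3
    exact one_ne_zero h3
  omega

end Parity

section Rep

variable {r : ℕ} (H : Subgroup (FreeGroup (Fin r)))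

theorem exists_parent (c : Q H) (h : cLen H c ≠ 0) :
    ∃ p : Q H × (Fin r × Bool),
      cLen H p.1 + 1 = cLen H c ∧ act H p.1 (gen p.2) = c := by
  obtain ⟨g, hg, hn⟩ := exists_min H c
  have hW : g.toWord ≠ [] := by
    intro hnil
    apply h
    rw [← hn, FreeGroup.norm, hnil, List.length_nil]
  rcases List.eq_nil_or_concat g.toWord with h' | ⟨W, y, h'⟩
  · exact absurd h' hW
  · rw [List.concat_eq_append] at h'
    have hred : IsRed (W ++ [y]) := h' ▸ isRed_toWord g
    have hWred : IsRed W := hred.prefix ⟨[y], rfl⟩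
    have hgW : FreeGroup.mk W * gen y = g := by
      rw [gen, FreeGroup.mul_mk, ← h', FreeGroup.mk_toWord]
    refine ⟨(mkQ H (FreeGroup.mk W), y), ?_, ?_⟩
    · show cLen H (mkQ H (FreeGroup.mk W)) + 1 = cLen H c
      have h1 : cLen H (mkQ H (FreeGroup.mk W)) ≤ FreeGroup.norm (FreeGroup.mk W) :=
        cLen_le H rfl
      rw [norm_mk_of_isRed hWred] at h1
      have hlen : W.length + 1 = cLen H c := by
        rw [← hn, FreeGroup.norm, h', List.length_append, List.length_singleton]
      have h2 : cLen H c ≤ cLen H (mkQ H (FreeGroup.mk W)) + 1 := by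
        have h3 : act H (mkQ H (FreeGroup.mk W)) (gen y) = c := by
          rw [act_mkQ, hgW, hg]
        calc cLen H c = cLen H (act H (mkQ H (FreeGroup.mk W)) (gen y)) := by rw [h3]
          _ ≤ cLen H (mkQ H (FreeGroup.mk W)) + FreeGroup.norm (gen y) := cLen_act_le H _ _
          _ = cLen H (mkQ H (FreeGroup.mk W)) + 1 := by rw [norm_gen]
      omega
    · show act H (mkQ H (FreeGroup.mk W)) (gen y) = c
      rw [act_mkQ, hgW, hg]

/-- chosen parent/letter data for a coset of positive length -/
def parentD (c : Q H) (h : cLen H c ≠ 0) : Q H × (Fin r × Bool) :=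
  Classical.choose (exists_parent H c h)

theorem parentD_spec (c : Q H) (h : cLen H c ≠ 0) :
    cLen H (parentD H c h).1 + 1 = cLen H c ∧
      act H (parentD H c h).1 (gen (parentD H c h).2) = c :=
  Classical.choose_spec (exists_parent H c h)

/-- geodesic Schreier representative of a coset -/
def rep (c : Q H) : FreeGroup (Fin r) :=
  if h : cLen H c = 0 then 1
  else
    have hlt : cLen H (parentD H c h).1 < cLen H c := by
      have := (parentD_spec H c h).1; omega
    rep (parentD H c h).1 * gen (parentD H c h).2
termination_by cLen H c

theorem rep_decomp (c : Q H) (h : cLen H c ≠ 0) :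
    rep H c = rep H (parentD H c h).1 * gen (parentD H c h).2 := by
  rw [rep, dif_neg h]

theorem rep_of_cLen_zero (c : Q H) (h : cLen H c = 0) : rep H c = 1 := by
  rw [rep, dif_pos h]

theorem rep_spec (c : Q H) :
    mkQ H (rep H c) = c ∧ FreeGroup.norm (rep H c) = cLen H c := by
  generalize hn : cLen H c = n
  induction n using Nat.strong_induction_on generalizing c with
  | _ n ih =>
    by_cases h : cLen H c = 0
    · rw [rep_of_cLen_zero H c h]
      have hb : c = base H := eq_base_of_cLen_zero H h
      constructor
      · rw [hb]; rfl
      · rw [FreeGroup.norm_one]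
        omega
    · obtain ⟨hl, ha⟩ := parentD_spec H c h
      have ihp := ih (cLen H (parentD H c h).1) (by omega) (parentD H c h).1 rfl
      rw [rep_decomp H c h]
      constructor
      · conv_rhs => rw [← ha]
        rw [← act_mkQ H (rep H (parentD H c h).1) (gen (parentD H c h).2), ihp.1]
      · have hle : FreeGroup.norm (rep H (parentD H c h).1 * gen (parentD H c h).2)
            ≤ n := by
          calc FreeGroup.norm _ ≤ FreeGroup.norm (rep H (parentD H c h).1) +
              FreeGroup.norm (gen (parentD H c h).2) := FreeGroup.norm_mul_le _ _
            _ = cLen H (parentD H c h).1 + 1 := by rw [ihp.2, norm_gen]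
            _ = n := by omega
        have hge : n ≤ FreeGroup.norm (rep H (parentD H c h).1 * gen (parentD H c h).2) := by
          rw [← hn]
          apply cLen_le
          conv_rhs => rw [← ha]
          rw [← act_mkQ H (rep H (parentD H c h).1) (gen (parentD H c h).2), ihp.1]
        omega

theorem mkQ_rep (c : Q H) : mkQ H (rep H c) = c := (rep_spec H c).1

theorem norm_rep (c : Q H) : FreeGroup.norm (rep H c) = cLen H c := (rep_spec H c).2

theorem rep_base : rep H (base H) = 1 := rep_of_cLen_zero H _ (cLen_base H)

theorem rep_toWord (c : Q H) (h : cLen H c ≠ 0) :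
    (rep H c).toWord = (rep H (parentD H c h).1).toWord ++ [(parentD H c h).2] := by
  obtain ⟨hl, ha⟩ := parentD_spec H c h
  have hd := rep_decomp H c h
  rcases mul_gen_toWord (rep H (parentD H c h).1) (parentD H c h).2 with h' | h'
  · rw [hd]; exact h'
  · exfalso
    have h1 := congrArg List.length h'
    rw [List.length_append, List.length_singleton] at h1
    have h2 : FreeGroup.norm (rep H (parentD H c h).1) =
        FreeGroup.norm (rep H (parentD H c h).1 * gen (parentD H c h).2) + 1 := h1
    rw [← hd, norm_rep, norm_rep] at h2
    omega

/-- uniqueness of the last-letter decomposition -/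
theorem lastLetter (c : Q H) (W : List (Fin r × Bool)) (x : Fin r × Bool)
    (hW : (rep H c).toWord = W ++ [x]) :
    rep H (act H c (gen (invx x))) = FreeGroup.mk W ∧
      cLen H (act H c (gen (invx x))) + 1 = cLen H c ∧
      rep H c = FreeGroup.mk W * gen x := by
  have h : cLen H c ≠ 0 := by
    intro h0
    rw [rep_of_cLen_zero H c h0] at hW
    simp [FreeGroup.toWord_one] at hW
  obtain ⟨hl, ha⟩ := parentD_spec H c h
  have ht := rep_toWord H c h
  rw [hW] at ht
  have hinj := List.append_inj' ht (by simp)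
  obtain ⟨hW', hx'⟩ := hinj
  have hx : x = (parentD H c h).2 := List.singleton_injective hx'
  have hp : act H c (gen (invx x)) = (parentD H c h).1 := by
    rw [hx]
    calc act H c (gen (invx (parentD H c h).2))
        = act H (act H (parentD H c h).1 (gen (parentD H c h).2))
            (gen (invx (parentD H c h).2)) := by rw [ha]
      _ = (parentD H c h).1 := act_gen_invx H _ _
  constructor
  · rw [hp, hW', FreeGroup.mk_toWord]
  constructor
  · rw [hp]; exact hl
  · rw [rep_decomp H c h, hW', FreeGroup.mk_toWord, hx]

end Rep

theorem invRev_concat {α : Type*} (V : List (α × Bool)) (u : α × Bool) :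
    FreeGroup.invRev (V ++ [u]) = (u.1, !u.2) :: FreeGroup.invRev V := by
  simp [FreeGroup.invRev]

section Sig

variable {r : ℕ} (H : Subgroup (FreeGroup (Fin r)))

def sigx (c : Q H) (x : Fin r × Bool) : FreeGroup (Fin r) :=
  rep H c * gen x * (rep H (act H c (gen x)))⁻¹

def sig (e : Q H × Fin r) : FreeGroup (Fin r) := sigx H e.1 (e.2, true)

theorem sigx_mem (c : Q H) (x : Fin r × Bool) : sigx H c x ∈ H := by
  have h : mkQ H (rep H (act H c (gen x))) = mkQ H (rep H c * gen x) := by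
    rw [← act_mkQ, mkQ_rep, mkQ_rep]
  have h1 := (mkQ_eq_mkQ H).1 h
  have h2 : sigx H c x = rep H c * gen x * (rep H (act H c (gen x)))⁻¹ := rfl
  rw [h2]
  exact h1

theorem sigx_inv (c : Q H) (x : Fin r × Bool) :
    sigx H (act H c (gen x)) (invx x) = (sigx H c x)⁻¹ := by
  rw [sigx, sigx, act_gen_invx, gen_invx]
  group

theorem sigx_eq_one_iff (c : Q H) (x : Fin r × Bool) :
    sigx H c x = 1 ↔ rep H c * gen x = rep H (act H c (gen x)) :=
  mul_inv_eq_one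

theorem sigx_step1 (c : Q H) (x : Fin r × Bool) (h : sigx H c x ≠ 1) :
    (rep H c * gen x).toWord = (rep H c).toWord ++ [x] := by
  rcases mul_gen_toWord (rep H c) x with h1 | h1
  · exact h1
  · exfalso
    obtain ⟨hrep, -, -⟩ := lastLetter H c (rep H c * gen x).toWord (invx x) h1
    rw [invx_invx, FreeGroup.mk_toWord] at hrep
    exact h ((sigx_eq_one_iff H c x).2 hrep.symm)

theorem sigx_step2 (c : Q H) (x : Fin r × Bool) (h : sigx H c x ≠ 1) :
    (rep H (act H c (gen x)) * gen (invx x)).toWord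
      = (rep H (act H c (gen x))).toWord ++ [invx x] := by
  set c' := act H c (gen x) with hc'
  rcases mul_gen_toWord (rep H c') (invx x) with h1 | h1
  · exact h1
  · exfalso
    obtain ⟨hrep, -, -⟩ := lastLetter H c' (rep H c' * gen (invx x)).toWord x
      (by rw [h1, invx_invx])
    rw [FreeGroup.mk_toWord] at hrep
    have hc : act H c' (gen (invx x)) = c := act_gen_invx H c x
    rw [hc] at hrep
    apply h
    rw [sigx_eq_one_iff]
    rw [hrep, mul_assoc, gen_invx, inv_mul_cancel, mul_one]

theorem sigx_toWord (c : Q H) (x : Fin r × Bool) (h : sigx H c x ≠ 1) :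
    (sigx H c x).toWord
      = ((rep H c).toWord ++ [x])
          ++ FreeGroup.invRev ((rep H (act H c (gen x))).toWord) := by
  set c' := act H c (gen x) with hc'
  set t := rep H c with ht
  set s := rep H c' with hs
  have hinv : s⁻¹ = FreeGroup.mk (FreeGroup.invRev s.toWord) := by
    conv_lhs => rw [← FreeGroup.mk_toWord (x := s)]
    rw [FreeGroup.inv_mk]
  have hmk : sigx H c x = FreeGroup.mk ((t.toWord ++ [x]) ++ FreeGroup.invRev s.toWord) := by
    rw [sigx, ← FreeGroup.mul_mk, ← hinv]
    congr 1
    conv_lhs => rw [← FreeGroup.mk_toWord (x := t * gen x)]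
    rw [sigx_step1 H c x h]
  rw [hmk]
  apply toWord_mk_of_isRed
  have hA : IsRed (t.toWord ++ [x]) := by
    rw [← sigx_step1 H c x h]
    exact isRed_toWord _
  have hB : IsRed (FreeGroup.invRev s.toWord) := by
    have : FreeGroup.invRev s.toWord = (s⁻¹).toWord := by
      rw [FreeGroup.toWord_inv]
    rw [this]
    exact isRed_toWord _
  apply List.IsChain.append hA hB
  intro p hp q hq
  rw [List.getLast?_concat] at hp
  simp only [Option.mem_some_iff] at hp
  subst hp
  rcases List.eq_nil_or_concat s.toWord with hnil | ⟨V, u, hVu⟩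
  · rw [hnil] at hq
    simp [FreeGroup.invRev] at hq
  · rw [List.concat_eq_append] at hVu
    rw [hVu, invRev_concat] at hq
    simp only [List.head?_cons, Option.mem_some_iff] at hq
    subst hq
    rintro ⟨h1, h2⟩
    -- now p = x, q = (u.1, !u.2), x.1 = u.1, x.2 = !!u.2 = u.2, so x = u
    have hxu : x = u := by
      cases x; cases u
      simp_all
    -- but step2 says appending invx x to s does not cancel, i.e. last of s.toWord ≠ x
    have hred2 : IsRed (s.toWord ++ [invx x]) := by
      rw [← sigx_step2 H c x h]
      exact isRed_toWord _
    rw [hVu] at hred2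
    have hchain : List.Chain' (fun a b => ¬(a.1 = b.1 ∧ a.2 = !b.2)) [u, invx x] := by
      apply hred2.infix
      exact ⟨V, [], by simp⟩
    have hrel := (List.isChain_cons_cons.1 hchain).1
    apply hrel
    constructor
    · rw [← hxu]; rfl
    · rw [← hxu]
      show x.2 = !(invx x).2
      rw [invx]
      simp

theorem norm_sigx (c : Q H) (x : Fin r × Bool) (h : sigx H c x ≠ 1) :
    FreeGroup.norm (sigx H c x) = cLen H c + cLen H (act H c (gen x)) + 1 := by
  rw [FreeGroup.norm, sigx_toWord H c x h]
  rw [List.length_append, List.length_append, List.length_singleton,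
    FreeGroup.invRev_length]
  have h1 : (rep H c).toWord.length = cLen H c := norm_rep H c
  have h2 : (rep H (act H c (gen x))).toWord.length = cLen H (act H c (gen x)) :=
    norm_rep H _
  omega

end Sig

section Read

variable {r : ℕ} (H : Subgroup (FreeGroup (Fin r)))

/-- the label of the edge `(c, x)` in the free group on positive edges -/
def eps (c : Q H) (x : Fin r × Bool) : FreeGroup (Q H × Fin r) :=
  if sigx H c x = 1 then 1
  else if x.2 then FreeGroup.of (c, x.1)
  else (FreeGroup.of (act H c (gen x), x.1))⁻¹

theorem sigx_eta (c : Q H) (x : Fin r × Bool) : sigx H c x = sigx H c (x.1, x.2) := by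
  cases x; rfl

theorem eps_true (c : Q H) (i : Fin r) (h : sigx H c (i, true) ≠ 1) :
    eps H c (i, true) = FreeGroup.of (c, i) := by
  rw [eps, if_neg h]
  rfl

theorem eps_false (c : Q H) (i : Fin r) (h : sigx H c (i, false) ≠ 1) :
    eps H c (i, false) = (FreeGroup.of (act H c (gen (i, false)), i))⁻¹ := by
  rw [eps, if_neg h]
  rfl

theorem eps_mul_eps (c : Q H) (x : Fin r × Bool) :
    eps H c x * eps H (act H c (gen x)) (invx x) = 1 := by
  have htr : sigx H (act H c (gen x)) (invx x) = 1 ↔ sigx H c x = 1 := by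
    rw [sigx_inv, inv_eq_one]
  by_cases h : sigx H c x = 1
  · rw [eps, if_pos h, eps, if_pos (htr.2 h), one_mul]
  · have hne : sigx H (act H c (gen x)) (invx x) ≠ 1 := fun hh => h (htr.1 hh)
    rcases x with ⟨i, b⟩
    cases b
    · have e1 := eps_false H c i h
      have e2 : eps H (act H c (gen (i, false))) (i, true)
          = FreeGroup.of (act H c (gen (i, false)), i) :=
        eps_true H _ i hne
      rw [show invx ((i : Fin r), false) = (i, true) from rfl] at *
      rw [e1, e2, inv_mul_cancel]
    · have e1 := eps_true H c i h
      have e2 : eps H (act H c (gen (i, true))) (i, false)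
          = (FreeGroup.of (act H (act H c (gen (i, true))) (gen (i, false)), i))⁻¹ :=
        eps_false H _ i hne
      have hback : act H (act H c (gen (i, true))) (gen (i, false)) = c :=
        act_gen_invx H c (i, true)
      rw [show invx ((i : Fin r), true) = (i, false) from rfl] at *
      rw [e1, e2, hback, mul_inv_cancel]

/-- read a word starting from a coset, recording the (nontrivial) Schreier edges used -/
def readW : List (Fin r × Bool) → Q H → FreeGroup (Q H × Fin r)
  | [], _ => 1
  | x :: L, c => eps H c x * readW L (act H c (gen x))

theorem act_mk_cons (c : Q H) (x : Fin r × Bool) (L : List (Fin r × Bool)) :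
    act H c (FreeGroup.mk (x :: L)) = act H (act H c (gen x)) (FreeGroup.mk L) := by
  rw [act_act]
  have hx : gen x * FreeGroup.mk L = FreeGroup.mk (x :: L) := by
    rw [gen, FreeGroup.mul_mk]
    rfl
  rw [hx]

theorem readW_append (L₁ L₂ : List (Fin r × Bool)) (c : Q H) :
    readW H (L₁ ++ L₂) c = readW H L₁ c * readW H L₂ (act H c (FreeGroup.mk L₁)) := by
  induction L₁ generalizing c with
  | nil =>
    rw [List.nil_append, readW, one_mul]
    congr 1
    rw [show FreeGroup.mk ([] : List (Fin r × Bool)) = 1 from rfl, act_one]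
  | cons x L ih =>
    rw [List.cons_append, readW, readW, ih, mul_assoc, act_mk_cons]

theorem readW_step {L₁ L₂ : List (Fin r × Bool)} (h : FreeGroup.Red.Step L₁ L₂) (c : Q H) :
    readW H L₁ c = readW H L₂ c := by
  cases h with
  | @not L A x b =>
    rw [readW_append, readW_append]
    congr 1
    show readW H ((x, b) :: (x, !b) :: A) _ = _
    rw [readW, readW]
    rw [show ((x : Fin r), !b) = invx (x, b) from rfl]
    rw [← mul_assoc, eps_mul_eps, one_mul, act_gen_invx]

/-- read a group element starting from a coset -/
def read (g : FreeGroup (Fin r)) (c : Q H) : FreeGroup (Q H × Fin r) :=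
  Quot.liftOn g (fun L => readW H L c) (fun _ _ h => readW_step H h c)

theorem read_mk (L : List (Fin r × Bool)) (c : Q H) :
    read H (FreeGroup.mk L) c = readW H L c := rfl

theorem read_one (c : Q H) : read H 1 c = 1 := rfl

theorem read_mul (a b : FreeGroup (Fin r)) (c : Q H) :
    read H (a * b) c = read H a c * read H b (act H c a) := by
  induction a using Quot.ind with
  | mk L₁ =>
    induction b using Quot.ind with
    | mk L₂ =>
      show read H (FreeGroup.mk L₁ * FreeGroup.mk L₂) c = _
      rw [FreeGroup.mul_mk, read_mk, readW_append]
      rfl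

theorem read_inv (a : FreeGroup (Fin r)) (c : Q H) :
    read H a⁻¹ (act H c a) = (read H a c)⁻¹ := by
  have h := read_mul H a a⁻¹ c
  rw [mul_inv_cancel, read_one] at h
  exact (inv_eq_of_mul_eq_one_right h.symm).symm

theorem read_gen (x : Fin r × Bool) (c : Q H) :
    read H (gen x) c = eps H c x := by
  rw [gen, read_mk, readW, readW, mul_one]

theorem read_rep (c : Q H) : read H (rep H c) (base H) = 1 := by
  generalize hn : cLen H c = n
  induction n using Nat.strong_induction_on generalizing c with
  | _ n ih =>
    by_cases h : cLen H c = 0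
    · rw [rep_of_cLen_zero H c h, read_one]
    · obtain ⟨hl, ha⟩ := parentD_spec H c h
      set p := (parentD H c h).1
      set x := (parentD H c h).2
      rw [rep_decomp H c h, read_mul]
      have h1 : read H (rep H p) (base H) = 1 := ih (cLen H p) (by omega) p rfl
      have h2 : act H (base H) (rep H p) = p := by rw [act_base, mkQ_rep]
      rw [h1, h2, one_mul, read_gen]
      have hone : sigx H p x = 1 := by
        rw [sigx_eq_one_iff, ha]
        exact (rep_decomp H c h).symm
      rw [eps, if_pos hone]

end Read

theorem mk_cons {α : Type*} (x : α × Bool) (L : List (α × Bool)) :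
    gen x * FreeGroup.mk L = FreeGroup.mk (x :: L) := by
  rw [gen, FreeGroup.mul_mk]
  rfl

theorem pure_eq_of {β : Type*} (s : β) : (pure s : FreeGroup β) = FreeGroup.of s := rfl

theorem fg_eq_one_of_isEmpty {β : Type*} [IsEmpty β] (z : FreeGroup β) : z = 1 := by
  induction z using Quot.ind with
  | mk L =>
    cases L with
    | nil => rfl
    | cons a t => exact (IsEmpty.false a.1).elim

section Basis

variable {r : ℕ} (H : Subgroup (FreeGroup (Fin r)))

def NT : Set (Q H × Fin r) := {e | sig H e ≠ 1}

def SS : Set (FreeGroup (Fin r)) := sig H '' NT H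

def Phi : FreeGroup (SS H) →* FreeGroup (Fin r) :=
  FreeGroup.lift (fun s : SS H => (s : FreeGroup (Fin r)))

theorem Phi_of (s : SS H) : Phi H (FreeGroup.of s) = (s : FreeGroup (Fin r)) :=
  FreeGroup.lift_apply_of

theorem SS_subset_H : SS H ⊆ (H : Set (FreeGroup (Fin r))) := by
  rintro g ⟨e, -, rfl⟩
  exact sigx_mem H e.1 (e.2, true)

theorem Phi_range_le : ∀ z, Phi H z ∈ H := by
  intro z
  have h1 : (Phi H).range = Subgroup.closure (SS H) := by
    rw [Phi, FreeGroup.range_lift_eq_closure, Subtype.range_coe]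
  have h2 : (Phi H).range ≤ H := by
    rw [h1]
    exact (Subgroup.closure_le H).2 (SS_subset_H H)
  exact h2 ⟨z, rfl⟩

theorem act_base_of_mem {h : FreeGroup (Fin r)} (hh : h ∈ H) :
    act H (base H) h = base H := by
  rw [act_base]
  exact (mkQ_eq_base H).2 hh

theorem read_sig (e : Q H × Fin r) (he : e ∈ NT H) :
    read H (sig H e) (base H) = FreeGroup.of e := by
  obtain ⟨c, i⟩ := e
  have hx : sigx H c (i, true) ≠ 1 := he
  set x : Fin r × Bool := (i, true) with hxdef
  set c' := act H c (gen x) with hc'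
  have h0 : sig H (c, i) = (rep H c * gen x) * (rep H c')⁻¹ := rfl
  rw [h0, read_mul]
  have h1 : read H (rep H c * gen x) (base H) = FreeGroup.of (c, i) := by
    rw [read_mul, read_rep, one_mul]
    rw [act_base, mkQ_rep, read_gen, eps_true H c i hx]
  rw [h1]
  have h2 : act H (base H) (rep H c * gen x) = act H (base H) (rep H c') := by
    rw [act_base, act_base, mkQ_rep, ← act_mkQ, mkQ_rep]
  rw [h2, read_inv, read_rep, inv_one, mul_one]

/-- choice of a Schreier edge representing a basis element -/
def choiceE (s : SS H) : Q H × Fin r :=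
  (s.2 : ∃ e, e ∈ NT H ∧ sig H e = (s : FreeGroup (Fin r))).choose

theorem choiceE_spec (s : SS H) :
    choiceE H s ∈ NT H ∧ sig H (choiceE H s) = (s : FreeGroup (Fin r)) :=
  (s.2 : ∃ e, e ∈ NT H ∧ sig H e = (s : FreeGroup (Fin r))).choose_spec

def mapE : FreeGroup (SS H) →* FreeGroup (Q H × Fin r) :=
  FreeGroup.lift fun s => FreeGroup.of (choiceE H s)

theorem read_Phi (z : FreeGroup (SS H)) :
    read H (Phi H z) (base H) = mapE H z := by
  refine FreeGroup.induction_on z ?_ ?_ ?_ ?_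
  · rw [_root_.map_one, _root_.map_one, read_one]
  · intro s
    rw [Phi_of, mapE, FreeGroup.lift_apply_of]
    obtain ⟨he, hs⟩ := choiceE_spec H s
    rw [← hs]
    exact read_sig H _ he
  · intro s ih
    rw [_root_.map_inv, _root_.map_inv, ← ih]
    have hmem : Phi H (FreeGroup.of s) ∈ H := Phi_range_le H _
    conv_lhs => rw [show base H = act H (base H) (Phi H (FreeGroup.of s)) from
      (act_base_of_mem H hmem).symm]
    rw [read_inv]
  · intro y z ihy ihz
    rw [_root_.map_mul, _root_.map_mul, read_mul, act_base_of_mem H (Phi_range_le H y),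
      ihy, ihz]

theorem choiceE_injective : Function.Injective (choiceE H) := by
  intro s₁ s₂ h
  have h1 := (choiceE_spec H s₁).2
  have h2 := (choiceE_spec H s₂).2
  apply Subtype.ext
  rw [← h1, ← h2, h]

theorem mapE_injective : Function.Injective (mapE H) := by
  rcases isEmpty_or_nonempty (SS H) with hemp | hne
  · intro a b _
    rw [fg_eq_one_of_isEmpty a, fg_eq_one_of_isEmpty b]
  · obtain ⟨g, hg⟩ := (choiceE_injective H).hasLeftInverse
    have key : ∀ z, FreeGroup.map g (mapE H z) = z := by
      intro z
      have h1 : mapE H z = FreeGroup.map (choiceE H) z := by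
        rw [FreeGroup.map_eq_lift]
        rfl
      rw [h1, FreeGroup.map.comp, show g ∘ choiceE H = id from funext hg, FreeGroup.map.id]
    intro a b hab
    rw [← key a, ← key b, hab]

theorem Phi_injective : Function.Injective (Phi H) := by
  intro a b hab
  apply mapE_injective H
  rw [← read_Phi, ← read_Phi, hab]

def Psi : FreeGroup (Q H × Fin r) →* FreeGroup (Fin r) :=
  FreeGroup.lift (sig H)

theorem Psi_eps (c : Q H) (x : Fin r × Bool) : Psi H (eps H c x) = sigx H c x := by
  by_cases h : sigx H c x = 1
  · rw [eps, if_pos h, _root_.map_one, h]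
  · rcases x with ⟨i, b⟩
    cases b
    · rw [eps_false H c i h, _root_.map_inv, Psi, FreeGroup.lift_apply_of]
      have hs := sigx_inv H c (i, false)
      rw [show invx ((i : Fin r), false) = (i, true) from rfl] at hs
      rw [show sig H (act H c (gen (i, false)), i)
          = sigx H (act H c (gen (i, false))) (i, true) from rfl, hs, inv_inv]
    · rw [eps_true H c i h, Psi, FreeGroup.lift_apply_of]
      rfl

theorem Psi_readW (L : List (Fin r × Bool)) :
    ∀ c : Q H, Psi H (readW H L c)
      = rep H c * FreeGroup.mk L * (rep H (act H c (FreeGroup.mk L)))⁻¹ := by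
  induction L with
  | nil =>
    intro c
    rw [readW, _root_.map_one, show FreeGroup.mk ([] : List (Fin r × Bool)) = 1 from rfl,
      mul_one, act_one, mul_inv_cancel]
  | cons x L ih =>
    intro c
    rw [readW, _root_.map_mul, Psi_eps, ih, sigx, act_mk_cons, ← mk_cons]
    group

theorem Psi_read (g : FreeGroup (Fin r)) (c : Q H) :
    Psi H (read H g c) = rep H c * g * (rep H (act H c g))⁻¹ := by
  induction g using Quot.ind with
  | mk L => exact Psi_readW H L c

theorem Psi_read_of_mem {h : FreeGroup (Fin r)} (hh : h ∈ H) :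
    Psi H (read H h (base H)) = h := by
  rw [Psi_read, rep_base, act_base, (mkQ_eq_base H).2 hh, rep_base, inv_one, mul_one, one_mul]

theorem Psi_mem_range (z : FreeGroup (Q H × Fin r)) : Psi H z ∈ (Phi H).range := by
  refine FreeGroup.induction_on z ?_ ?_ ?_ ?_
  · rw [_root_.map_one]; exact one_mem _
  · intro e
    rw [Psi, FreeGroup.lift_apply_of]
    by_cases h : sig H e = 1
    · rw [h]; exact one_mem _
    · exact ⟨FreeGroup.of ⟨sig H e, ⟨e, h, rfl⟩⟩, Phi_of H _⟩
  · intro e ih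
    rw [_root_.map_inv]
    exact inv_mem ih
  · intro y z ihy ihz
    rw [_root_.map_mul]
    exact mul_mem ihy ihz

theorem Phi_range : (Phi H).range = H := by
  apply _root_.le_antisymm
  · rintro g ⟨z, rfl⟩
    exact Phi_range_le H z
  · intro h hh
    have := Psi_mem_range H (read H h (base H))
    rwa [Psi_read_of_mem H hh] at this

end Basis

section Count

variable {r : ℕ} (H : Subgroup (FreeGroup (Fin r)))

def levN (n : ℕ) : Set (Q H) := {c | cLen H c = n}

theorem levN_finite (n : ℕ) : (levN H n).Finite := by
  apply Set.Finite.of_finite_image (f := fun c => (rep H c).toWord)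
  · apply Set.Finite.subset (List.finite_length_eq (Fin r × Bool) n)
    rintro w ⟨c, hc, rfl⟩
    have := norm_rep H c
    rw [FreeGroup.norm] at this
    rw [Set.mem_setOf_eq, this]
    exact hc
  · intro c₁ h₁ c₂ h₂ h
    have : rep H c₁ = rep H c₂ := FreeGroup.toWord_injective h
    rw [← mkQ_rep H c₁, ← mkQ_rep H c₂, this]

theorem levN_zero : levN H 0 = {base H} := by
  ext c
  simp only [levN, Set.mem_setOf_eq, Set.mem_singleton_iff]
  constructor
  · exact eq_base_of_cLen_zero H
  · rintro rfl
    exact cLen_base H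

def All (m : ℕ) : Set (Q H × (Fin r × Bool)) := {p | cLen H p.1 = m}

def Up (m : ℕ) : Set (Q H × (Fin r × Bool)) :=
  {p | cLen H p.1 = m ∧ cLen H (act H p.1 (gen p.2)) = m + 1}

def Dwn (m : ℕ) : Set (Q H × (Fin r × Bool)) :=
  {p | cLen H p.1 = m ∧ cLen H (act H p.1 (gen p.2)) + 1 = m}

def PE (n : ℕ) : Set (Q H × Fin r) :=
  {e | cLen H e.1 + cLen H (act H e.1 (gen (e.2, true))) + 1 = 2 * n}

def TE (n : ℕ) : Set (Q H × Fin r) := {e ∈ PE H n | sig H e = 1}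

def NE (n : ℕ) : Set (Q H × Fin r) := {e ∈ PE H n | sig H e ≠ 1}

theorem All_eq_prod (m : ℕ) : All H m = (levN H m) ×ˢ (Set.univ : Set (Fin r × Bool)) := by
  ext ⟨c, x⟩
  simp [All, levN]

theorem All_finite (m : ℕ) : (All H m).Finite := by
  rw [All_eq_prod]
  exact (levN_finite H m).prod (Set.finite_univ)

theorem Up_finite (m : ℕ) : (Up H m).Finite :=
  (All_finite H m).subset fun p hp => hp.1

theorem Dwn_finite (m : ℕ) : (Dwn H m).Finite :=
  (All_finite H m).subset fun p hp => hp.1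

theorem All_ncard (m : ℕ) : (All H m).ncard = (levN H m).ncard * (2 * r) := by
  rw [All_eq_prod]
  rw [← Nat.card_coe_set_eq, ← Nat.card_coe_set_eq]
  rw [Nat.card_congr (Equiv.Set.prod _ _), Nat.card_prod]
  congr 1
  rw [Nat.card_congr (Equiv.Set.univ _), Nat.card_eq_fintype_card, Fintype.card_prod,
    Fintype.card_fin, Fintype.card_bool]
  ring

variable (heven : ∀ h ∈ H, Even (FreeGroup.norm h))
include heven

theorem All_eq_union (m : ℕ) : All H m = Up H m ∪ Dwn H m := by
  ext p
  simp only [All, Up, Dwn, Set.mem_setOf_eq, Set.mem_union]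
  constructor
  · intro h
    rcases cLen_act_gen H heven p.1 p.2 with h' | h'
    · exact Or.inl ⟨h, by omega⟩
    · exact Or.inr ⟨h, by omega⟩
  · rintro (⟨h, -⟩ | ⟨h, -⟩) <;> exact h

theorem Up_disj_Dwn (m : ℕ) : Disjoint (Up H m) (Dwn H m) := by
  rw [Set.disjoint_left]
  rintro p ⟨-, h1⟩ ⟨-, h2⟩
  omega

theorem Dwn_zero : Dwn H 0 = ∅ := by
  ext p
  simp only [Dwn, Set.mem_setOf_eq, Set.mem_empty_iff_false, iff_false]
  rintro ⟨-, h⟩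
  omega

theorem bij_dwn_up (m : ℕ) :
    Set.BijOn (fun p : Q H × (Fin r × Bool) => (act H p.1 (gen p.2), invx p.2))
      (Dwn H (m + 1)) (Up H m) := by
  refine ⟨?_, ?_, ?_⟩
  · rintro p ⟨h1, h2⟩
    constructor
    · show cLen H (act H p.1 (gen p.2)) = m
      omega
    show cLen H (act H (act H p.1 (gen p.2)) (gen (invx p.2))) = m + 1
    rw [act_gen_invx]
    exact h1
  · rintro p ⟨hp1, hp2⟩ q ⟨hq1, hq2⟩ h
    simp only [Prod.mk.injEq] at h
    obtain ⟨h1, h2⟩ := h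
    have h3 : p.2 = q.2 := by
      have h6 := congrArg invx h2
      simpa using h6
    have h4 : p.1 = q.1 := by
      have h5 := congrArg (fun c => act H c (gen (invx q.2))) h1
      rw [h3] at h5
      rw [act_gen_invx, act_gen_invx] at h5
      exact h5
    exact Prod.ext h4 h3
  · rintro q ⟨hq1, hq2⟩
    refine ⟨(act H q.1 (gen q.2), invx q.2), ⟨?_, ?_⟩, ?_⟩
    · show cLen H (act H q.1 (gen q.2)) = m + 1
      exact hq2
    · show cLen H (act H (act H q.1 (gen q.2)) (gen (invx q.2))) + 1 = m + 1
      rw [act_gen_invx]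
      omega
    · show (act H (act H q.1 (gen q.2)) (gen (invx q.2)), invx (invx q.2)) = q
      rw [act_gen_invx, invx_invx]

theorem bij_up_pe (n : ℕ) :
    Set.BijOn (fun p : Q H × (Fin r × Bool) =>
        if p.2.2 then (p.1, p.2.1) else (act H p.1 (gen p.2), p.2.1))
      (Up H n) (PE H (n + 1)) := by
  have hback : ∀ (c : Q H) (i : Fin r),
      act H (act H c (gen (i, false))) (gen (i, true)) = c := by
    intro c i
    have h := act_gen_invx H c (i, false)
    simpa [invx] using h
  have hback' : ∀ (c : Q H) (i : Fin r),
      act H (act H c (gen (i, true))) (gen (i, false)) = c := by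
    intro c i
    have h := act_gen_invx H c (i, true)
    simpa [invx] using h
  refine ⟨?_, ?_, ?_⟩
  · rintro ⟨c, i, b⟩ ⟨h1, h2⟩
    simp only at h1 h2
    cases b
    · simp only [Bool.false_eq_true, if_false]
      show cLen H (act H c (gen (i, false))) +
        cLen H (act H (act H c (gen (i, false))) (gen (i, true))) + 1 = 2 * (n + 1)
      rw [hback]
      omega
    · simp only [if_true]
      show cLen H c + cLen H (act H c (gen (i, true))) + 1 = 2 * (n + 1)
      omega
  · rintro ⟨c, i, b⟩ ⟨hp1, hp2⟩ ⟨c', i', b'⟩ ⟨hq1, hq2⟩ h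
    simp only at hp1 hp2 hq1 hq2 h
    cases b <;> cases b' <;>
      simp only [Bool.false_eq_true, if_false, if_true, Prod.mk.injEq] at h
    · obtain ⟨ha, hi⟩ := h
      subst hi
      have h5 := congrArg (fun d => act H d (gen (i, true))) ha
      rw [hback, hback] at h5
      rw [h5]
    · -- b = false, b' = true : impossible
      exfalso
      obtain ⟨ha, hi⟩ := h
      rw [← ha] at hq1
      rw [hq1] at hp2
      omega
    · exfalso
      obtain ⟨ha, hi⟩ := h
      rw [ha] at hp1
      rw [hp1] at hq2
      omega
    · obtain ⟨ha, hi⟩ := h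
      rw [ha, hi]
  · rintro ⟨d, i⟩ he
    have hsum : cLen H d + cLen H (act H d (gen (i, true))) + 1 = 2 * (n + 1) := he
    rcases cLen_act_gen H heven d (i, true) with hc | hc
    · refine ⟨(d, (i, true)), ⟨?_, ?_⟩, ?_⟩
      · show cLen H d = n
        omega
      · show cLen H (act H d (gen (i, true))) = n + 1
        omega
      · show (if true then ((d : Q H), i) else (act H d (gen (i, true)), i)) = (d, i)
        rw [if_pos rfl]
    · refine ⟨(act H d (gen (i, true)), (i, false)), ⟨?_, ?_⟩, ?_⟩
      · show cLen H (act H d (gen (i, true))) = n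
        omega
      · show cLen H (act H (act H d (gen (i, true))) (gen (i, false))) = n + 1
        rw [hback']
        omega
      · show (if false then (act H d (gen (i, true)), i)
            else ((act H (act H d (gen (i, true))) (gen (i, false)) : Q H), i)) = (d, i)
        rw [if_neg (by simp), hback']

omit heven in
theorem PE_zero : PE H 0 = ∅ := by
  ext e
  simp only [PE, Set.mem_setOf_eq, Set.mem_empty_iff_false, iff_false]
  omega

omit heven in
theorem triv_up (e : Q H × Fin r) (he : sig H e = 1) (d : Q H)
    (hact : act H e.1 (gen (e.2, true)) = d) (hlen : cLen H e.1 + 1 = cLen H d) :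
    (rep H d).toWord = (rep H e.1).toWord ++ [(e.2, true)] ∧
      e.1 = act H d (gen (e.2, false)) := by
  have hs : rep H e.1 * gen (e.2, true) = rep H d := by
    have := (sigx_eq_one_iff H e.1 (e.2, true)).1 he
    rw [hact] at this
    exact this
  constructor
  · rcases mul_gen_toWord (rep H e.1) (e.2, true) with h | h
    · rw [← hs]
      exact h
    · exfalso
      have h1 := congrArg List.length h
      rw [List.length_append, List.length_singleton] at h1
      have h2 : (rep H e.1).toWord.length = cLen H e.1 := norm_rep H e.1
      have h3 : (rep H e.1 * gen (e.2, true)).toWord.length = cLen H d := by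
        rw [hs]; exact norm_rep H d
      omega
  · have h4 := act_gen_invx H e.1 (e.2, true)
    simp only [invx] at h4
    rw [← hact]
    have : ((e.2 : Fin r), !true) = (e.2, false) := by simp
    rw [this] at h4
    exact h4.symm

omit heven in
theorem triv_down (e : Q H × Fin r) (he : sig H e = 1)
    (hlen : cLen H (act H e.1 (gen (e.2, true))) + 1 = cLen H e.1) :
    (rep H e.1).toWord = (rep H (act H e.1 (gen (e.2, true)))).toWord ++ [(e.2, false)] := by
  have hs : rep H e.1 * gen (e.2, true) = rep H (act H e.1 (gen (e.2, true))) :=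
    (sigx_eq_one_iff H e.1 (e.2, true)).1 he
  rcases mul_gen_toWord (rep H e.1) (e.2, true) with h | h
  · exfalso
    have h1 := congrArg List.length h
    rw [List.length_append, List.length_singleton] at h1
    have h2 : (rep H e.1).toWord.length = cLen H e.1 := norm_rep H e.1
    have h3 : (rep H e.1 * gen (e.2, true)).toWord.length
        = cLen H (act H e.1 (gen (e.2, true))) := by
      rw [hs]; exact norm_rep H _
    omega
  · rw [hs] at h
    have : invx ((e.2 : Fin r), true) = (e.2, false) := by simp [invx]
    rw [this] at h
    exact h

/-- the endpoint of larger length of a (trivial) edge -/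
def child (e : Q H × Fin r) : Q H :=
  if cLen H e.1 < cLen H (act H e.1 (gen (e.2, true))) then act H e.1 (gen (e.2, true))
  else e.1

theorem child_spec (n : ℕ) (e : Q H × Fin r) (he : e ∈ TE H (n + 1)) :
    child H e ∈ levN H (n + 1) ∧
      ∃ W y, (rep H (child H e)).toWord = W ++ [y] ∧ y.1 = e.2 ∧
        (y.2 = true → e.1 = act H (child H e) (gen (e.2, false))) ∧
        (y.2 = false → e.1 = child H e) := by
  obtain ⟨hpe, htriv⟩ := he
  have hsum : cLen H e.1 + cLen H (act H e.1 (gen (e.2, true))) + 1 = 2 * (n + 1) := hpe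
  rcases cLen_act_gen H heven e.1 (e.2, true) with hc | hc
  · -- up edge
    have hch : child H e = act H e.1 (gen (e.2, true)) := by
      rw [child, if_pos (by omega)]
    obtain ⟨hw, hb⟩ := triv_up H e htriv (act H e.1 (gen (e.2, true))) rfl (by omega)
    refine ⟨?_, (rep H e.1).toWord, (e.2, true), ?_, rfl, ?_, ?_⟩
    · show cLen H (child H e) = n + 1
      rw [hch]
      omega
    · rw [hch]
      exact hw
    · intro _
      rw [hch]
      exact hb
    · intro hfalse
      exact absurd hfalse (by simp)
  · -- down edge
    have hch : child H e = e.1 := by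
      rw [child, if_neg (by omega)]
    have hw := triv_down H e htriv (by omega)
    refine ⟨?_, (rep H (act H e.1 (gen (e.2, true)))).toWord, (e.2, false), ?_, rfl, ?_, ?_⟩
    · show cLen H (child H e) = n + 1
      rw [hch]
      omega
    · rw [hch]
      exact hw
    · intro htrue
      exact absurd htrue (by simp)
    · intro _
      rw [hch]

theorem bij_te_lev (n : ℕ) :
    Set.BijOn (child H) (TE H (n + 1)) (levN H (n + 1)) := by
  refine ⟨fun e he => (child_spec H heven n e he).1, ?_, ?_⟩
  · intro e he e' he' h
    obtain ⟨-, W, y, hW, hy1, hyt, hyf⟩ := child_spec H heven n e he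
    obtain ⟨-, W', y', hW', hy1', hyt', hyf'⟩ := child_spec H heven n e' he'
    rw [h] at hW
    have hWW : W = W' ∧ y = y' := by
      rw [hW] at hW'
      exact ⟨(List.append_inj' hW' (by simp)).1,
        List.singleton_injective (List.append_inj' hW' (by simp)).2⟩
    obtain ⟨-, rfl⟩ := hWW
    have h2 : e.2 = e'.2 := by rw [← hy1, ← hy1']
    have h1 : e.1 = e'.1 := by
      cases hyb : y.2
      · rw [hyf hyb, hyf' hyb, h]
      · rw [hyt hyb, hyt' hyb, h, h2]
    exact Prod.ext h1 h2
  · intro d hd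
    have hd1 : cLen H d = n + 1 := hd
    have hne : cLen H d ≠ 0 := by omega
    obtain ⟨hl, ha⟩ := parentD_spec H d hne
    have hdec := rep_decomp H d hne
    set p := (parentD H d hne).1 with hp
    set x := (parentD H d hne).2 with hx
    rcases hxe : x with ⟨i, b⟩
    cases b
    · -- letter is (i, false) : take the edge (d, i); child = d
      have hgen : gen ((i : Fin r), false) = (gen ((i : Fin r), true))⁻¹ := by
        rw [← gen_invx]
        simp [invx]
      have hactp : act H d (gen ((i : Fin r), true)) = p := by
        conv_lhs => rw [← ha, hxe]
        have h7 : gen ((i : Fin r), true) = gen (invx (i, false)) := by simp [invx]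
        rw [h7, act_gen_invx]
      refine ⟨(d, i), ⟨?_, ?_⟩, ?_⟩
      · show cLen H d + cLen H (act H d (gen ((i : Fin r), true))) + 1 = 2 * (n + 1)
        rw [hactp]
        omega
      · show sigx H d ((i : Fin r), true) = 1
        rw [sigx_eq_one_iff, hactp, hdec, hxe, hgen, mul_assoc, inv_mul_cancel, mul_one]
      · show child H (d, i) = d
        rw [child, if_neg]
        show ¬ cLen H d < cLen H (act H d (gen ((i : Fin r), true)))
        rw [hactp]
        omega
    · -- letter is (i, true) : take the edge (p, i); child = d
      have hactd : act H p (gen ((i : Fin r), true)) = d := by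
        rw [← hxe]
        exact ha
      refine ⟨(p, i), ⟨?_, ?_⟩, ?_⟩
      · show cLen H p + cLen H (act H p (gen ((i : Fin r), true))) + 1 = 2 * (n + 1)
        rw [hactd]
        omega
      · show sigx H p ((i : Fin r), true) = 1
        rw [sigx_eq_one_iff, hactd, ← hxe, ← hdec]
      · show child H (p, i) = d
        rw [child]
        have hlt : cLen H p < cLen H (act H p (gen ((i : Fin r), true))) := by
          rw [hactd]
          omega
        rw [if_pos hlt, hactd]

omit heven in
theorem read_sig_inv (e : Q H × Fin r) (he : e ∈ NT H) :
    read H ((sig H e)⁻¹) (base H) = (FreeGroup.of e)⁻¹ := by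
  have hmem : sig H e ∈ H := sigx_mem H e.1 (e.2, true)
  conv_lhs => rw [show base H = act H (base H) (sig H e) from (act_base_of_mem H hmem).symm]
  rw [read_inv, read_sig H e he]

omit heven in
theorem sig_injOn_NT : Set.InjOn (sig H) (NT H) := by
  intro e he e' he' h
  apply FreeGroup.of_injective
  rw [← read_sig H e he, ← read_sig H e' he', h]

omit heven in
theorem sig_ne_inv (e : Q H × Fin r) (he : e ∈ NT H) (e' : Q H × Fin r) (he' : e' ∈ NT H) :
    sig H e ≠ (sig H e')⁻¹ := by
  classical
  intro h
  have h1 := congrArg (fun g => read H g (base H)) h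
  rw [read_sig H e he, read_sig_inv H e' he'] at h1
  have h2 : (FreeGroup.of e')⁻¹ = gen (e', false) := by
    rw [of_eq_gen, ← gen_invx]
    simp [invx]
  rw [h2, of_eq_gen] at h1
  have h3 := congrArg FreeGroup.toWord h1
  rw [toWord_gen, toWord_gen] at h3
  simp at h3

omit heven in
theorem mem_SB_iff (g : FreeGroup (Fin r)) :
    g ∈ SS H ∪ (SS H)⁻¹ ↔
      (∃ e ∈ NT H, sig H e = g) ∨ (∃ e ∈ NT H, (sig H e)⁻¹ = g) := by
  rw [Set.mem_union, Set.mem_inv]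
  constructor
  · rintro (⟨e, he, rfl⟩ | h)
    · exact Or.inl ⟨e, he, rfl⟩
    · obtain ⟨e, he, hh⟩ := h
      exact Or.inr ⟨e, he, by rw [hh, inv_inv]⟩
  · rintro (⟨e, he, rfl⟩ | ⟨e, he, rfl⟩)
    · exact Or.inl ⟨e, he, rfl⟩
    · exact Or.inr ⟨e, he, by rw [inv_inv]⟩

theorem norm_mem_SB {g : FreeGroup (Fin r)} (hg : g ∈ SS H ∪ (SS H)⁻¹) :
    ∃ n : ℕ, 1 ≤ n ∧ FreeGroup.norm g = 2 * n := by
  have key : ∀ e ∈ NT H, ∃ n : ℕ, 1 ≤ n ∧ FreeGroup.norm (sig H e) = 2 * n := by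
    intro e he
    have h1 : FreeGroup.norm (sig H e)
        = cLen H e.1 + cLen H (act H e.1 (gen (e.2, true))) + 1 :=
      norm_sigx H e.1 (e.2, true) he
    rcases cLen_act_gen H heven e.1 (e.2, true) with hc | hc
    · exact ⟨cLen H e.1 + 1, by omega, by omega⟩
    · exact ⟨cLen H (act H e.1 (gen (e.2, true))) + 1, by omega, by omega⟩
  rcases (mem_SB_iff H g).1 hg with ⟨e, he, rfl⟩ | ⟨e, he, rfl⟩
  · exact key e he
  · rw [FreeGroup.norm_inv_eq]
    exact key e he

theorem norm_sig_of_NE (n : ℕ) (e : Q H × Fin r) (he : e ∈ NE H n) :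
    FreeGroup.norm (sig H e) = 2 * n := by
  obtain ⟨hpe, hne⟩ := he
  rw [sig, norm_sigx H e.1 (e.2, true) hne]
  exact hpe

omit heven in
theorem NE_subset_NT (n : ℕ) : NE H n ⊆ NT H := fun e he => he.2

theorem SB_level (n : ℕ) :
    {g | g ∈ SS H ∪ (SS H)⁻¹ ∧ FreeGroup.norm g = 2 * n}
      = sig H '' NE H n ∪ (fun g => g⁻¹) '' (sig H '' NE H n) := by
  ext g
  simp only [Set.mem_setOf_eq, Set.mem_union, Set.mem_image]
  constructor
  · rintro ⟨hmem, hnorm⟩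
    rcases (mem_SB_iff H g).1 hmem with ⟨e, he, rfl⟩ | ⟨e, he, rfl⟩
    · left
      refine ⟨e, ⟨?_, he⟩, rfl⟩
      show cLen H e.1 + cLen H (act H e.1 (gen (e.2, true))) + 1 = 2 * n
      rw [← norm_sigx H e.1 (e.2, true) he]
      exact hnorm
    · right
      refine ⟨sig H e, ⟨e, ⟨?_, he⟩, rfl⟩, rfl⟩
      show cLen H e.1 + cLen H (act H e.1 (gen (e.2, true))) + 1 = 2 * n
      rw [← norm_sigx H e.1 (e.2, true) he]
      rw [← FreeGroup.norm_inv_eq]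
      exact hnorm
  · rintro (⟨e, he, rfl⟩ | ⟨g', ⟨e, he, rfl⟩, rfl⟩)
    · refine ⟨(mem_SB_iff H _).2 (Or.inl ⟨e, he.2, rfl⟩), norm_sig_of_NE H heven n e he⟩
    · refine ⟨(mem_SB_iff H _).2 (Or.inr ⟨e, he.2, rfl⟩), ?_⟩
      rw [FreeGroup.norm_inv_eq]
      exact norm_sig_of_NE H heven n e he

theorem PE_finite (n : ℕ) : (PE H n).Finite := by
  cases n with
  | zero => rw [PE_zero H]; exact Set.finite_empty
  | succ k =>
    rw [← (bij_up_pe H heven k).image_eq]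
    exact (Up_finite H k).image _

theorem NE_finite (n : ℕ) : (NE H n).Finite :=
  (PE_finite H heven n).subset fun e he => he.1

theorem TE_finite (n : ℕ) : (TE H n).Finite :=
  (PE_finite H heven n).subset fun e he => he.1

theorem SB_level_finite (n : ℕ) :
    {g | g ∈ SS H ∪ (SS H)⁻¹ ∧ FreeGroup.norm g = 2 * n}.Finite := by
  rw [SB_level H heven n]
  exact (((NE_finite H heven n).image _)).union (((NE_finite H heven n).image _).image _)

theorem SB_level_ncard (n : ℕ) :
    {g | g ∈ SS H ∪ (SS H)⁻¹ ∧ FreeGroup.norm g = 2 * n}.ncard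
      = 2 * (NE H n).ncard := by
  rw [SB_level H heven n]
  have hfin : (sig H '' NE H n).Finite := (NE_finite H heven n).image _
  have hdisj : Disjoint (sig H '' NE H n) ((fun g => g⁻¹) '' (sig H '' NE H n)) := by
    rw [Set.disjoint_left]
    rintro g ⟨e, he, rfl⟩ ⟨g', ⟨e', he', rfl⟩, hgg⟩
    exact sig_ne_inv H e (he.2) e' (he'.2) hgg.symm
  rw [Set.ncard_union_eq hdisj hfin (hfin.image _)]
  rw [Set.ncard_image_of_injective _ inv_injective]
  rw [Set.ncard_image_of_injOn ((sig_injOn_NT H).mono (NE_subset_NT H n))]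
  omega

end Count

section Final

variable {r : ℕ} (H : Subgroup (FreeGroup (Fin r)))
variable (heven : ∀ h ∈ H, Even (FreeGroup.norm h))
include heven

theorem pe_card (n : ℕ) : (PE H (n + 1)).ncard = (Up H n).ncard := by
  rw [← (bij_up_pe H heven n).image_eq,
    Set.ncard_image_of_injOn (bij_up_pe H heven n).injOn]

theorem dwn_card (m : ℕ) : (Dwn H (m + 1)).ncard = (Up H m).ncard := by
  rw [← (bij_dwn_up H heven m).image_eq,
    Set.ncard_image_of_injOn (bij_dwn_up H heven m).injOn]

theorem te_card (n : ℕ) : (TE H (n + 1)).ncard = (levN H (n + 1)).ncard := by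
  rw [← (bij_te_lev H heven n).image_eq,
    Set.ncard_image_of_injOn (bij_te_lev H heven n).injOn]

theorem pe_split (n : ℕ) : (PE H n).ncard = (TE H n).ncard + (NE H n).ncard := by
  have hu : PE H n = TE H n ∪ NE H n := by
    ext e
    simp only [TE, NE, Set.mem_union, Set.mem_setOf_eq]
    by_cases h : sig H e = 1 <;> tauto
  have hdisj : Disjoint (TE H n) (NE H n) := by
    rw [Set.disjoint_left]
    rintro e ⟨-, h1⟩ ⟨-, h2⟩
    exact h2 h1
  rw [hu, Set.ncard_union_eq hdisj (TE_finite H heven n) (NE_finite H heven n)]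

theorem all_split (m : ℕ) :
    (Up H m).ncard + (Dwn H m).ncard = (levN H m).ncard * (2 * r) := by
  rw [← Set.ncard_union_eq (Up_disj_Dwn H heven m) (Up_finite H m) (Dwn_finite H m),
    ← All_eq_union H heven m, All_ncard]

theorem v_zero : (levN H 0).ncard = 1 := by
  rw [levN_zero]
  exact Set.ncard_singleton _

theorem u_zero : (Up H 0).ncard = 2 * r := by
  have h1 := all_split H heven 0
  have h2 : (Dwn H 0).ncard = 0 := by rw [Dwn_zero H heven]; exact Set.ncard_empty _
  have h3 := v_zero H heven
  rw [h2, h3] at h1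
  omega

theorem ne_card (n : ℕ) :
    (NE H (n + 1)).ncard + (levN H (n + 1)).ncard = (Up H n).ncard := by
  have h1 := pe_split H heven (n + 1)
  have h2 := te_card H heven n
  have h3 := pe_card H heven n
  omega

theorem u_rec (n : ℕ) :
    (Up H (n + 1)).ncard + (Up H n).ncard = (levN H (n + 1)).ncard * (2 * r) := by
  have h1 := all_split H heven (n + 1)
  have h2 := dwn_card H heven n
  omega

theorem SB_level_odd (m : ℕ) (hodd : Odd m) :
    {g | g ∈ SS H ∪ (SS H)⁻¹ ∧ FreeGroup.norm g = m} = ∅ := by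
  ext g
  simp only [Set.mem_setOf_eq, Set.mem_empty_iff_false, iff_false]
  rintro ⟨hmem, hnorm⟩
  obtain ⟨n, -, hn⟩ := norm_mem_SB H heven hmem
  rw [hnorm] at hn
  obtain ⟨k, hk⟩ := hodd
  omega

end Final

end SchreierAux


open SchreierAux in
/-- Schreier formula for an *even* subgroup `H` of a free group of rank `r ≥ 1`
(every element of `H` has even reduced length): there is a symmetric free basis
`B = S ∪ S⁻¹` of `H` with `b(m) = 0` for odd `m`, `b(2) = 4r − 2 v(1)`, and
`b(2n) + b(2n+2) = 2((2r−1) v(n) − v(n+1))` for `n ≥ 1`; equivalently, with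
`d(n) = b(2n)/2`, one has `Ĥ(B,t) = (2rt/(t+1) − 1)·H(F/H,t) + 1`, so the Hilbert
series of the free generators is recovered from that of `F/H`. -/
theorem schreier_even_subgroup (r : ℕ) (hr : 1 ≤ r) (H : Subgroup (FreeGroup (Fin r)))
    (heven : ∀ h ∈ H, Even (FreeGroup.norm h)) :
    (∀ n : ℕ, {c : Quotient (QuotientGroup.rightRel H) | cosetLen H c = n}.Finite) ∧
    ∃ S : Set (FreeGroup (Fin r)),
      Function.Injective (FreeGroup.lift (fun s : S => (s : FreeGroup (Fin r)))) ∧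
      MonoidHom.range (FreeGroup.lift (fun s : S => (s : FreeGroup (Fin r)))) = H ∧
      (∀ m : ℕ, {g ∈ S ∪ S⁻¹ | FreeGroup.norm g = m}.Finite) ∧
      (∀ m : ℕ, Odd m → {g ∈ S ∪ S⁻¹ | FreeGroup.norm g = m}.ncard = 0) ∧
      (({g ∈ S ∪ S⁻¹ | FreeGroup.norm g = 2}.ncard : ℤ)
        = 4 * (r : ℤ)
          - 2 * ({c : Quotient (QuotientGroup.rightRel H) | cosetLen H c = 1}.ncard : ℤ)) ∧
      (∀ n : ℕ, 1 ≤ n →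
        (({g ∈ S ∪ S⁻¹ | FreeGroup.norm g = 2 * n}.ncard : ℤ)
          + ({g ∈ S ∪ S⁻¹ | FreeGroup.norm g = 2 * n + 2}.ncard : ℤ))
          = 2 * ((2 * (r : ℤ) - 1)
                  * ({c : Quotient (QuotientGroup.rightRel H) | cosetLen H c = n}.ncard : ℤ)
                - ({c : Quotient (QuotientGroup.rightRel H) | cosetLen H c = n + 1}.ncard : ℤ))) := by
  have hlev : ∀ n : ℕ,
      {c : Quotient (QuotientGroup.rightRel H) | cosetLen H c = n} = levN H n :=
    fun _ => rfl
  constructor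
  · intro n
    rw [hlev n]
    exact levN_finite H n
  refine ⟨SS H, Phi_injective H, Phi_range H, ?_, ?_, ?_, ?_⟩
  · intro m
    rcases Nat.even_or_odd m with he | ho
    · obtain ⟨k, hk⟩ := he
      have hm : m = 2 * k := by omega
      rw [hm]
      exact SB_level_finite H heven k
    · rw [SB_level_odd H heven m ho]
      exact Set.finite_empty
  · intro m ho
    rw [SB_level_odd H heven m ho]
    exact Set.ncard_empty _
  · have hs : {g | g ∈ SS H ∪ (SS H)⁻¹ ∧ FreeGroup.norm g = 2}
        = {g | g ∈ SS H ∪ (SS H)⁻¹ ∧ FreeGroup.norm g = 2 * 1} := by norm_num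
    rw [hs, SB_level_ncard H heven 1, hlev 1]
    have hC := ne_card H heven 0
    have hu := u_zero H heven
    simp only [Nat.zero_add] at hC
    omega
  · intro n hn
    obtain ⟨k, rfl⟩ : ∃ k, n = k + 1 := ⟨n - 1, by omega⟩
    rw [show 2 * (k + 1) + 2 = 2 * (k + 1 + 1) from by ring]
    rw [SB_level_ncard H heven (k + 1), SB_level_ncard H heven (k + 1 + 1),
      hlev (k + 1), hlev (k + 1 + 1)]
    have hC := ne_card H heven k
    have hD := ne_card H heven (k + 1)
    have hE := u_rec H heven k
    zify at hC hD hE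
    push_cast
    linear_combination 2 * hC + 2 * hD + 2 * hE
end
end

section
/- Let Φ be a field and R = Φ⟨x_1,…,x_r⟩ the free associative algebra of finite rank r ≥ 1 over Φ. Let M be a finitely presented right R-module, i.e. M = F/N where F is a free right R-module of finite rank and N is a finitely generated submodule. Then M has a submodule L of finite codimension (dim_Φ(M/L) < ∞) which is a free R-module. -/
noncomputable section

open MulOpposite

namespace LewinAux

variable {r p : ℕ}

open Function Submodule


/-- positional numeration code of a word -/
def wcode : List (Fin r) → ℕ
  | [] => 0
  | a :: w => 1 + a + r * wcode w

lemma wcode_injective : Function.Injective (wcode (r := r)) := by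
  intro w
  induction w with
  | nil =>
    intro v h
    cases v with
    | nil => rfl
    | cons b v => simp only [wcode] at h; omega
  | cons a w ih =>
    intro v h
    cases v with
    | nil => simp only [wcode] at h; omega
    | cons b v =>
      simp only [wcode] at h
      have h' : (a : ℕ) + r * wcode w = (b : ℕ) + r * wcode v := by omega
      have hab : (a : ℕ) = b := by
        have := congrArg (· % r) h'
        simpa [Nat.add_mul_mod_self_left, Nat.mod_eq_of_lt a.isLt,
          Nat.mod_eq_of_lt b.isLt] using this
      have hwv : wcode w = wcode v := by
        have h2 : r * wcode w = r * wcode v := by omega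
        exact Nat.eq_of_mul_eq_mul_left a.pos h2
      rw [Fin.ext_iff.mpr hab, ih hwv]

lemma wcode_prepend_lt (v : List (Fin r)) {w w' : List (Fin r)}
    (h : wcode w < wcode w') : wcode (v ++ w) < wcode (v ++ w') := by
  induction v with
  | nil => exact h
  | cons a v ih =>
    have h2 : r * wcode (v ++ w) < r * wcode (v ++ w') :=
      Nat.mul_lt_mul_of_pos_left ih a.pos
    simpa [wcode, List.cons_append] using Nat.add_lt_add_left h2 (1 + (a : ℕ))

/-- rank of a monomial (basis index, word) -/
def rank (m : Fin p × List (Fin r)) : ℕ := wcode m.2 * p + m.1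

lemma rank_injective : Function.Injective (rank (r := r) (p := p)) := by
  rintro ⟨i, w⟩ ⟨j, v⟩ h
  simp only [rank] at h
  have hi := i.isLt
  have hj := j.isLt
  have hw : wcode w = wcode v := by
    rcases lt_trichotomy (wcode w) (wcode v) with hlt | he | hgt
    · have h2 : (wcode w + 1) * p ≤ wcode v * p := Nat.mul_le_mul_right p hlt
      rw [add_mul, one_mul] at h2
      omega
    · exact he
    · have h2 : (wcode v + 1) * p ≤ wcode w * p := Nat.mul_le_mul_right p hgt
      rw [add_mul, one_mul] at h2
      omega
  have hwv : w = v := wcode_injective hw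
  subst hwv
  have : (i : ℕ) = j := by omega
  exact Prod.ext (Fin.ext this) rfl

/-- extension of a monomial by a word on the left -/
def ext (v : List (Fin r)) (m : Fin p × List (Fin r)) : Fin p × List (Fin r) :=
  (m.1, v ++ m.2)

lemma ext_injective (v : List (Fin r)) :
    Function.Injective (ext (p := p) v) := by
  rintro ⟨i, w⟩ ⟨j, w'⟩ h
  simp only [ext, Prod.mk.injEq] at h
  exact Prod.ext h.1 (List.append_cancel_left h.2)

lemma ext_ext (v u : List (Fin r)) (m : Fin p × List (Fin r)) :
    ext v (ext u m) = ext (v ++ u) m := by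
  simp [ext, List.append_assoc]

lemma rank_ext_lt (v : List (Fin r)) {m m' : Fin p × List (Fin r)}
    (h : rank m < rank m') : rank (ext v m) < rank (ext v m') := by
  obtain ⟨i, w⟩ := m
  obtain ⟨j, w'⟩ := m'
  simp only [rank, ext] at h ⊢
  have hi := i.isLt
  have hj := j.isLt
  rcases lt_trichotomy (wcode w) (wcode w') with hlt | he | hgt
  · have h1 : wcode (v ++ w) < wcode (v ++ w') := wcode_prepend_lt v hlt
    have h2 : (wcode (v ++ w) + 1) * p ≤ wcode (v ++ w') * p := Nat.mul_le_mul_right p h1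
    rw [add_mul, one_mul] at h2
    omega
  · have hwv : w = w' := wcode_injective he
    subst hwv
    omega
  · have h2 : (wcode w' + 1) * p ≤ wcode w * p := Nat.mul_le_mul_right p hgt
    rw [add_mul, one_mul] at h2
    omega

lemma rank_ext_le (v : List (Fin r)) {m m' : Fin p × List (Fin r)}
    (h : rank m ≤ rank m') : rank (ext v m) ≤ rank (ext v m') := by
  rcases eq_or_lt_of_le h with he | hlt
  · rw [rank_injective he]
  · exact le_of_lt (rank_ext_lt v hlt)

/-- the maximal element of a nonempty finset of monomials w.r.t. `rank` -/
def LMs (s : Finset (Fin p × List (Fin r))) (h : s.Nonempty) : Fin p × List (Fin r) :=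
  s.choose (fun m => ∀ m' ∈ s, rank m' ≤ rank m) (by
    obtain ⟨m, hm, hmax⟩ := s.exists_max_image rank h
    refine ⟨m, ⟨hm, hmax⟩, ?_⟩
    rintro m' ⟨hm', hmax'⟩
    exact rank_injective (le_antisymm (hmax m' hm') (hmax' m hm)))

lemma LMs_mem (s : Finset (Fin p × List (Fin r))) (h : s.Nonempty) : LMs s h ∈ s :=
  Finset.choose_mem _ _ _

lemma LMs_max (s : Finset (Fin p × List (Fin r))) (h : s.Nonempty) :
    ∀ m' ∈ s, rank m' ≤ rank (LMs s h) :=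
  Finset.choose_property (fun m => ∀ m' ∈ s, rank m' ≤ rank m) _ _

lemma LMs_eq_of (s : Finset (Fin p × List (Fin r))) (h : s.Nonempty)
    {m : Fin p × List (Fin r)} (hm : m ∈ s) (hub : ∀ m' ∈ s, rank m' ≤ rank m) :
    LMs s h = m :=
  rank_injective (le_antisymm (hub _ (LMs_mem s h)) (LMs_max s h m hm))


section ModuleLayer

variable {Φ T : Type} [Field Φ] [Ring T] [Algebra Φ T]
variable (bb : Module.Basis (List (Fin r)) Φ T)

/-- the standard `Φ`-basis of `Fin p → T` indexed by monomials -/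
def BB : Module.Basis (Fin p × List (Fin r)) Φ (Fin p → T) :=
  (Pi.basis fun _ : Fin p => bb).reindex (Equiv.sigmaEquivProd (Fin p) (List (Fin r)))

lemma BB_apply (m : Fin p × List (Fin r)) : BB bb m = Pi.single m.1 (bb m.2) := by
  obtain ⟨i, w⟩ := m
  rw [BB, Module.Basis.reindex_apply]
  exact Pi.basis_apply _ _


lemma smul_BB (hmul : ∀ v w : List (Fin r), bb v * bb w = bb (v ++ w)) (v : List (Fin r)) (m : Fin p × List (Fin r)) :
    bb v • BB bb m = BB bb (ext v m) := by
  rw [BB_apply, BB_apply]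
  ext j
  rcases eq_or_ne j m.1 with rfl | hj
  · simp [ext, Pi.single_eq_same, smul_eq_mul, hmul]
  · simp [ext, Pi.single_eq_of_ne hj, smul_eq_mul]

lemma repr_smul (hmul : ∀ v w : List (Fin r), bb v * bb w = bb (v ++ w)) (v : List (Fin r)) (f : Fin p → T) :
    (BB bb).repr (bb v • f) = Finsupp.mapDomain (ext v) ((BB bb).repr f) := by
  let sm : (Fin p → T) →ₗ[Φ] (Fin p → T) :=
    { toFun := fun f => bb v • f
      map_add' := fun x y => smul_add _ x y
      map_smul' := fun c x => (smul_comm (bb v) c x) }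
  let lhs : (Fin p → T) →ₗ[Φ] ((Fin p × List (Fin r)) →₀ Φ) :=
    ((BB bb).repr.toLinearMap).comp sm
  let rhs : (Fin p → T) →ₗ[Φ] ((Fin p × List (Fin r)) →₀ Φ) :=
    (Finsupp.lmapDomain Φ Φ (ext v)).comp (BB bb).repr.toLinearMap
  have heq : lhs = rhs := by
    apply Module.Basis.ext (BB bb)
    intro m
    simp only [lhs, rhs, sm, LinearMap.coe_comp, Function.comp_apply, LinearMap.coe_mk,
      AddHom.coe_mk, LinearEquiv.coe_toLinearMap, Finsupp.lmapDomain_apply]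
    rw [smul_BB bb hmul, Module.Basis.repr_self, Module.Basis.repr_self, Finsupp.mapDomain_single]
  exact LinearMap.congr_fun heq f

lemma repr_smul_apply (hmul : ∀ v w : List (Fin r), bb v * bb w = bb (v ++ w)) (v : List (Fin r)) (f : Fin p → T) (m : Fin p × List (Fin r)) :
    (BB bb).repr (bb v • f) (ext v m) = (BB bb).repr f m := by
  rw [repr_smul bb hmul]
  exact Finsupp.mapDomain_apply (ext_injective v) _ _

lemma support_repr_smul (hmul : ∀ v w : List (Fin r), bb v * bb w = bb (v ++ w)) (v : List (Fin r)) (f : Fin p → T) :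
    ((BB bb).repr (bb v • f)).support = ((BB bb).repr f).support.image (ext v) := by
  classical
  rw [repr_smul bb hmul]
  exact Finsupp.mapDomain_support_of_injective (ext_injective v) _

variable (hp : 0 < p)

/-- leading monomial  -/
def LM (f : Fin p → T) : Fin p × List (Fin r) :=
  if h : ((BB bb).repr f).support.Nonempty then LMs _ h else (⟨0, hp⟩, [])

lemma supp_nonempty {f : Fin p → T} (hf : f ≠ 0) : ((BB bb).repr f).support.Nonempty := by
  rw [Finsupp.support_nonempty_iff]
  intro h0
  exact hf ((LinearEquiv.map_eq_zero_iff (BB bb).repr).mp h0)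

lemma LM_mem {f : Fin p → T} (hf : f ≠ 0) : LM bb hp f ∈ ((BB bb).repr f).support := by
  rw [LM, dif_pos (supp_nonempty bb hf)]; exact LMs_mem _ _

lemma coeff_LM_ne {f : Fin p → T} (hf : f ≠ 0) : (BB bb).repr f (LM bb hp f) ≠ 0 :=
  Finsupp.mem_support_iff.mp (LM_mem bb hp hf)

lemma rank_le_LM {f : Fin p → T} {m : Fin p × List (Fin r)}
    (hm : m ∈ ((BB bb).repr f).support) : rank m ≤ rank (LM bb hp f) := by
  have h : ((BB bb).repr f).support.Nonempty := ⟨m, hm⟩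
  rw [LM, dif_pos h]; exact LMs_max _ h m hm

lemma LM_eq_of {f : Fin p → T} {m : Fin p × List (Fin r)}
    (hm : m ∈ ((BB bb).repr f).support)
    (hub : ∀ m' ∈ ((BB bb).repr f).support, rank m' ≤ rank m) : LM bb hp f = m := by
  have h : ((BB bb).repr f).support.Nonempty := ⟨m, hm⟩
  rw [LM, dif_pos h]; exact LMs_eq_of _ h hm hub

lemma smul_bb_ne_zero (hmul : ∀ v w : List (Fin r), bb v * bb w = bb (v ++ w)) {f : Fin p → T} (hf : f ≠ 0) (v : List (Fin r)) : bb v • f ≠ 0 := by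
  intro h0
  obtain ⟨m, hm⟩ := supp_nonempty bb hf
  have hmem : ext v m ∈ ((BB bb).repr (bb v • f)).support := by
    rw [support_repr_smul bb hmul]
    exact Finset.mem_image_of_mem _ hm
  rw [h0] at hmem
  simp at hmem

lemma LM_smul (hmul : ∀ v w : List (Fin r), bb v * bb w = bb (v ++ w)) {f : Fin p → T} (hf : f ≠ 0) (v : List (Fin r)) :
    LM bb hp (bb v • f) = ext v (LM bb hp f) := by
  apply LM_eq_of
  · rw [support_repr_smul bb hmul]
    exact Finset.mem_image_of_mem _ (LM_mem bb hp hf)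
  · intro m' hm'
    rw [support_repr_smul bb hmul] at hm'
    obtain ⟨m, hm, rfl⟩ := Finset.mem_image.mp hm'
    exact rank_ext_le v (rank_le_LM bb hp hm)

end ModuleLayer
section Reduction

variable {Φ T : Type} [Field Φ] [Ring T] [Algebra Φ T]
variable (bb : Module.Basis (List (Fin r)) Φ T) (hp : 0 < p)

lemma sub_reduce {x y : Fin p → T} (hx : x ≠ 0) (hy : y ≠ 0)
    (hLM : LM bb hp x = LM bb hp y) :
    ∀ m ∈ ((BB bb).repr
      (x - ((BB bb).repr x (LM bb hp x) / (BB bb).repr y (LM bb hp y)) • y)).support,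
      rank m < rank (LM bb hp x) := by
  intro m hm
  set c : Φ := (BB bb).repr x (LM bb hp x) / (BB bb).repr y (LM bb hp y) with hc
  have hrepr : (BB bb).repr (x - c • y) = (BB bb).repr x - c • (BB bb).repr y := by
    rw [map_sub, map_smul]
  have hne : (BB bb).repr x m - c * (BB bb).repr y m ≠ 0 := by
    have := Finsupp.mem_support_iff.mp hm
    rw [hrepr] at this
    simpa using this
  have hmne : m ≠ LM bb hp x := by
    rintro rfl
    apply hne
    rw [hc, hLM, div_mul_cancel₀ _ (coeff_LM_ne bb hp hy), sub_self]
  have hle : rank m ≤ rank (LM bb hp x) := by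
    rcases ne_or_eq ((BB bb).repr x m) 0 with h1 | h1
    · exact rank_le_LM bb hp (Finsupp.mem_support_iff.mpr h1)
    · have h2 : (BB bb).repr y m ≠ 0 := by
        intro h2; apply hne; rw [h1, h2]; ring
      rw [hLM]
      exact rank_le_LM bb hp (Finsupp.mem_support_iff.mpr h2)
  exact lt_of_le_of_ne hle fun h => hmne (rank_injective h)

open Submodule in
lemma LM_mem_span {S : Set (Fin p → T)} (h0 : (0 : Fin p → T) ∉ S)
    (hd : ∀ x ∈ S, ∀ y ∈ S, LM bb hp x = LM bb hp y → x = y)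
    {f : Fin p → T} (hf : f ∈ span Φ S) (hf0 : f ≠ 0) :
    ∃ x ∈ S, LM bb hp f = LM bb hp x := by
  classical
  obtain ⟨c, hcs, rfl⟩ := mem_span_set.mp hf
  set s := c.support with hs
  have hsne : s.Nonempty := by
    rcases Finset.eq_empty_or_nonempty s with he | h
    · exfalso
      apply hf0
      rw [Finsupp.sum, ← hs, he, Finset.sum_empty]
    · exact h
  obtain ⟨x₀, hx₀s, hmax⟩ := s.exists_max_image (fun x => rank (LM bb hp x)) hsne
  have hx₀S : x₀ ∈ S := hcs hx₀s
  have hx0ne : ∀ x ∈ s, x ≠ (0 : Fin p → T) := fun x hx h0' => h0 (h0' ▸ hcs hx)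
  refine ⟨x₀, hx₀S, ?_⟩
  have hreprf : (BB bb).repr (c.sum fun mi r => r • mi)
      = ∑ x ∈ s, c x • (BB bb).repr x := by
    rw [Finsupp.sum, map_sum]
    simp [hs]
  have hcoef : ∀ x ∈ s, x ≠ x₀ → (BB bb).repr x (LM bb hp x₀) = 0 := by
    intro x hx hne
    by_contra hcc
    have hmem : LM bb hp x₀ ∈ ((BB bb).repr x).support := Finsupp.mem_support_iff.mpr hcc
    have h1 : rank (LM bb hp x₀) ≤ rank (LM bb hp x) := rank_le_LM bb hp hmem
    have h2 : rank (LM bb hp x) ≤ rank (LM bb hp x₀) := hmax x hx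
    exact hne (hd x (hcs hx) x₀ hx₀S (rank_injective (le_antisymm h2 h1)))
  have hfcoef : (BB bb).repr (c.sum fun mi r => r • mi) (LM bb hp x₀)
      = c x₀ * (BB bb).repr x₀ (LM bb hp x₀) := by
    rw [hreprf, Finset.sum_apply']
    rw [Finset.sum_eq_single x₀]
    · simp
    · intro x hx hne
      simp [hcoef x hx hne]
    · intro h; exact absurd hx₀s h
  have hfne0 : (BB bb).repr (c.sum fun mi r => r • mi) (LM bb hp x₀) ≠ 0 := by
    rw [hfcoef]
    exact mul_ne_zero (Finsupp.mem_support_iff.mp hx₀s) (coeff_LM_ne bb hp (hx0ne x₀ hx₀s))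
  apply LM_eq_of
  · exact Finsupp.mem_support_iff.mpr hfne0
  · intro m' hm'
    have hm'ne := Finsupp.mem_support_iff.mp hm'
    have hex : ∃ x ∈ s, (BB bb).repr x m' ≠ 0 := by
      by_contra hall
      push_neg at hall
      apply hm'ne
      rw [hreprf, Finset.sum_apply']
      refine Finset.sum_eq_zero fun x hx => ?_
      simp [hall x hx]
    obtain ⟨x, hx, hxm⟩ := hex
    calc rank m' ≤ rank (LM bb hp x) := rank_le_LM bb hp (Finsupp.mem_support_iff.mpr hxm)
      _ ≤ rank (LM bb hp x₀) := hmax x hx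

open Submodule in
lemma span_T_le (hone : bb [] = 1)
    (hmul : ∀ v w : List (Fin r), bb v * bb w = bb (v ++ w)) (G : Set (Fin p → T)) :
    (span T G : Set (Fin p → T))
      ⊆ (span Φ {x | ∃ g ∈ G, ∃ v, x = bb v • g} : Set (Fin p → T)) := by
  intro x hx
  set U := {x | ∃ g ∈ G, ∃ v : List (Fin r), x = bb v • g} with hU
  have key : ∀ v : List (Fin r), ∀ y ∈ span Φ U, bb v • y ∈ span Φ U := by
    intro v y hy
    refine Submodule.span_induction ?_ ?_ ?_ ?_ hy
    · rintro z ⟨g, hg, v', rfl⟩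
      refine Submodule.subset_span ⟨g, hg, v ++ v', ?_⟩
      rw [smul_smul, hmul]
    · simp
    · intro a b _ _ ha hb; rw [smul_add]; exact add_mem ha hb
    · intro a z _ hz
      rw [smul_comm]
      exact Submodule.smul_mem _ a hz
  have tstab : ∀ t : T, ∀ y ∈ span Φ U, t • y ∈ span Φ U := by
    intro t y hy
    have ht : t = ((bb.repr t).sum fun v c => c • bb v) := by
      conv_lhs => rw [← bb.linearCombination_repr t]
      rw [Finsupp.linearCombination_apply]
    rw [ht, Finsupp.sum, Finset.sum_smul]
    refine Submodule.sum_mem _ fun v hv => ?_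
    rw [smul_assoc]
    exact Submodule.smul_mem _ _ (key v y hy)
  refine Submodule.span_induction ?_ ?_ ?_ ?_ hx
  · intro g hg
    refine Submodule.subset_span ⟨g, hg, [], ?_⟩
    rw [hone, one_smul]
  · exact zero_mem _
  · intro a b _ _ ha hb; exact add_mem ha hb
  · intro t z _ hz; exact tstab t z hz

end Reduction
section Cleaning

variable {Φ T : Type} [Field Φ] [Ring T] [Algebra Φ T]
variable (bb : Module.Basis (List (Fin r)) Φ T) (hp : 0 < p)

open Submodule in
lemma exists_reduced (hmul : ∀ v w : List (Fin r), bb v * bb w = bb (v ++ w))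
    (N : Submodule T (Fin p → T)) (hN : N.FG) :
    ∃ G : Finset (Fin p → T), (↑G ⊆ (N : Set (Fin p → T))) ∧
      span T (G : Set (Fin p → T)) = N ∧ (0 : Fin p → T) ∉ G ∧
      (∀ g ∈ G, ∀ g' ∈ G, ∀ v, LM bb hp g' = ext v (LM bb hp g) → g = g') := by
  classical
  have main : ∀ n : ℕ, ∀ G : Finset (Fin p → T), (0 : Fin p → T) ∉ G →
      (∑ g ∈ G, (rank (LM bb hp g) + 1)) ≤ n →
      ∃ G' : Finset (Fin p → T),
        (↑G' ⊆ (span T (G : Set (Fin p → T)) : Set (Fin p → T))) ∧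
        span T (G' : Set (Fin p → T)) = span T (G : Set (Fin p → T)) ∧
        (0 : Fin p → T) ∉ G' ∧
        (∀ g ∈ G', ∀ g' ∈ G', ∀ v, LM bb hp g' = ext v (LM bb hp g) → g = g') := by
    intro n
    induction n using Nat.strong_induction_on with
    | _ n ih =>
      intro G hG0 hμ
      by_cases hP : ∀ g ∈ G, ∀ g' ∈ G, ∀ v, LM bb hp g' = ext v (LM bb hp g) → g = g'
      · exact ⟨G, Submodule.subset_span, rfl, hG0, hP⟩
      push_neg at hP
      obtain ⟨g, hg, g', hg', v, hLMe, hne⟩ := hP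
      have hg'0 : g' ≠ 0 := fun h => hG0 (h ▸ hg')
      have hg0 : g ≠ 0 := fun h => hG0 (h ▸ hg)
      set y : Fin p → T := bb v • g with hy
      have hy0 : y ≠ 0 := smul_bb_ne_zero bb hmul hg0 v
      have hLMy : LM bb hp g' = LM bb hp y := by
        rw [hy, LM_smul bb hp hmul hg0 v, hLMe]
      set cφ : Φ := (BB bb).repr g' (LM bb hp g') / (BB bb).repr y (LM bb hp y) with hcφ
      set z : Fin p → T := g' - cφ • y with hz
      have hred : ∀ m ∈ ((BB bb).repr z).support, rank m < rank (LM bb hp g') :=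
        sub_reduce bb hp hg'0 hy0 hLMy
      have hyspan : y ∈ span T (G : Set (Fin p → T)) :=
        Submodule.smul_mem _ _ (Submodule.subset_span hg)
      have hcy : cφ • y ∈ span T (G : Set (Fin p → T)) := by
        rw [← algebraMap_smul T cφ y]
        exact Submodule.smul_mem _ _ hyspan
      have hzspan : z ∈ span T (G : Set (Fin p → T)) :=
        sub_mem (Submodule.subset_span hg') hcy
      have hg'z : g' = z + cφ • y := by rw [hz, sub_add_cancel]
      have herase_le : span T ((G.erase g' : Finset (Fin p → T)) : Set (Fin p → T))
          ≤ span T (G : Set (Fin p → T)) :=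
        Submodule.span_mono (Finset.coe_subset.mpr (Finset.erase_subset _ _))
      have hgG' : g ∈ G.erase g' := Finset.mem_erase.mpr ⟨hne, hg⟩
      have hcyG' : cφ • y ∈ span T ((G.erase g' : Finset (Fin p → T)) : Set (Fin p → T)) := by
        rw [← algebraMap_smul T cφ y]
        exact Submodule.smul_mem _ _
          (Submodule.smul_mem _ _ (Submodule.subset_span hgG'))
      by_cases hz0 : z = 0
      · -- drop g'
        have hspan : span T ((G.erase g' : Finset (Fin p → T)) : Set (Fin p → T))
            = span T (G : Set (Fin p → T)) := by
          refine le_antisymm herase_le ?_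
          rw [Submodule.span_le]
          intro x hx
          by_cases hxg : x = g'
          · have h' : g' = cφ • y := by rw [hg'z, hz0, zero_add]
            rw [hxg]
            have hmem := hcyG'
            rwa [← h'] at hmem
          · exact Submodule.subset_span (Finset.mem_erase.mpr ⟨hxg, hx⟩)
        have hmeas : (∑ g'' ∈ G.erase g', (rank (LM bb hp g'') + 1)) < n := by
          have hsum : (∑ g'' ∈ G.erase g', (rank (LM bb hp g'') + 1)) + (rank (LM bb hp g') + 1)
              = ∑ g'' ∈ G, (rank (LM bb hp g'') + 1) := Finset.sum_erase_add G _ hg'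
          omega
        obtain ⟨G'', h1, h2, h3, h4⟩ :=
          ih _ hmeas (G.erase g') (fun h => hG0 (Finset.mem_of_mem_erase h)) (le_refl _)
        rw [hspan] at h1 h2
        exact ⟨G'', h1, h2, h3, h4⟩
      · set G' : Finset (Fin p → T) := insert z (G.erase g') with hG'
        have hG'0 : (0 : Fin p → T) ∉ G' := by
          rw [hG', Finset.mem_insert]
          rintro (h | h)
          · exact hz0 h.symm
          · exact hG0 (Finset.mem_of_mem_erase h)
        have hspan : span T (G' : Set (Fin p → T)) = span T (G : Set (Fin p → T)) := by
          refine le_antisymm ?_ ?_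
          · rw [Submodule.span_le]
            intro x hx
            rw [hG'] at hx
            rcases Finset.mem_insert.mp hx with rfl | hxe
            · exact hzspan
            · exact Submodule.subset_span (Finset.mem_of_mem_erase hxe)
          · rw [Submodule.span_le]
            intro x hx
            by_cases hxg : x = g'
            · rw [hxg, hg'z]
              refine add_mem (Submodule.subset_span ?_) ?_
              · rw [hG']; exact Finset.mem_insert_self _ _
              · refine Submodule.span_mono ?_ hcyG'
                rw [hG']
                exact_mod_cast Finset.subset_insert _ _
            · exact Submodule.subset_span
                (by rw [hG']; exact Finset.mem_insert_of_mem (Finset.mem_erase.mpr ⟨hxg, hx⟩))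
        have hrankz : rank (LM bb hp z) < rank (LM bb hp g') :=
          hred _ (LM_mem bb hp hz0)
        have hmeas : (∑ g'' ∈ G', (rank (LM bb hp g'') + 1)) < n := by
          have hsum : (∑ g'' ∈ G.erase g', (rank (LM bb hp g'') + 1)) + (rank (LM bb hp g') + 1)
              = ∑ g'' ∈ G, (rank (LM bb hp g'') + 1) := Finset.sum_erase_add G _ hg'
          by_cases hzmem : z ∈ G.erase g'
          · have : G' = G.erase g' := by rw [hG', Finset.insert_eq_self.mpr hzmem]
            rw [this]
            omega
          · rw [hG', Finset.sum_insert hzmem]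
            omega
        obtain ⟨G'', h1, h2, h3, h4⟩ := ih _ hmeas G' hG'0 (le_refl _)
        rw [hspan] at h1 h2
        exact ⟨G'', h1, h2, h3, h4⟩
  obtain ⟨G₀, hG₀⟩ := hN
  have hspan₁ : span T ((G₀.erase 0 : Finset (Fin p → T)) : Set (Fin p → T)) = N := by
    refine le_antisymm ?_ ?_
    · refine le_trans (Submodule.span_mono (Finset.coe_subset.mpr (Finset.erase_subset _ _))) ?_
      rw [hG₀]
    · rw [← hG₀, Submodule.span_le]
      intro x hx
      rcases eq_or_ne x 0 with rfl | hx0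
      · exact zero_mem _
      · exact Submodule.subset_span (Finset.mem_erase.mpr ⟨hx0, hx⟩)
  obtain ⟨G', h1, h2, h3, h4⟩ :=
    main _ (G₀.erase 0) (Finset.notMem_erase _ _) (le_refl _)
  rw [hspan₁] at h1 h2
  exact ⟨G', h1, h2, h3, h4⟩

end Cleaning
section GB

variable {Φ T : Type} [Field Φ] [Ring T] [Algebra Φ T]
variable (bb : Module.Basis (List (Fin r)) Φ T) (hp : 0 < p)

/-- the set of leading monomials reachable from `G` -/
def Lam (G : Finset (Fin p → T)) : Set (Fin p × List (Fin r)) :=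
  {m | ∃ g ∈ G, ∃ v, m = ext v (LM bb hp g)}

lemma suffix_cases {w w' v v' : List (Fin r)}
    (h : v ++ w = v' ++ w') (hlen : w'.length ≤ w.length) : ∃ u, w = u ++ w' := by
  have h1 : w' <:+ v ++ w := h ▸ List.suffix_append v' w'
  have h2 : w <:+ v ++ w := List.suffix_append v w
  obtain ⟨u, hu⟩ := List.suffix_of_suffix_length_le h1 h2 hlen
  exact ⟨u, hu.symm⟩

lemma prod_LM_inj {G : Finset (Fin p → T)}
    (hP : ∀ g ∈ G, ∀ g' ∈ G, ∀ v, LM bb hp g' = ext v (LM bb hp g) → g = g')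
    {g g' : Fin p → T} {v v' : List (Fin r)} (hg : g ∈ G) (hg' : g' ∈ G)
    (heq : ext v (LM bb hp g) = ext v' (LM bb hp g')) : g = g' ∧ v = v' := by
  have aux : ∀ a ∈ G, ∀ b ∈ G, ∀ (va vb : List (Fin r)),
      ext va (LM bb hp a) = ext vb (LM bb hp b) →
      (LM bb hp a).2.length ≤ (LM bb hp b).2.length → a = b := by
    intro a ha b hb va vb hab hlen
    have h1 : (LM bb hp a).1 = (LM bb hp b).1 := by
      simpa [ext] using congrArg Prod.fst hab
    have h2 : va ++ (LM bb hp a).2 = vb ++ (LM bb hp b).2 := by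
      simpa [ext] using congrArg Prod.snd hab
    obtain ⟨u, hu⟩ := suffix_cases h2.symm hlen
    refine hP a ha b hb u (Prod.ext h1.symm ?_)
    simp only [ext]
    exact hu
  have hgg' : g = g' := by
    rcases le_total ((LM bb hp g).2.length) ((LM bb hp g').2.length) with hl | hl
    · exact aux g hg g' hg' v v' heq hl
    · exact (aux g' hg' g hg v' v heq.symm hl).symm
  subst hgg'
  refine ⟨rfl, ?_⟩
  have h2 : v ++ (LM bb hp g).2 = v' ++ (LM bb hp g).2 := by
    simpa [ext] using congrArg Prod.snd heq
  exact List.append_cancel_right h2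

open Submodule in
lemma LM_of_mem_N (hone : bb [] = 1)
    (hmul : ∀ v w : List (Fin r), bb v * bb w = bb (v ++ w))
    {N : Submodule T (Fin p → T)} {G : Finset (Fin p → T)}
    (hGspan : span T (G : Set (Fin p → T)) = N)
    (hG0 : (0 : Fin p → T) ∉ G)
    (hP : ∀ g ∈ G, ∀ g' ∈ G, ∀ v, LM bb hp g' = ext v (LM bb hp g) → g = g')
    {f : Fin p → T} (hf : f ∈ N) (hf0 : f ≠ 0) : LM bb hp f ∈ Lam bb hp G := by
  have hfU : f ∈ span Φ {x | ∃ g ∈ (G : Set (Fin p → T)), ∃ v, x = bb v • g} := by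
    apply span_T_le bb hone hmul (G : Set (Fin p → T))
    rw [hGspan]
    exact hf
  have h0 : (0 : Fin p → T) ∉ {x | ∃ g ∈ (G : Set (Fin p → T)), ∃ v, x = bb v • g} := by
    rintro ⟨g, hg, v, h0⟩
    exact smul_bb_ne_zero bb hmul (fun h => hG0 (h ▸ hg)) v h0.symm
  have hd : ∀ x ∈ {x | ∃ g ∈ (G : Set (Fin p → T)), ∃ v, x = bb v • g},
      ∀ y ∈ {x | ∃ g ∈ (G : Set (Fin p → T)), ∃ v, x = bb v • g},
      LM bb hp x = LM bb hp y → x = y := by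
    rintro x ⟨g, hg, v, rfl⟩ y ⟨g', hg', v', rfl⟩ hxy
    have hg0 : g ≠ 0 := fun h => hG0 (h ▸ hg)
    have hg'0 : g' ≠ 0 := fun h => hG0 (h ▸ hg')
    rw [LM_smul bb hp hmul hg0 v, LM_smul bb hp hmul hg'0 v'] at hxy
    obtain ⟨h1, h2⟩ := prod_LM_inj bb hp hP hg hg' hxy
    rw [h1, h2]
  obtain ⟨x, hxU, hLMx⟩ := LM_mem_span bb hp h0 hd hfU hf0
  obtain ⟨g, hg, v, rfl⟩ := hxU
  rw [hLMx, LM_smul bb hp hmul (fun h => hG0 (h ▸ hg)) v]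
  exact ⟨g, hg, v, rfl⟩

lemma Lam_ext {G : Finset (Fin p → T)} {m : Fin p × List (Fin r)}
    (hm : m ∈ Lam bb hp G) (v : List (Fin r)) : ext v m ∈ Lam bb hp G := by
  obtain ⟨g, hg, u, rfl⟩ := hm
  exact ⟨g, hg, v ++ u, (ext_ext v u _)⟩

lemma std_ext {G : Finset (Fin p → T)} {m : Fin p × List (Fin r)}
    (hm : m ∉ Lam bb hp G)
    (hlen : ∀ g ∈ G, (LM bb hp g).2.length ≤ m.2.length)
    (v : List (Fin r)) : ext v m ∉ Lam bb hp G := by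
  rintro ⟨g, hg, u, hu⟩
  have h1 : m.1 = (LM bb hp g).1 := by simpa [ext] using congrArg Prod.fst hu
  have h2 : v ++ m.2 = u ++ (LM bb hp g).2 := by simpa [ext] using congrArg Prod.snd hu
  obtain ⟨t, ht⟩ := suffix_cases h2 (hlen g hg)
  refine hm ⟨g, hg, t, Prod.ext h1 ?_⟩
  simp only [ext]
  exact ht

open Submodule in
lemma decomp (hone : bb [] = 1)
    (hmul : ∀ v w : List (Fin r), bb v * bb w = bb (v ++ w))
    {N : Submodule T (Fin p → T)} {G : Finset (Fin p → T)}
    (hGN : (G : Set (Fin p → T)) ⊆ (N : Set (Fin p → T)))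
    (hG0 : (0 : Fin p → T) ∉ G)
    (f : Fin p → T) :
    f ∈ (N.restrictScalars Φ) ⊔ span Φ ((BB bb) '' {m | m ∉ Lam bb hp G}) := by
  have key : ∀ n : ℕ, ∀ f : Fin p → T, f ≠ 0 → rank (LM bb hp f) < n →
      f ∈ (N.restrictScalars Φ) ⊔ span Φ ((BB bb) '' {m | m ∉ Lam bb hp G}) := by
    intro n
    induction n using Nat.strong_induction_on with
    | _ n ih =>
      intro f hf0 hrank
      by_cases hL : LM bb hp f ∈ Lam bb hp G
      · obtain ⟨g, hg, v, hLMf⟩ := hL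
        have hg0 : g ≠ 0 := fun h => hG0 (h ▸ hg)
        set y : Fin p → T := bb v • g with hy
        have hy0 : y ≠ 0 := smul_bb_ne_zero bb hmul hg0 v
        have hLMy : LM bb hp f = LM bb hp y := by
          rw [hy, LM_smul bb hp hmul hg0 v]
          exact hLMf
        set c : Φ := (BB bb).repr f (LM bb hp f) / (BB bb).repr y (LM bb hp y) with hc
        set z : Fin p → T := f - c • y with hz
        have hred : ∀ m ∈ ((BB bb).repr z).support, rank m < rank (LM bb hp f) :=
          sub_reduce bb hp hf0 hy0 hLMy
        have hyN : y ∈ N := Submodule.smul_mem N _ (hGN hg)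
        have hcyN : c • y ∈ N.restrictScalars Φ := by
          rw [Submodule.restrictScalars_mem, ← algebraMap_smul T c y]
          exact Submodule.smul_mem N _ hyN
        have hfz : f = z + c • y := by rw [hz, sub_add_cancel]
        rcases eq_or_ne z 0 with hz0 | hz0
        · rw [hfz, hz0, zero_add]
          exact Submodule.mem_sup_left hcyN
        · have hzmem := ih (rank (LM bb hp f)) hrank z hz0 (hred _ (LM_mem bb hp hz0))
          rw [hfz]
          exact add_mem hzmem (Submodule.mem_sup_left hcyN)
      · set y : Fin p → T := BB bb (LM bb hp f) with hyB
        have hy0 : y ≠ 0 := Module.Basis.ne_zero _ _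
        have hLMB : LM bb hp y = LM bb hp f := by
          apply LM_eq_of
          · rw [hyB, Module.Basis.repr_self, Finsupp.support_single_ne_zero _ (one_ne_zero)]
            exact Finset.mem_singleton_self _
          · intro m' hm'
            rw [hyB, Module.Basis.repr_self, Finsupp.support_single_ne_zero _ (one_ne_zero)] at hm'
            rw [Finset.mem_singleton.mp hm']
        set c : Φ := (BB bb).repr f (LM bb hp f) / (BB bb).repr y (LM bb hp y) with hc
        set z : Fin p → T := f - c • y with hz
        have hred : ∀ m ∈ ((BB bb).repr z).support, rank m < rank (LM bb hp f) :=
          sub_reduce bb hp hf0 hy0 hLMB.symm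
        have hcy : c • y ∈ span Φ ((BB bb) '' {m | m ∉ Lam bb hp G}) :=
          Submodule.smul_mem _ _ (Submodule.subset_span ⟨LM bb hp f, hL, rfl⟩)
        have hfz : f = z + c • y := by rw [hz, sub_add_cancel]
        rcases eq_or_ne z 0 with hz0 | hz0
        · rw [hfz, hz0, zero_add]
          exact Submodule.mem_sup_right hcy
        · have hzmem := ih (rank (LM bb hp f)) hrank z hz0 (hred _ (LM_mem bb hp hz0))
          rw [hfz]
          exact add_mem hzmem (Submodule.mem_sup_right hcy)
  rcases eq_or_ne f 0 with rfl | hf0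
  · exact zero_mem _
  · exact key (rank (LM bb hp f) + 1) f hf0 (Nat.lt_succ_self _)

end GB
section Core

variable {Φ T : Type} [Field Φ] [Ring T] [Algebra Φ T]
variable (bb : Module.Basis (List (Fin r)) Φ T) (hp : 0 < p)

lemma extm_inj (m : Fin p × List (Fin r)) :
    Function.Injective (fun v : List (Fin r) => ext v m) := by
  intro a b h
  simpa [ext] using congrArg Prod.snd h

lemma repr_smul_basis (hmul : ∀ v w : List (Fin r), bb v * bb w = bb (v ++ w))
    (t : T) (m : Fin p × List (Fin r)) :
    (BB bb).repr (t • BB bb m)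
      = Finsupp.mapDomain (fun v => ext v m) (bb.repr t) := by
  let sm : T →ₗ[Φ] (Fin p → T) :=
    { toFun := fun t => t • BB bb m
      map_add' := fun a b => add_smul a b _
      map_smul' := fun c a => smul_assoc c a _ }
  let lhs : T →ₗ[Φ] ((Fin p × List (Fin r)) →₀ Φ) :=
    ((BB bb).repr.toLinearMap).comp sm
  let rhs : T →ₗ[Φ] ((Fin p × List (Fin r)) →₀ Φ) :=
    (Finsupp.lmapDomain Φ Φ (fun v => ext v m)).comp (bb.repr.toLinearMap)
  have heq : lhs = rhs := by
    apply Module.Basis.ext bb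
    intro v
    simp only [lhs, rhs, sm, LinearMap.coe_comp, Function.comp_apply, LinearMap.coe_mk,
      AddHom.coe_mk, LinearEquiv.coe_toLinearMap, Finsupp.lmapDomain_apply]
    rw [smul_BB bb hmul, Module.Basis.repr_self, Module.Basis.repr_self, Finsupp.mapDomain_single]
  exact LinearMap.congr_fun heq t

open Submodule in
theorem core (hp : 0 < p) (hone : bb [] = 1)
    (hmul : ∀ v w : List (Fin r), bb v * bb w = bb (v ++ w))
    (N : Submodule T (Fin p → T)) (hN : N.FG) :
    ∃ L : Submodule T ((Fin p → T) ⧸ N),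
      FiniteDimensional Φ (((Fin p → T) ⧸ N) ⧸ L) ∧ Module.Free T L := by
  classical
  obtain ⟨G, hGN, hGspan, hG0, hP⟩ := exists_reduced bb hp hmul N hN
  set d : ℕ := G.sup (fun g => (LM bb hp g).2.length) with hd
  have hdle : ∀ g ∈ G, (LM bb hp g).2.length ≤ d := fun g hg => by
    rw [hd]; exact Finset.le_sup (f := fun g => (LM bb hp g).2.length) hg
  set SD : Set (Fin p × List (Fin r)) := {m | m ∉ Lam bb hp G ∧ m.2.length = d} with hSD
  set π : (Fin p → T) →ₗ[T] (Fin p → T) ⧸ N := N.mkQ with hπ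
  set β : SD → (Fin p → T) ⧸ N := fun m => π (BB bb ↑m) with hβ
  have hind : LinearIndependent T β := by
    rw [linearIndependent_iff]
    intro l hl
    set u : Fin p → T := l.sum (fun m t => t • BB bb ↑m) with hu
    have hπu : π u = 0 := by
      rw [hu, map_finsuppSum, ← hl, Finsupp.linearCombination_apply]
      refine Finsupp.sum_congr fun m _ => ?_
      rw [map_smul]
    have huN : u ∈ N := by
      have := hπu
      rw [hπ, Submodule.mkQ_apply, Submodule.Quotient.mk_eq_zero] at this
      exact this
    have hrepru : (BB bb).repr u
        = l.sum (fun m t =>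
            Finsupp.mapDomain (fun v => ext v (↑m : Fin p × List (Fin r))) (bb.repr t)) := by
      rw [hu, map_finsuppSum]
      exact Finsupp.sum_congr fun m _ => repr_smul_basis bb hmul _ _
    have hsupp : ∀ m' ∈ ((BB bb).repr u).support, m' ∉ Lam bb hp G := by
      intro m' hm'
      rw [hrepru] at hm'
      have h2 := Finsupp.support_sum hm'
      obtain ⟨m, hm, hmem⟩ := Finset.mem_biUnion.mp h2
      obtain ⟨v, hv, rfl⟩ := Finset.mem_image.mp (Finsupp.mapDomain_support hmem)
      exact std_ext bb hp m.2.1 (fun g hg => by rw [m.2.2]; exact hdle g hg) v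
    have hu0 : u = 0 := by
      by_contra h
      exact hsupp _ (LM_mem bb hp h) (LM_of_mem_N bb hp hone hmul hGspan hG0 hP huN h)
    apply Finsupp.ext
    intro m
    have hreprlm : bb.repr (l m) = 0 := by
      apply Finsupp.ext
      intro v
      have hcalc : (BB bb).repr u (ext v ↑m) = bb.repr (l m) v := by
        rw [hrepru, Finsupp.sum, Finset.sum_apply', Finset.sum_eq_single m]
        · exact Finsupp.mapDomain_apply (extm_inj _) _ _
        · intro m'' hm'' hne
          apply Finsupp.mapDomain_notin_range
          rintro ⟨v', hv'⟩
          apply hne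
          have h1 : (↑m'' : Fin p × List (Fin r)).1 = (↑m : Fin p × List (Fin r)).1 := by
            simpa [ext] using congrArg Prod.fst hv'
          have h2 : v' ++ (↑m'' : Fin p × List (Fin r)).2
              = v ++ (↑m : Fin p × List (Fin r)).2 := by
            simpa [ext] using congrArg Prod.snd hv'
          have hlen : (↑m : Fin p × List (Fin r)).2.length
              = (↑m'' : Fin p × List (Fin r)).2.length := by rw [m.2.2, m''.2.2]
          obtain ⟨t, ht⟩ := suffix_cases h2 (le_of_eq hlen)
          have hte : t = [] := by
            have hlt := congrArg List.length ht
            rw [List.length_append] at hlt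
            rw [← hlen] at hlt
            simpa using (List.length_eq_zero_iff).mp (by omega)
          have hsnd : (↑m'' : Fin p × List (Fin r)).2 = (↑m : Fin p × List (Fin r)).2 := by
            rw [ht, hte, List.nil_append]
          exact Subtype.ext (Prod.ext h1 hsnd)
        · intro h
          rw [Finsupp.notMem_support_iff.mp h]
          simp
      rw [hu0] at hcalc
      simpa using hcalc.symm
    exact (LinearEquiv.map_eq_zero_iff bb.repr).mp hreprlm
  set L : Submodule T ((Fin p → T) ⧸ N) := Submodule.span T (Set.range β) with hL
  refine ⟨L, ?_, ?_⟩
  · set q : ((Fin p → T) ⧸ N) →ₗ[T] (((Fin p → T) ⧸ N) ⧸ L) := L.mkQ with hq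
    have hLmem : ∀ m : Fin p × List (Fin r), m ∉ Lam bb hp G → d ≤ m.2.length →
        π (BB bb m) ∈ L := by
      intro m hm hlen
      set w : List (Fin r) := m.2.drop (m.2.length - d) with hw
      set v : List (Fin r) := m.2.take (m.2.length - d) with hv
      have hvw : v ++ w = m.2 := List.take_append_drop _ _
      have hwlen : w.length = d := by rw [hw, List.length_drop]; omega
      set m' : Fin p × List (Fin r) := (m.1, w) with hm'
      have hmm' : m = ext v m' := by
        rw [hm', ext]
        exact Prod.ext rfl hvw.symm
      have hm'SD : m' ∈ SD := by
        constructor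
        · intro hc
          exact hm (hmm' ▸ Lam_ext bb hp hc v)
        · exact hwlen
      rw [hmm', ← smul_BB bb hmul, map_smul]
      exact Submodule.smul_mem _ _ (Submodule.subset_span ⟨⟨m', hm'SD⟩, rfl⟩)
    have hsur : ∀ x : ((Fin p → T) ⧸ N) ⧸ L, ∃ f : Fin p → T, q (π f) = x := by
      intro x
      obtain ⟨y, rfl⟩ := Submodule.mkQ_surjective L x
      obtain ⟨f, rfl⟩ := Submodule.mkQ_surjective N y
      exact ⟨f, rfl⟩
    set ρ : (Fin p → T) →ₗ[Φ] (((Fin p → T) ⧸ N) ⧸ L) := ((q.comp π).restrictScalars Φ) with hρ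
    have hsubset : ρ '' ((BB bb) '' {m | m ∉ Lam bb hp G})
        ⊆ (Submodule.span Φ (ρ '' ((BB bb) '' {m | m.2.length < d ∧ m ∉ Lam bb hp G}))
            : Set ((((Fin p → T) ⧸ N) ⧸ L))) := by
      rintro x ⟨fx, ⟨m, hm, rfl⟩, rfl⟩
      by_cases hlen : m.2.length < d
      · exact Submodule.subset_span ⟨BB bb m, ⟨m, ⟨hlen, hm⟩, rfl⟩, rfl⟩
      · have hmem : π (BB bb m) ∈ L := hLmem m hm (le_of_not_gt hlen)
        have hz : ρ (BB bb m) = 0 := by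
          show q (π (BB bb m)) = 0
          rw [hq, Submodule.mkQ_apply, Submodule.Quotient.mk_eq_zero]
          exact hmem
        rw [hz]
        exact zero_mem _
    have hspanQ : Submodule.span Φ
        (ρ '' ((BB bb) '' {m | m.2.length < d ∧ m ∉ Lam bb hp G})) = ⊤ := by
      rw [eq_top_iff]
      rintro x -
      obtain ⟨f, rfl⟩ := hsur x
      have hdec := decomp bb hp hone hmul hGN hG0 f
      obtain ⟨n', hn', s, hs, hfs⟩ := Submodule.mem_sup.mp hdec
      have hπn : π n' = 0 := by
        rw [hπ, Submodule.mkQ_apply, Submodule.Quotient.mk_eq_zero]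
        exact (Submodule.restrictScalars_mem Φ N n').mp hn'
      have hqf : q (π f) = ρ s := by
        rw [← hfs, map_add, hπn, zero_add]
        rfl
      rw [hqf]
      have hs' : ρ s ∈ Submodule.map ρ (Submodule.span Φ ((BB bb) '' {m | m ∉ Lam bb hp G})) :=
        Submodule.mem_map_of_mem hs
      rw [Submodule.map_span] at hs'
      exact Submodule.span_le.mpr hsubset hs'
    have hAfin : {m : Fin p × List (Fin r) | m.2.length < d ∧ m ∉ Lam bb hp G}.Finite := by
      apply Set.Finite.subset
        (Set.Finite.prod (Set.finite_univ (α := Fin p)) (List.finite_length_lt (Fin r) d))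
      intro m hm
      exact ⟨trivial, hm.1⟩
    have : Module.Finite Φ ((((Fin p → T) ⧸ N) ⧸ L)) := by
      constructor
      rw [Submodule.fg_def]
      exact ⟨ρ '' ((BB bb) '' {m | m.2.length < d ∧ m ∉ Lam bb hp G}),
        (hAfin.image _).image _, hspanQ⟩
    exact this
  · exact Module.Free.of_basis (Module.Basis.span hind)

end Core

end LewinAux


/-- A finitely presented right module `M = F/N` over the free associative algebra
`R = Φ⟨x_1,…,x_r⟩` (right modules formalized as left modules over `Rᵐᵒᵖ`) has a free
submodule of finite codimension over `Φ`. -/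
theorem finitely_presented_has_free_submodule_of_finite_codim
    (Φ : Type) [Field Φ] (r p : ℕ) (hr : 1 ≤ r)
    (N : Submodule (FreeAlgebra Φ (Fin r))ᵐᵒᵖ (Fin p → (FreeAlgebra Φ (Fin r))ᵐᵒᵖ))
    (hN : N.FG) :
    ∃ L : Submodule (FreeAlgebra Φ (Fin r))ᵐᵒᵖ
        ((Fin p → (FreeAlgebra Φ (Fin r))ᵐᵒᵖ) ⧸ N),
      FiniteDimensional Φ (((Fin p → (FreeAlgebra Φ (Fin r))ᵐᵒᵖ) ⧸ N) ⧸ L) ∧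
      Module.Free (FreeAlgebra Φ (Fin r))ᵐᵒᵖ L := by
  rcases Nat.eq_zero_or_pos p with rfl | hp
  · refine ⟨⊥, ?_, ?_⟩
    · haveI h1 : Subsingleton ((Fin 0 → (FreeAlgebra Φ (Fin r))ᵐᵒᵖ) ⧸ N) :=
        (Submodule.mkQ_surjective N).subsingleton
      haveI h2 : Subsingleton (((Fin 0 → (FreeAlgebra Φ (Fin r))ᵐᵒᵖ) ⧸ N) ⧸
          (⊥ : Submodule (FreeAlgebra Φ (Fin r))ᵐᵒᵖ
            ((Fin 0 → (FreeAlgebra Φ (Fin r))ᵐᵒᵖ) ⧸ N))) :=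
        (Submodule.mkQ_surjective _).subsingleton
      exact Module.Finite.of_surjective (0 : Φ →ₗ[Φ] _)
        (fun x => ⟨0, Subsingleton.elim _ _⟩)
    · infer_instance
  · set T := (FreeAlgebra Φ (Fin r))ᵐᵒᵖ with hT
    let e : FreeAlgebra Φ (Fin r) ≃ₐ[Φ] MonoidAlgebra Φ (FreeMonoid (Fin r)) :=
      FreeAlgebra.equivMonoidAlgebraFreeMonoid
    let rev : FreeMonoid (Fin r) ≃ List (Fin r) :=
      { toFun := fun w => (FreeMonoid.toList w).reverse
        invFun := fun l => FreeMonoid.ofList l.reverse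
        left_inv := by intro w; simp
        right_inv := by intro l; simp }
    let b0 : Module.Basis (FreeMonoid (Fin r)) Φ (MonoidAlgebra Φ (FreeMonoid (Fin r))) :=
      MonoidAlgebra.basis (FreeMonoid (Fin r)) Φ
    let b1 : Module.Basis (FreeMonoid (Fin r)) Φ (FreeAlgebra Φ (Fin r)) :=
      b0.map e.symm.toLinearEquiv
    let b2 : Module.Basis (FreeMonoid (Fin r)) Φ T := b1.map (opLinearEquiv Φ)
    let bb : Module.Basis (List (Fin r)) Φ T := b2.reindex rev
    have hbb : ∀ l : List (Fin r),
        bb l = op (e.symm (MonoidAlgebra.single (FreeMonoid.ofList l.reverse) (1 : Φ))) := by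
      intro l
      simp only [bb, b2, b1, b0, Module.Basis.reindex_apply, Module.Basis.map_apply]
      congr 1
    have hone : bb [] = 1 := by
      rw [hbb]
      simp only [List.reverse_nil]
      have h1 : (FreeMonoid.ofList ([] : List (Fin r))) = 1 := rfl
      rw [h1, ← MonoidAlgebra.one_def, map_one, op_one]
    have hmul : ∀ v w : List (Fin r), bb v * bb w = bb (v ++ w) := by
      intro v w
      rw [hbb, hbb, hbb]
      rw [← op_mul]
      congr 1
      rw [← map_mul, MonoidAlgebra.single_mul_single, one_mul]
      congr 2
      rw [← FreeMonoid.ofList_append, ← List.reverse_append]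
    exact LewinAux.core bb hp hone hmul N hN


end
end

section
/- Let Φ be a field, R = Φ⟨x_1,…,x_r⟩ the free associative algebra of finite rank r ≥ 1 over Φ, and let M be a right R-module given by p generators and q defining relations, i.e. M = F/N where F is the free right R-module of rank p and N is a submodule generated by q elements. If q < p, then M is infinite-dimensional as a Φ-vector space. -/
noncomputable section

open MulOpposite

namespace FewerRel

variable {r : ℕ}

/-- deglex-style rank of a word (reading from the right). -/
def key : List (Fin r) → ℕ
  | [] => 0
  | a :: w => key w * r + a + 1

@[simp] lemma key_nil : key ([] : List (Fin r)) = 0 := rfl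
@[simp] lemma key_cons (a : Fin r) (w : List (Fin r)) :
    key (a :: w) = key w * r + a + 1 := rfl

lemma key_append (u w : List (Fin r)) :
    key (u ++ w) = key w * r ^ u.length + key u := by
  induction u with
  | nil => simp
  | cons a u ih =>
      simp only [List.cons_append, key_cons, ih, List.length_cons, pow_succ]
      ring

/-- decoding inverse of `key`. -/
def decode (hr : 1 ≤ r) : ℕ → List (Fin r)
  | 0 => []
  | n + 1 => ⟨n % r, Nat.mod_lt _ hr⟩ :: decode hr (n / r)
  decreasing_by exact Nat.lt_succ_of_le (Nat.div_le_self _ _)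

lemma decode_key (hr : 1 ≤ r) (w : List (Fin r)) : decode hr (key w) = w := by
  induction w with
  | nil => simp [decode]
  | cons a w ih =>
      have h1 : key w * r + (a : ℕ) + 1 = (key w * r + (a : ℕ)) + 1 := rfl
      rw [key_cons, h1, decode]
      have hm : (key w * r + (a : ℕ)) % r = a := by
        rw [Nat.mul_add_mod']
        exact Nat.mod_eq_of_lt a.isLt
      have hd : (key w * r + (a : ℕ)) / r = key w := by
        rw [add_comm, Nat.add_mul_div_right _ _ (by omega : 0 < r),
          Nat.div_eq_of_lt a.isLt, zero_add]
      simp [hm, hd, ih]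

lemma key_injective (hr : 1 ≤ r) : Function.Injective (key (r := r)) :=
  Function.LeftInverse.injective (decode_key hr)

variable {p : ℕ}

/-- rank of a pair (component, word). -/
def Kp (iw : Fin p × List (Fin r)) : ℕ := key iw.2 * p + iw.1

lemma Kp_injective (hr : 1 ≤ r) : Function.Injective (Kp (r := r) (p := p)) := by
  rintro ⟨i, w⟩ ⟨i', w'⟩ h
  simp only [Kp] at h
  have hi : (i : ℕ) < p := i.isLt
  have hi' : (i' : ℕ) < p := i'.isLt
  have hk : key w = key w' := by
    rcases Nat.lt_trichotomy (key w) (key w') with hlt | he | hlt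
    · nlinarith
    · exact he
    · nlinarith
  rw [hk] at h
  have : (i : ℕ) = i' := by omega
  have hw : w = w' := key_injective hr hk
  simp [Fin.ext_iff, this, hw]

lemma key_mono_append (hr : 1 ≤ r) {w m : List (Fin r)} (u : List (Fin r))
    (h : key w ≤ key m) : key (u ++ w) ≤ key (u ++ m) := by
  rw [key_append, key_append]
  have : (1:ℕ) ≤ r ^ u.length := Nat.one_le_pow _ _ (by omega)
  nlinarith

lemma Kp_mono_append (hr : 1 ≤ r) {i i' : Fin p} {w m : List (Fin r)} (u : List (Fin r))
    (h : Kp (i, w) ≤ Kp (i', m)) : Kp (i, u ++ w) ≤ Kp (i', u ++ m) := by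
  simp only [Kp] at h ⊢
  have hi : (i : ℕ) < p := i.isLt
  have hi' : (i' : ℕ) < p := i'.isLt
  have hk : key w ≤ key m := by nlinarith
  rcases eq_or_lt_of_le hk with he | hlt
  · have hw : w = m := key_injective hr he
    subst hw
    have : (i : ℕ) ≤ i' := by omega
    omega
  · have h2 : key (u ++ w) < key (u ++ m) := by
      rw [key_append, key_append]
      have h1 : (1:ℕ) ≤ r ^ u.length := Nat.one_le_pow _ _ (by omega)
      nlinarith
    nlinarith


section Words

variable {α : Type*}

lemma suffix_total {u₁ u₂ l₁ l₂ : List α} (h : u₁ ++ l₁ = u₂ ++ l₂) :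
    l₁ <:+ l₂ ∨ l₂ <:+ l₁ := by
  rcases List.append_eq_append_iff.1 h with ⟨a, _, h2⟩ | ⟨c, _, h2⟩
  · right; exact ⟨a, h2.symm⟩
  · left; exact ⟨c, h2.symm⟩

end Words

section Main

open scoped Classical

variable {Φ : Type} [Field Φ] {r p : ℕ}

/-- the (component, word) support of an element of the free module. -/
def suppF (f : Fin p → MonoidAlgebra Φ (FreeMonoid (Fin r))) :
    Finset (Fin p × FreeMonoid (Fin r)) :=
  Finset.univ.biUnion fun i => (f i).coeff.support.image fun w => (i, w)

lemma mem_suppF {f : Fin p → MonoidAlgebra Φ (FreeMonoid (Fin r))}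
    {iw : Fin p × FreeMonoid (Fin r)} : iw ∈ suppF f ↔ (f iw.1).coeff iw.2 ≠ 0 := by
  obtain ⟨i, w⟩ := iw
  simp only [suppF, Finset.mem_biUnion, Finset.mem_univ, true_and, Finset.mem_image,
    Finsupp.mem_support_iff, Prod.mk.injEq]
  constructor
  · rintro ⟨i', w', hw', rfl, rfl⟩; exact hw'
  · exact fun h => ⟨i, w, h, rfl, rfl⟩

/-- rank of a (component, word) pair. -/
def KpW (iw : Fin p × FreeMonoid (Fin r)) : ℕ := Kp (iw.1, FreeMonoid.toList iw.2)

lemma KpW_injective (hr : 1 ≤ r) :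
    Function.Injective (KpW (r := r) (p := p)) := by
  rintro ⟨i, w⟩ ⟨i', w'⟩ h
  have := Kp_injective hr h
  simp only [Prod.mk.injEq] at this ⊢
  exact ⟨this.1, FreeMonoid.toList.injective this.2⟩

def leadKey (f : Fin p → MonoidAlgebra Φ (FreeMonoid (Fin r))) : ℕ :=
  (suppF f).sup KpW

lemma le_leadKey {f : Fin p → MonoidAlgebra Φ (FreeMonoid (Fin r))}
    {iw : Fin p × FreeMonoid (Fin r)} (h : iw ∈ suppF f) : KpW iw ≤ leadKey f :=
  Finset.le_sup h

lemma suppF_nonempty {f : Fin p → MonoidAlgebra Φ (FreeMonoid (Fin r))} (hf : f ≠ 0) :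
    (suppF f).Nonempty := by
  by_contra h
  apply hf
  funext i
  ext w
  by_contra hw
  exact h ⟨(i, w), mem_suppF.2 hw⟩

/-- the leading (component, word) pair of a nonzero element. -/
def lead (hr : 1 ≤ r) (hp : 0 < p)
    (f : Fin p → MonoidAlgebra Φ (FreeMonoid (Fin r))) : Fin p × FreeMonoid (Fin r) :=
  (⟨leadKey f % p, Nat.mod_lt _ hp⟩, FreeMonoid.ofList (decode hr (leadKey f / p)))

lemma pd_KpW (hr : 1 ≤ r) (hp : 0 < p) (iw : Fin p × FreeMonoid (Fin r)) :
    ((⟨KpW iw % p, Nat.mod_lt _ hp⟩ : Fin p), FreeMonoid.ofList (decode hr (KpW iw / p)))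
      = iw := by
  obtain ⟨i, w⟩ := iw
  have h1 : KpW (i, w) % p = (i : ℕ) := by
    simp only [KpW, Kp, Nat.mul_add_mod']
    exact Nat.mod_eq_of_lt i.isLt
  have h2 : KpW (i, w) / p = key (FreeMonoid.toList w) := by
    simp only [KpW, Kp]
    rw [add_comm, Nat.add_mul_div_right _ _ hp, Nat.div_eq_of_lt i.isLt, zero_add]
  simp only [h1, h2, decode_key, Prod.mk.injEq]
  exact ⟨by simp [Fin.ext_iff], rfl⟩

lemma lead_spec (hr : 1 ≤ r) (hp : 0 < p)
    {f : Fin p → MonoidAlgebra Φ (FreeMonoid (Fin r))} (hf : f ≠ 0) :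
    lead hr hp f ∈ suppF f ∧ KpW (lead hr hp f) = leadKey f := by
  obtain ⟨iw, hmem, hsup⟩ := Finset.exists_mem_eq_sup _ (suppF_nonempty hf) KpW
  have hcongr : ∀ {n m : ℕ}, n = m →
      ((⟨n % p, Nat.mod_lt _ hp⟩ : Fin p), FreeMonoid.ofList (decode hr (n / p)))
        = ((⟨m % p, Nat.mod_lt _ hp⟩ : Fin p), FreeMonoid.ofList (decode hr (m / p))) := by
    rintro n m rfl; rfl
  have hl : lead hr hp f = iw :=
    (hcongr (show leadKey f = KpW iw from hsup)).trans (pd_KpW hr hp iw)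
  rw [hl]
  exact ⟨hmem, hsup.symm⟩


lemma span_nz (hr : 1 ≤ r) (hp : 0 < p) {q : ℕ}
    (v : Fin q → (Fin p → MonoidAlgebra Φ (FreeMonoid (Fin r))))
    (Hred : ∀ j j', v j ≠ 0 → v j' ≠ 0 → j ≠ j' →
      (lead hr hp (v j)).1 = (lead hr hp (v j')).1 →
      ¬ (FreeMonoid.toList (lead hr hp (v j)).2 <:+ FreeMonoid.toList (lead hr hp (v j')).2))
    {c : Fin p → MonoidAlgebra Φ (FreeMonoid (Fin r))}
    (hc : c ∈ Submodule.span (MonoidAlgebra Φ (FreeMonoid (Fin r))) (Set.range v))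
    (hc0 : c ≠ 0) :
    ∃ j, v j ≠ 0 ∧ ∃ w, (c (lead hr hp (v j)).1).coeff w ≠ 0 := by
  obtain ⟨a, ha⟩ := (Submodule.mem_span_range_iff_exists_fun _).mp hc
  classical
  set P : Finset (Fin q × FreeMonoid (Fin r)) :=
    Finset.univ.biUnion (fun j => if v j = 0 then ∅ else (a j).coeff.support.image fun u => (j, u))
    with hP
  have memP : ∀ {ju : Fin q × FreeMonoid (Fin r)}, ju ∈ P ↔ v ju.1 ≠ 0 ∧ (a ju.1).coeff ju.2 ≠ 0 := by
    rintro ⟨j, u⟩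
    simp only [hP, Finset.mem_biUnion, Finset.mem_univ, true_and]
    constructor
    · rintro ⟨j', hj'⟩
      by_cases h0 : v j' = 0
      · simp [h0] at hj'
      · simp only [h0, if_false, Finset.mem_image, Finsupp.mem_support_iff,
          Prod.mk.injEq] at hj'
        obtain ⟨u', hu', rfl, rfl⟩ := hj'
        exact ⟨h0, hu'⟩
    · rintro ⟨h0, hu⟩
      exact ⟨j, by simp [h0, Finsupp.mem_support_iff, hu]⟩
  have hPne : P.Nonempty := by
    rcases Finset.eq_empty_or_nonempty P with he | h
    · exfalso; apply hc0; rw [← ha]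
      apply Finset.sum_eq_zero
      intro j _
      rcases eq_or_ne (v j) 0 with h0 | h0
      · rw [h0, smul_zero]
      · have ha0 : a j = 0 := by
          ext u
          by_contra hu
          have : (j, u) ∈ P := memP.mpr ⟨h0, hu⟩
          simp [he] at this
        rw [ha0, zero_smul]
    · exact h
  set KP : Fin q × FreeMonoid (Fin r) → ℕ :=
    fun ju => KpW ((lead hr hp (v ju.1)).1, ju.2 * (lead hr hp (v ju.1)).2) with hKP
  obtain ⟨⟨j₀, u₀⟩, hj₀mem, hmax⟩ := P.exists_max_image KP hPne
  obtain ⟨hvj₀, hau₀⟩ := memP.mp hj₀mem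
  set i₀ := (lead hr hp (v j₀)).1 with hi₀
  set m₀ := (lead hr hp (v j₀)).2 with hm₀
  set w₀ := u₀ * m₀ with hw₀
  have huniq : ∀ j u w, v j ≠ 0 → (a j).coeff u ≠ 0 → ((v j) i₀).coeff w ≠ 0 → u * w = w₀ →
      j = j₀ ∧ u = u₀ ∧ w = m₀ := by
    intro j u w hvj hau hvw huw
    have h1 : Kp (i₀, FreeMonoid.toList w)
        ≤ Kp ((lead hr hp (v j)).1, FreeMonoid.toList (lead hr hp (v j)).2) := by
      have := le_leadKey (f := v j) ((mem_suppF (iw := (i₀, w))).mpr hvw)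
      rw [← (lead_spec hr hp hvj).2] at this
      exact this
    have h2 : Kp (i₀, FreeMonoid.toList u ++ FreeMonoid.toList w)
        ≤ Kp ((lead hr hp (v j)).1,
            FreeMonoid.toList u ++ FreeMonoid.toList (lead hr hp (v j)).2) :=
      Kp_mono_append hr _ h1
    have h2' : KpW (i₀, u * w) ≤ KP (j, u) := h2
    have h3 : KP (j, u) ≤ KP (j₀, u₀) := hmax _ (memP.mpr ⟨hvj, hau⟩)
    have hCA : KP (j₀, u₀) = KpW (i₀, u * w) := by rw [huw]
    have hBC : KP (j, u) = KP (j₀, u₀) := le_antisymm h3 (by rw [hCA]; exact h2')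
    have hpair := KpW_injective hr (hBC.trans (by rw [hCA, huw]))
    rw [Prod.mk.injEq] at hpair
    obtain ⟨hcomp, hword⟩ := hpair
    have hwl : FreeMonoid.toList u ++ FreeMonoid.toList (lead hr hp (v j)).2
        = FreeMonoid.toList u₀ ++ FreeMonoid.toList m₀ := by
      have := congrArg FreeMonoid.toList hword
      simpa [FreeMonoid.toList_mul, hw₀] using this
    have hj : j = j₀ := by
      by_contra hne
      rcases suffix_total hwl with hs | hs
      · exact Hred j j₀ hvj hvj₀ hne (by rw [hcomp]) hs
      · exact Hred j₀ j hvj₀ hvj (Ne.symm hne) (by rw [hcomp]) hs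
    subst hj
    have hu : u = u₀ := by
      have : u * m₀ = u₀ * m₀ := by rw [← hm₀] at hword; exact hword
      exact mul_right_cancel this
    subst hu
    have hAB : KpW (i₀, u * w) = KP (j, u) := le_antisymm h2' (by rw [hBC, hCA])
    have := KpW_injective hr hAB
    rw [Prod.mk.injEq] at this
    have hw : w = m₀ := by
      have h4 : u * w = u * (lead hr hp (v j)).2 := this.2
      have := mul_left_cancel h4
      rw [← hm₀] at this
      exact this
    exact ⟨rfl, rfl, hw⟩
  have hval : (c i₀).coeff w₀ = (a j₀).coeff u₀ * (v j₀ i₀).coeff m₀ := by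
    have hc' : c i₀ = ∑ j, a j * (v j i₀) := by
      rw [← ha, Finset.sum_apply]
      simp [Pi.smul_apply, smul_eq_mul]
    have hcw : (c i₀).coeff w₀ = ∑ j, (a j * (v j i₀)).coeff w₀ := by
      rw [hc', MonoidAlgebra.coeff_sum, Finsupp.finset_sum_apply]
    rw [hcw, Finset.sum_eq_single j₀]
    · -- compute the j₀ term
      conv_lhs => rw [← MonoidAlgebra.single_add_erase u₀ (a j₀)]
      rw [add_mul, MonoidAlgebra.coeff_add, Finsupp.add_apply]
      have hsingle : (MonoidAlgebra.single u₀ ((a j₀).coeff u₀) * (v j₀ i₀)).coeff w₀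
          = (a j₀).coeff u₀ * (v j₀ i₀).coeff m₀ :=
        MonoidAlgebra.coeff_single_mul_eq_mul_coeff _
          (fun z _ => ⟨fun h => mul_left_cancel h, fun h => by rw [h, hw₀]⟩)
      have herase : (HMul.hMul (α := MonoidAlgebra Φ (FreeMonoid (Fin r)))
          (MonoidAlgebra.erase u₀ (a j₀)) (v j₀ i₀)).coeff w₀ = 0 := by
        by_contra hne0
        have hmem := MonoidAlgebra.support_coeff_mul_subset _ _ (Finsupp.mem_support_iff.mpr hne0)
        rw [Finset.mem_mul] at hmem
        obtain ⟨u, hu, w, hw, huw⟩ := hmem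
        rw [MonoidAlgebra.coeff_erase, Finsupp.support_erase, Finset.mem_erase] at hu
        exact hu.1 (huniq j₀ u w hvj₀ (Finsupp.mem_support_iff.mp hu.2)
          (Finsupp.mem_support_iff.mp hw) huw).2.1
      rw [hsingle, herase, add_zero]
    · intro j _ hne
      by_contra hne0
      have hvj : v j ≠ 0 := by
        intro h0
        apply hne0
        rw [h0]
        simp
      have hmem := MonoidAlgebra.support_coeff_mul_subset _ _ (Finsupp.mem_support_iff.mpr hne0)
      rw [Finset.mem_mul] at hmem
      obtain ⟨u, hu, w, hw, huw⟩ := hmem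
      exact hne (huniq j u w hvj (Finsupp.mem_support_iff.mp hu)
        (Finsupp.mem_support_iff.mp hw) huw).1
    · intro h
      exact absurd (Finset.mem_univ j₀) h
  refine ⟨j₀, hvj₀, w₀, ?_⟩
  rw [hval]
  exact mul_ne_zero hau₀ (mem_suppF.mp (lead_spec hr hp hvj₀).1)


lemma exists_components (hr : 1 ≤ r) (hp : 0 < p) {q : ℕ} :
    ∀ (n : ℕ) (v : Fin q → (Fin p → MonoidAlgebra Φ (FreeMonoid (Fin r)))),
      (∑ j, (if v j = 0 then 0 else leadKey (v j) + 1)) ≤ n →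
      ∃ J : Finset (Fin p), J.card ≤ q ∧
        ∀ c ∈ Submodule.span (MonoidAlgebra Φ (FreeMonoid (Fin r))) (Set.range v),
          c ≠ 0 → ∃ i ∈ J, ∃ w, (c i).coeff w ≠ 0 := by
  intro n
  induction n using Nat.strong_induction_on with
  | _ n IH =>
  intro v hμ
  classical
  by_cases hbad : ∃ j j', v j ≠ 0 ∧ v j' ≠ 0 ∧ j ≠ j' ∧
      (lead hr hp (v j)).1 = (lead hr hp (v j')).1 ∧
      FreeMonoid.toList (lead hr hp (v j)).2 <:+ FreeMonoid.toList (lead hr hp (v j')).2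
  · -- reduction step
    obtain ⟨j, j', hvj, hvj', hjj', hcomp, hsuf⟩ := hbad
    obtain ⟨t, ht⟩ := hsuf
    set L := lead hr hp (v j) with hL
    set L' := lead hr hp (v j') with hL'
    have hcden : ((v j) L.1).coeff L.2 ≠ 0 := mem_suppF.mp (lead_spec hr hp hvj).1
    have hcnum : ((v j') L'.1).coeff L'.2 ≠ 0 := mem_suppF.mp (lead_spec hr hp hvj').1
    set c₀ : Φ := ((v j') L'.1).coeff L'.2 * (((v j) L.1).coeff L.2)⁻¹ with hc₀
    set g : Fin p → MonoidAlgebra Φ (FreeMonoid (Fin r)) :=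
      MonoidAlgebra.single (FreeMonoid.ofList t) c₀ • v j with hg
    set v' := Function.update v j' (v j' - g) with hv'
    set B := leadKey (v j') with hB
    have hgsupp : ∀ i' w', (g i').coeff w' ≠ 0 → KpW (i', w') ≤ B := by
      intro i' w' hne
      have hmem := MonoidAlgebra.support_coeff_mul_subset _ _ (Finsupp.mem_support_iff.mpr hne)
      rw [Finset.mem_mul] at hmem
      obtain ⟨u, hu, w, hw, huw⟩ := hmem
      have hut : u = FreeMonoid.ofList t :=
        Finset.mem_singleton.mp (Finsupp.support_single_subset hu)
      have h1 : Kp (i', FreeMonoid.toList w)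
          ≤ Kp (L.1, FreeMonoid.toList L.2) := by
        have := le_leadKey (f := v j) ((mem_suppF (iw := (i', w))).mpr
          (Finsupp.mem_support_iff.mp hw))
        rw [← (lead_spec hr hp hvj).2] at this
        exact this
      have h2 := Kp_mono_append hr t h1
      have hwl : FreeMonoid.toList w' = t ++ FreeMonoid.toList w := by
        rw [← huw, hut]; rfl
      have hL2 : t ++ FreeMonoid.toList L.2 = FreeMonoid.toList L'.2 := ht
      rw [hL2] at h2
      have : KpW (i', w') ≤ KpW (L.1, L'.2) := by
        show Kp (i', FreeMonoid.toList w') ≤ _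
        rw [hwl]; exact h2
      rw [hcomp] at this
      calc KpW (i', w') ≤ KpW (L'.1, L'.2) := this
        _ = B := (lead_spec hr hp hvj').2
    have hsub : ∀ i' w', B < KpW (i', w') → ((v j' - g) i').coeff w' = 0 := by
      intro i' w' hgt
      have h1 : ((v j') i').coeff w' = 0 := by
        by_contra hne
        exact absurd (le_leadKey ((mem_suppF (iw := (i', w'))).mpr hne)) (not_le.mpr hgt)
      have h2 : (g i').coeff w' = 0 := by
        by_contra hne
        exact absurd (hgsupp i' w' hne) (not_le.mpr hgt)
      show ((v j') i').coeff w' - (g i').coeff w' = 0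
      rw [h1, h2, sub_zero]
    have hatB : ((v j' - g) L'.1).coeff L'.2 = 0 := by
      have hgval : (g L'.1).coeff L'.2 = c₀ * ((v j) L'.1).coeff L.2 := by
        show (MonoidAlgebra.single (FreeMonoid.ofList t) c₀ * (v j) L'.1).coeff L'.2 = _
        refine MonoidAlgebra.coeff_single_mul_eq_mul_coeff _ (fun z _ => ?_)
        constructor
        · intro h
          have h' : t ++ FreeMonoid.toList z = FreeMonoid.toList L'.2 := by
            rw [← h]; rfl
          rw [← ht] at h'
          exact FreeMonoid.toList.injective (List.append_cancel_left h')
        · rintro rfl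
          show FreeMonoid.ofList (t ++ FreeMonoid.toList L.2) = L'.2
          rw [ht]; rfl
      show ((v j') L'.1).coeff L'.2 - (g L'.1).coeff L'.2 = 0
      rw [hgval, ← hcomp, hc₀, mul_assoc, inv_mul_cancel₀ hcden, mul_one, hcomp, sub_self]
    have hkey : ∀ iw : Fin p × FreeMonoid (Fin r), ((v j' - g) iw.1).coeff iw.2 ≠ 0 →
        KpW iw < B := by
      rintro ⟨i', w'⟩ hne
      rcases lt_trichotomy (KpW (i', w')) B with hlt | heq | hgt
      · exact hlt
      · exfalso
        have : (i', w') = L' := by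
          apply KpW_injective hr
          rw [heq, (lead_spec hr hp hvj').2]
        rw [this] at hne
        exact hne hatB
      · exact absurd (hsub i' w' hgt) hne
    have hmu' : (∑ k, if v' k = 0 then 0 else leadKey (v' k) + 1)
        < ∑ k, (if v k = 0 then 0 else leadKey (v k) + 1) := by
      rw [← Finset.add_sum_erase _ _ (Finset.mem_univ j'),
        ← Finset.add_sum_erase _ (fun k => if v k = 0 then 0 else leadKey (v k) + 1)
          (Finset.mem_univ j')]
      have hrest : ∑ k ∈ Finset.univ.erase j', (if v' k = 0 then 0 else leadKey (v' k) + 1)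
          = ∑ k ∈ Finset.univ.erase j', (if v k = 0 then 0 else leadKey (v k) + 1) := by
        apply Finset.sum_congr rfl
        intro k hk
        rw [hv', Function.update_of_ne (Finset.mem_erase.mp hk).1]
      rw [hrest]
      have hj'new : v' j' = v j' - g := by rw [hv', Function.update_self]
      apply Nat.add_lt_add_right
      rw [hj'new, if_neg hvj']
      by_cases h0 : v j' - g = 0
      · rw [if_pos h0]; omega
      · rw [if_neg h0]
        have := hkey (lead hr hp (v j' - g)) (mem_suppF.mp (lead_spec hr hp h0).1)
        rw [(lead_spec hr hp h0).2] at this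
        omega
    have hspan : Submodule.span (MonoidAlgebra Φ (FreeMonoid (Fin r))) (Set.range v')
        = Submodule.span (MonoidAlgebra Φ (FreeMonoid (Fin r))) (Set.range v) := by
      apply le_antisymm
      · rw [Submodule.span_le]
        rintro _ ⟨k, rfl⟩
        by_cases hk : k = j'
        · rw [hv', hk, Function.update_self]
          exact sub_mem (Submodule.subset_span ⟨j', rfl⟩)
            (Submodule.smul_mem _ _ (Submodule.subset_span ⟨j, rfl⟩))
        · rw [hv', Function.update_of_ne hk]
          exact Submodule.subset_span ⟨k, rfl⟩
      · rw [Submodule.span_le]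
        rintro _ ⟨k, rfl⟩
        by_cases hk : k = j'
        · rw [hk]
          have hdecomp : v j' = (v j' - g) + g := by abel
          rw [hdecomp]
          refine add_mem (Submodule.subset_span ⟨j', by rw [hv', Function.update_self]⟩) ?_
          exact Submodule.smul_mem _ _
            (Submodule.subset_span ⟨j, by rw [hv', Function.update_of_ne hjj']⟩)
        · exact Submodule.subset_span ⟨k, by rw [hv', Function.update_of_ne hk]⟩
    obtain ⟨J, hJcard, hJ⟩ := IH _ (lt_of_lt_of_le hmu' hμ) v' le_rfl
    exact ⟨J, hJcard, fun c hc hc0 => hJ c (by rw [hspan]; exact hc) hc0⟩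
  · -- reduced case
    push_neg at hbad
    refine ⟨Finset.image (fun j => (lead hr hp (v j)).1)
      (Finset.univ.filter fun j => v j ≠ 0), ?_, ?_⟩
    · calc (Finset.image (fun j => (lead hr hp (v j)).1)
            (Finset.univ.filter fun j => v j ≠ 0)).card
          ≤ (Finset.univ.filter fun j : Fin q => v j ≠ 0).card := Finset.card_image_le
        _ ≤ (Finset.univ : Finset (Fin q)).card := Finset.card_filter_le _ _
        _ = q := by simp
    · intro c hcm hc0
      obtain ⟨j, hvj, w, hw⟩ := span_nz hr hp v
        (fun j j' h1 h2 h3 h4 => hbad j j' h1 h2 h3 h4) hcm hc0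
      exact ⟨_, Finset.mem_image_of_mem _ (by simp [hvj]), w, hw⟩


theorem core (hr : 1 ≤ r) {q : ℕ} (hqp : q < p)
    (v : Fin q → (Fin p → MonoidAlgebra Φ (FreeMonoid (Fin r)))) :
    ¬ FiniteDimensional Φ ((Fin p → MonoidAlgebra Φ (FreeMonoid (Fin r))) ⧸
      Submodule.span (MonoidAlgebra Φ (FreeMonoid (Fin r))) (Set.range v)) := by
  intro hfd
  have hp : 0 < p := lt_of_le_of_lt (Nat.zero_le q) hqp
  obtain ⟨J, hJcard, hJ⟩ := exists_components hr hp _ v le_rfl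
  obtain ⟨istar, histar⟩ : ∃ i : Fin p, i ∉ J := by
    by_contra h
    push_neg at h
    have : J = Finset.univ := Finset.eq_univ_iff_forall.mpr h
    rw [this] at hJcard
    simp only [Finset.card_univ, Fintype.card_fin] at hJcard
    omega
  set N := Submodule.span (MonoidAlgebra Φ (FreeMonoid (Fin r))) (Set.range v) with hN
  set wrd : ℕ → FreeMonoid (Fin r) :=
    fun n => FreeMonoid.ofList (List.replicate n (⟨0, hr⟩ : Fin r)) with hwrd
  have hwrd_inj : Function.Injective wrd := by
    intro n m h
    simpa [hwrd] using congrArg List.length (congrArg FreeMonoid.toList h)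
  set e : ℕ → (Fin p → MonoidAlgebra Φ (FreeMonoid (Fin r))) := fun n =>
    Pi.single istar (MonoidAlgebra.single (wrd n) (1 : Φ)) with he
  set L : (ℕ →₀ Φ) →ₗ[Φ] (Fin p → MonoidAlgebra Φ (FreeMonoid (Fin r))) :=
    Finsupp.linearCombination Φ e with hLdef
  -- evaluation of L
  have hLapply : ∀ (x : ℕ →₀ Φ) (i : Fin p) (w : FreeMonoid (Fin r)),
      (L x i).coeff w = x.sum fun n xc => xc * ((e n i).coeff w) := by
    intro x i w
    rw [hLdef, Finsupp.linearCombination_apply, Finsupp.sum, Finsupp.sum]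
    rw [Finset.sum_apply, MonoidAlgebra.coeff_sum, Finsupp.finset_sum_apply]
    apply Finset.sum_congr rfl
    intro n _
    rfl
  have hLzero : ∀ (x : ℕ →₀ Φ) (i : Fin p), i ≠ istar → L x i = 0 := by
    intro x i hi
    ext w
    rw [hLapply, Finsupp.sum]
    apply Finset.sum_eq_zero
    intro n _
    rw [he]
    simp [Pi.single_eq_of_ne hi]
  have hLinj : ∀ x : ℕ →₀ Φ, L x ∈ N → x = 0 := by
    intro x hx
    by_contra hx0
    obtain ⟨n₀, hn₀⟩ := Finsupp.ne_iff.mp hx0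
    rw [Finsupp.coe_zero, Pi.zero_apply] at hn₀
    have hval : (L x istar).coeff (wrd n₀) = x n₀ := by
      rw [hLapply, Finsupp.sum]
      rw [Finset.sum_eq_single n₀]
      · rw [he]
        simp [MonoidAlgebra.coeff_single, Finsupp.single_apply]
      · intro n _ hne
        rw [he]
        have : wrd n ≠ wrd n₀ := fun h => hne (hwrd_inj h)
        simp [MonoidAlgebra.coeff_single, Finsupp.single_apply, this, Pi.single_eq_same]
      · intro h
        rw [Finsupp.notMem_support_iff.mp h, zero_mul]
    have hc0 : L x ≠ 0 := by
      intro h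
      rw [h] at hval
      exact hn₀ hval.symm
    obtain ⟨i, hiJ, w, hw⟩ := hJ (L x) hx hc0
    rcases eq_or_ne i istar with rfl | hne
    · exact histar hiJ
    · rw [hLzero x i hne] at hw
      exact hw rfl
  -- the Φ-linear quotient map
  let mkQΦ : (Fin p → MonoidAlgebra Φ (FreeMonoid (Fin r))) →ₗ[Φ]
      ((Fin p → MonoidAlgebra Φ (FreeMonoid (Fin r))) ⧸ N) :=
    { toFun := Submodule.Quotient.mk
      map_add' := fun x y => by exact Submodule.Quotient.mk_add (p := N)
      map_smul' := fun c x => by exact Submodule.Quotient.mk_smul N c x }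
  have hTinj : Function.Injective (mkQΦ.comp L) := by
    rw [← LinearMap.ker_eq_bot, LinearMap.ker_eq_bot']
    intro x hx
    apply hLinj
    have hx' : Submodule.Quotient.mk (p := N) (L x) = 0 := hx
    rwa [Submodule.Quotient.mk_eq_zero] at hx'
  have hFD : FiniteDimensional Φ (ℕ →₀ Φ) :=
    FiniteDimensional.of_injective (mkQΦ.comp L) hTinj
  letI hfin : Fintype ℕ :=
    FiniteDimensional.fintypeBasisIndex (Finsupp.basisSingleOne (R := Φ) (ι := ℕ))
  exact not_finite ℕ


/-- reversal algebra isomorphism from the opposite of a free-monoid algebra to itself. -/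
def revAlgEquiv (Φ : Type) [Field Φ] (r : ℕ) :
    (MonoidAlgebra Φ (FreeMonoid (Fin r)))ᵐᵒᵖ ≃ₐ[Φ] MonoidAlgebra Φ (FreeMonoid (Fin r)) := by
  classical
  let revE : FreeMonoid (Fin r) ≃ FreeMonoid (Fin r) :=
    ⟨FreeMonoid.reverse, FreeMonoid.reverse,
      fun w => FreeMonoid.reverse_reverse, fun w => FreeMonoid.reverse_reverse⟩
  let D : MonoidAlgebra Φ (FreeMonoid (Fin r)) ≃ₗ[Φ] MonoidAlgebra Φ (FreeMonoid (Fin r)) :=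
    MonoidAlgebra.mapDomainLinearEquiv Φ Φ revE
  have hDsingle : ∀ (g : FreeMonoid (Fin r)) (x : Φ),
      D (MonoidAlgebra.single g x) = MonoidAlgebra.single (FreeMonoid.reverse g) x := by
    intro g x
    exact MonoidAlgebra.mapDomainLinearEquiv_single revE x g
  have hmul : ∀ a b : MonoidAlgebra Φ (FreeMonoid (Fin r)), D (a * b) = D b * D a := by
    intro a b
    induction a using MonoidAlgebra.induction_linear with
    | zero => simp
    | add f g hf hg => rw [add_mul, map_add, hf, hg, map_add, mul_add]
    | single g x =>
      induction b using MonoidAlgebra.induction_linear with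
      | zero => simp
      | add f' g' hf hg => rw [mul_add, map_add, hf, hg, map_add, add_mul]
      | single h y =>
        rw [MonoidAlgebra.single_mul_single, hDsingle, hDsingle, hDsingle,
          MonoidAlgebra.single_mul_single, FreeMonoid.reverse_mul, mul_comm x y]
  let σlin : (MonoidAlgebra Φ (FreeMonoid (Fin r)))ᵐᵒᵖ ≃ₗ[Φ]
      MonoidAlgebra Φ (FreeMonoid (Fin r)) :=
    (MulOpposite.opLinearEquiv Φ).symm.trans D
  refine AlgEquiv.ofLinearEquiv σlin ?_ ?_
  · show D (MulOpposite.unop 1) = 1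
    rw [MulOpposite.unop_one]
    show D (MonoidAlgebra.single 1 1) = MonoidAlgebra.single 1 1
    rw [hDsingle]
    rfl
  · intro x y
    show D (MulOpposite.unop (x * y)) = D (MulOpposite.unop x) * D (MulOpposite.unop y)
    rw [MulOpposite.unop_mul]
    exact hmul _ _

theorem main_statement (Φ : Type) [Field Φ] (r p q : ℕ) (hr : 1 ≤ r) (hqp : q < p)
    (v : Fin q → (Fin p → (FreeAlgebra Φ (Fin r))ᵐᵒᵖ)) :
    ¬ FiniteDimensional Φ
        ((Fin p → (FreeAlgebra Φ (Fin r))ᵐᵒᵖ) ⧸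
          Submodule.span (FreeAlgebra Φ (Fin r))ᵐᵒᵖ (Set.range v)) := by
  intro hfd
  set ψ : (FreeAlgebra Φ (Fin r))ᵐᵒᵖ ≃ₐ[Φ] MonoidAlgebra Φ (FreeMonoid (Fin r)) :=
    (AlgEquiv.op (FreeAlgebra.equivMonoidAlgebraFreeMonoid)).trans (revAlgEquiv Φ r) with hψ
  set v' : Fin q → (Fin p → MonoidAlgebra Φ (FreeMonoid (Fin r))) :=
    fun j i => ψ (v j i) with hv'
  apply core (Φ := Φ) hr hqp v'
  set E : (Fin p → (FreeAlgebra Φ (Fin r))ᵐᵒᵖ) ≃ₗ[Φ]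
      (Fin p → MonoidAlgebra Φ (FreeMonoid (Fin r))) :=
    LinearEquiv.piCongrRight (fun _ => ψ.toLinearEquiv) with hE
  set N₁ := Submodule.span (FreeAlgebra Φ (Fin r))ᵐᵒᵖ (Set.range v) with hN₁
  set N₂ := Submodule.span (MonoidAlgebra Φ (FreeMonoid (Fin r))) (Set.range v') with hN₂
  have hEapply : ∀ (c : Fin p → (FreeAlgebra Φ (Fin r))ᵐᵒᵖ) (i : Fin p),
      E c i = ψ (c i) := fun c i => rfl
  have hmemiff : ∀ c, c ∈ N₁ ↔ E c ∈ N₂ := by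
    intro c
    constructor
    · intro hcm
      obtain ⟨a, ha⟩ := (Submodule.mem_span_range_iff_exists_fun _).mp hcm
      apply (Submodule.mem_span_range_iff_exists_fun _).mpr
      refine ⟨fun j => ψ (a j), ?_⟩
      rw [← ha]
      rw [map_sum]
      apply Finset.sum_congr rfl
      intro j _
      funext i
      show ψ (a j) * ψ (v j i) = ψ ((a j • v j) i)
      rw [Pi.smul_apply, smul_eq_mul, map_mul]
    · intro hcm
      obtain ⟨a, ha⟩ := (Submodule.mem_span_range_iff_exists_fun _).mp hcm
      apply (Submodule.mem_span_range_iff_exists_fun _).mpr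
      refine ⟨fun j => ψ.symm (a j), ?_⟩
      apply E.injective
      rw [← ha, map_sum]
      apply Finset.sum_congr rfl
      intro j _
      funext i
      show ψ ((ψ.symm (a j) • v j) i) = (a j • v' j) i
      rw [Pi.smul_apply, Pi.smul_apply, smul_eq_mul, smul_eq_mul, map_mul,
        AlgEquiv.apply_symm_apply]
  have hmap : (N₁.restrictScalars Φ).map (E : (Fin p → (FreeAlgebra Φ (Fin r))ᵐᵒᵖ) →ₗ[Φ] _)
      = N₂.restrictScalars Φ := by
    ext x
    rw [Submodule.mem_map]
    constructor
    · rintro ⟨y, hy, rfl⟩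
      rw [Submodule.restrictScalars_mem] at hy ⊢
      exact (hmemiff y).mp hy
    · intro hx
      rw [Submodule.restrictScalars_mem] at hx
      refine ⟨E.symm x, ?_, by simp⟩
      rw [Submodule.restrictScalars_mem, hmemiff (E.symm x), E.apply_symm_apply]
      exact hx
  have eqv : ((Fin p → (FreeAlgebra Φ (Fin r))ᵐᵒᵖ) ⧸ N₁) ≃ₗ[Φ]
      ((Fin p → MonoidAlgebra Φ (FreeMonoid (Fin r))) ⧸ N₂) :=
    ((Submodule.Quotient.restrictScalarsEquiv Φ N₁).symm.trans
      (Submodule.Quotient.equiv (N₁.restrictScalars Φ) (N₂.restrictScalars Φ) E hmap)).trans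
      (Submodule.Quotient.restrictScalarsEquiv Φ N₂)
  exact (LinearEquiv.finiteDimensional eqv)

end Main

end FewerRel


/-- A right module over the free associative algebra `R = Φ⟨x_1,…,x_r⟩` (right modules
formalized as left modules over `Rᵐᵒᵖ`) given by `p` generators and `q < p` relations is
infinite-dimensional over `Φ`. -/
theorem infinite_dimensional_of_fewer_relations
    (Φ : Type) [Field Φ] (r p q : ℕ) (hr : 1 ≤ r) (hqp : q < p)
    (v : Fin q → (Fin p → (FreeAlgebra Φ (Fin r))ᵐᵒᵖ)) :
    ¬ FiniteDimensional Φ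
        ((Fin p → (FreeAlgebra Φ (Fin r))ᵐᵒᵖ) ⧸
          Submodule.span (FreeAlgebra Φ (Fin r))ᵐᵒᵖ (Set.range v)) := by
  exact FewerRel.main_statement Φ r p q hr hqp v
end
end

section
/- Let Φ be a field, R = Φ⟨x_1,…,x_r⟩ the free associative algebra of rank r > 1 over Φ, and let 1 ≤ s ≤ r. Let M = F/N, where F is the free right R-module of rank s with basis u_1,…,u_s and N is the cyclic submodule generated by u_1x_1 + ⋯ + u_sx_s. Then every R-module homomorphism M → R is zero; in particular M admits no surjective homomorphism onto R (M is a bound module). -/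
noncomputable section

open MulOpposite

/-- The relator `u_1 x_1 + ⋯ + u_s x_s` in the free right module `F` of rank `s` over
`R = Φ⟨x_1,…,x_r⟩` (right modules formalized as left modules over `Rᵐᵒᵖ`),
`u_1,…,u_s` being the standard basis of `F` and `s ≤ r`. -/
def relator (Φ : Type) [Field Φ] (r s : ℕ) (hsr : s ≤ r) :
    Fin s → (FreeAlgebra Φ (Fin r))ᵐᵒᵖ :=
  fun j => op (FreeAlgebra.ι Φ (Fin.castLE hsr j))

/-- In the free algebra, the generators are left-linearly independent: if
`∑ j, b j * x_j = 0` with the `x_j` distinct generators, then all `b j = 0`. -/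
lemma free_algebra_gen_left_indep (Φ : Type) [Field Φ] (r s : ℕ) (hsr : s ≤ r)
    (b : Fin s → FreeAlgebra Φ (Fin r))
    (h : ∑ j, b j * FreeAlgebra.ι Φ (Fin.castLE hsr j) = 0) : ∀ j, b j = 0 := by
  classical
  intro j
  set e := FreeAlgebra.equivMonoidAlgebraFreeMonoid (R := Φ) (X := Fin r) with he
  have hι : ∀ i : Fin r, e (FreeAlgebra.ι Φ i) =
      MonoidAlgebra.single (FreeMonoid.of i) (1 : Φ) := by
    intro i
    simp [he, FreeAlgebra.equivMonoidAlgebraFreeMonoid, MonoidAlgebra.of_apply]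
  have h' : ∑ i, e (b i) * MonoidAlgebra.single (FreeMonoid.of (Fin.castLE hsr i)) (1 : Φ)
      = 0 := by
    have := congrArg e h
    simpa [map_sum, hι] using this
  have hbj : e (b j) = 0 := by
    ext w
    have hw := Finsupp.ext_iff.mp (congrArg MonoidAlgebra.coeff h') (w * FreeMonoid.of (Fin.castLE hsr j))
    rw [MonoidAlgebra.coeff_sum, Finsupp.finset_sum_apply] at hw
    have hterm : ∀ i : Fin s,
        (e (b i) * MonoidAlgebra.single (FreeMonoid.of (Fin.castLE hsr i)) (1 : Φ)).coeff
          (w * FreeMonoid.of (Fin.castLE hsr j))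
        = if i = j then (e (b j)).coeff w else 0 := by
      intro i
      by_cases hij : i = j
      · subst hij
        simp only [if_pos rfl]
        have := MonoidAlgebra.coeff_mul_single_eq_coeff_mul (x := e (b i)) (r := (1 : Φ))
          (m := FreeMonoid.of (Fin.castLE hsr i)) (m₂ := w)
          (m₁ := w * FreeMonoid.of (Fin.castLE hsr i))
          (fun a _ => ⟨fun ha => mul_right_cancel ha, fun ha => by rw [ha]⟩)
        simpa using this
      · rw [if_neg hij]
        refine MonoidAlgebra.mul_single_apply_of_not_exists_mul _ _ ?_
        rintro ⟨d, hd⟩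
        have : (w * FreeMonoid.of (Fin.castLE hsr j)).toList
            = (d * FreeMonoid.of (Fin.castLE hsr i)).toList := congrArg _ hd
        rw [FreeMonoid.toList_mul, FreeMonoid.toList_mul, FreeMonoid.toList_of,
          FreeMonoid.toList_of] at this
        have hlast := congrArg List.getLast? this
        rw [List.getLast?_concat, List.getLast?_concat] at hlast
        have : Fin.castLE hsr j = Fin.castLE hsr i := by
          exact Option.some_injective _ hlast
        exact hij ((Fin.castLE_injective hsr) this.symm)
    rw [Finset.sum_congr rfl (fun i _ => hterm i)] at hw
    rw [Finset.sum_ite_eq' Finset.univ j (fun _ => (e (b j)).coeff w)] at hw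
    simpa using hw
  have := congrArg e.symm hbj
  simpa using this

/-- The module `M = ⟨u_1,…,u_s | u_1x_1 + ⋯ + u_sx_s = 0⟩` over the free associative
algebra `R = Φ⟨x_1,…,x_r⟩` with `1 < r` and `1 ≤ s ≤ r` (right modules formalized as
left modules over `Rᵐᵒᵖ`) is bound: every `R`-module homomorphism `M → R` is zero;
in particular `M` admits no surjective homomorphism onto `R`. -/
theorem bound_module_example_is_bound
    (Φ : Type) [Field Φ] (r s : ℕ) (hr : 1 < r) (hs : 1 ≤ s) (hsr : s ≤ r) :
    ∀ φ : ((Fin s → (FreeAlgebra Φ (Fin r))ᵐᵒᵖ) ⧸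
        Submodule.span (FreeAlgebra Φ (Fin r))ᵐᵒᵖ {relator Φ r s hsr})
        →ₗ[(FreeAlgebra Φ (Fin r))ᵐᵒᵖ] (FreeAlgebra Φ (Fin r))ᵐᵒᵖ,
      φ = 0 := by
  classical
  set p := Submodule.span (FreeAlgebra Φ (Fin r))ᵐᵒᵖ {relator Φ r s hsr} with hp
  intro φ
  apply Submodule.linearMap_qext
  have hsingle : ∀ (c : (FreeAlgebra Φ (Fin r))ᵐᵒᵖ) (j : Fin s),
      Pi.single j c = c • ((Pi.single j 1 : Fin s → (FreeAlgebra Φ (Fin r))ᵐᵒᵖ)) := by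
    intro c j
    funext i
    by_cases hij : i = j
    · subst hij; simp
    · simp [Pi.single_apply, hij]
  have hrel0 : φ (p.mkQ (relator Φ r s hsr)) = 0 := by
    have hmem : relator Φ r s hsr ∈ p := Submodule.mem_span_singleton_self _
    have h0 : p.mkQ (relator Φ r s hsr) = 0 := (Submodule.Quotient.mk_eq_zero p).2 hmem
    rw [h0, map_zero]
  have hdecomp : (relator Φ r s hsr)
      = ∑ j, (relator Φ r s hsr j) • ((Pi.single j 1 : Fin s → (FreeAlgebra Φ (Fin r))ᵐᵒᵖ)) := by
    rw [show (∑ j, (relator Φ r s hsr j) • ((Pi.single j 1 : Fin s → (FreeAlgebra Φ (Fin r))ᵐᵒᵖ)))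
        = ∑ j, Pi.single j (relator Φ r s hsr j) from
      Finset.sum_congr rfl (fun j _ => (hsingle _ j).symm)]
    exact (Finset.univ_sum_single _).symm
  have hsum : ∑ j, (relator Φ r s hsr j)
      • φ (p.mkQ ((Pi.single j 1 : Fin s → (FreeAlgebra Φ (Fin r))ᵐᵒᵖ))) = 0 := by
    simp only [← map_smul, ← map_sum, ← hdecomp]
    exact hrel0
  have hsum' : ∑ j, (unop (φ (p.mkQ ((Pi.single j 1 : Fin s → (FreeAlgebra Φ (Fin r))ᵐᵒᵖ)))))
      * FreeAlgebra.ι Φ (Fin.castLE hsr j) = 0 := by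
    have := congrArg unop hsum
    rw [Finset.unop_sum] at this
    simpa [relator, smul_eq_mul] using this
  have haz : ∀ j : Fin s,
      φ (p.mkQ ((Pi.single j 1 : Fin s → (FreeAlgebra Φ (Fin r))ᵐᵒᵖ))) = 0 := by
    intro j
    have := free_algebra_gen_left_indep Φ r s hsr
      (fun j => unop (φ (p.mkQ ((Pi.single j 1 : Fin s → (FreeAlgebra Φ (Fin r))ᵐᵒᵖ))))) hsum' j
    exact unop_injective (by simpa using this)
  ext f
  simpa [LinearMap.comp_apply, LinearMap.coe_single, ← hp] using haz f
end
end
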